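/- arXiv:2002.08691 — 9 statements merged into one kernel-verified Lean document; each statement's English description precedes it below -/
import Mathlib

section
/- Let B be an associative unital ring with no zero divisors (a domain), S ⊆ B \ {0} a multiplicatively closed subset, and A a domain containing B as a subring such that every element of S is invertible in A and every element of A can be written both in the form s⁻¹b and in the form b′(s′)⁻¹ with s, s′ ∈ S and b, b′ ∈ B. Let L₀ ∈ B be locally ad-nilpotent in B, i.e. for every b ∈ B there is n ≥ 0 with ad_{L₀}ⁿ(b) = 0. Then for any L ∈ A the following three conditions are equivalent: (a) there exists a nonzero D ∈ A with L·D = D·L₀; (b) there exists a nonzero D* ∈ A with D*·L = L₀·D*; (c) there exist δ ∈ S and N ≥ 0 with ad_{L,L₀}^{N+1}(δ) = 0. -/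
/-- `adOp a b x = a*x - x*b`, the operator `ad_{a,b}`. -/
def adOp {A : Type*} [Ring A] (a b : A) : A → A := fun x => a * x - x * b

/-- Twisted Leibniz iterate, right factor intertwined: if `c * y = y * b` then
`ad_{a,b}^n(x*y) = ad_{a,c}^n(x) * y`. -/
lemma adOp_iter_right {A : Type*} [Ring A] (a b c x y : A) (h : c * y = y * b) :
    ∀ n : ℕ, (adOp a b)^[n] (x * y) = (adOp a c)^[n] x * y := by
  intro n
  induction n with
  | zero => simp
  | succ n ih =>
    rw [Function.iterate_succ_apply', Function.iterate_succ_apply', ih]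
    set X := (adOp a c)^[n] x
    show a * (X * y) - X * y * b = (a * X - X * c) * y
    rw [mul_assoc X y b, ← h]
    noncomm_ring

/-- Twisted Leibniz iterate, left factor intertwined: if `a * x = x * c` then
`ad_{a,b}^n(x*y) = x * ad_{c,b}^n(y)`. -/
lemma adOp_iter_left {A : Type*} [Ring A] (a b c x y : A) (h : a * x = x * c) :
    ∀ n : ℕ, (adOp a b)^[n] (x * y) = x * (adOp c b)^[n] y := by
  intro n
  induction n with
  | zero => simp
  | succ n ih =>
    rw [Function.iterate_succ_apply', Function.iterate_succ_apply', ih]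
    set Y := (adOp c b)^[n] y
    show a * (x * Y) - x * Y * b = x * (c * Y - Y * b)
    rw [← mul_assoc a x Y, h]
    noncomm_ring

/-- If `x ≠ 0` and some iterate of `f` kills `x`, there is a last nonzero iterate. -/
lemma exists_last_nonzero {A : Type*} [Zero A] {f : A → A} :
    ∀ n : ℕ, ∀ x : A, x ≠ 0 → f^[n] x = 0 →
      ∃ m : ℕ, f^[m] x ≠ 0 ∧ f (f^[m] x) = 0 := by
  intro n
  induction n with
  | zero => intro x hx h0; exact absurd h0 hx
  | succ n ih =>
    intro x hx h0
    by_cases hn : f^[n] x = 0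
    · exact ih x hx hn
    · exact ⟨n, hn, by rwa [← Function.iterate_succ_apply' f n x]⟩

/-- Lemma 4.1 (shiftl): for a locally ad-nilpotent `L₀ ∈ B` and `L` in the Ore localization
`A = B[S⁻¹]`, existence of a right shift operator, of a left shift operator, and
ad-nilpotency of some `δ ∈ S` under `ad_{L,L₀}` are all equivalent. -/
theorem stmt0 {A : Type*} [Ring A] [IsDomain A]
    (B : Subring A)
    (S : Set A) (hSB : S ⊆ (B : Set A)) (hS0 : (0 : A) ∉ S)
    (hSmul : ∀ s ∈ S, ∀ t ∈ S, s * t ∈ S)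
    (hSunit : ∀ s ∈ S, IsUnit s)
    (hleft : ∀ a : A, ∃ s ∈ S, s * a ∈ B)
    (hright : ∀ a : A, ∃ s ∈ S, a * s ∈ B)
    (L₀ : A) (hL₀ : L₀ ∈ B)
    (hnil : ∀ b ∈ B, ∃ n : ℕ, (adOp L₀ L₀)^[n] b = 0)
    (L : A) :
    ((∃ D : A, D ≠ 0 ∧ L * D = D * L₀) ↔
      (∃ δ ∈ S, ∃ N : ℕ, (adOp L L₀)^[N + 1] δ = 0)) ∧
    ((∃ Dstar : A, Dstar ≠ 0 ∧ Dstar * L = L₀ * Dstar) ↔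
      (∃ δ ∈ S, ∃ N : ℕ, (adOp L L₀)^[N + 1] δ = 0)) := by
  -- (c) ⇒ (a)
  have hca : (∃ δ ∈ S, ∃ N : ℕ, (adOp L L₀)^[N + 1] δ = 0) →
      (∃ D : A, D ≠ 0 ∧ L * D = D * L₀) := by
    rintro ⟨δ, hδS, N, hN⟩
    have hδ0 : δ ≠ 0 := fun h => hS0 (h ▸ hδS)
    obtain ⟨m, hm0, hm1⟩ := exists_last_nonzero (N + 1) δ hδ0 hN
    refine ⟨(adOp L L₀)^[m] δ, hm0, ?_⟩
    have h1 : L * (adOp L L₀)^[m] δ - (adOp L L₀)^[m] δ * L₀ = 0 := hm1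
    exact sub_eq_zero.mp h1
  -- (a) ⇒ (b)
  have hab : (∃ D : A, D ≠ 0 ∧ L * D = D * L₀) →
      (∃ Dstar : A, Dstar ≠ 0 ∧ Dstar * L = L₀ * Dstar) := by
    rintro ⟨D, hD0, hD⟩
    obtain ⟨δ, hδS, hδD⟩ := hleft D
    have hδ0 : δ ≠ 0 := fun h => hS0 (h ▸ hδS)
    obtain ⟨n, hn⟩ := hnil (δ * D) hδD
    have key : ∀ k : ℕ, (adOp L₀ L₀)^[k] (δ * D) = (adOp L₀ L)^[k] δ * D :=
      adOp_iter_right L₀ L₀ L δ D hD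
    have hz : (adOp L₀ L)^[n] δ * D = 0 := by rw [← key]; exact hn
    have hδn : (adOp L₀ L)^[n] δ = 0 :=
      (mul_eq_zero.mp hz).resolve_right hD0
    obtain ⟨m, hm0, hm1⟩ := exists_last_nonzero n δ hδ0 hδn
    refine ⟨(adOp L₀ L)^[m] δ, hm0, ?_⟩
    have h1 : L₀ * (adOp L₀ L)^[m] δ - (adOp L₀ L)^[m] δ * L = 0 := hm1
    have := sub_eq_zero.mp h1
    exact this.symm
  -- (b) ⇒ (c)
  have hbc : (∃ Dstar : A, Dstar ≠ 0 ∧ Dstar * L = L₀ * Dstar) →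
      (∃ δ ∈ S, ∃ N : ℕ, (adOp L L₀)^[N + 1] δ = 0) := by
    rintro ⟨Dstar, hD0, hD⟩
    obtain ⟨δ, hδS, hδD⟩ := hright Dstar
    obtain ⟨n, hn⟩ := hnil (Dstar * δ) hδD
    have key : ∀ k : ℕ, (adOp L₀ L₀)^[k] (Dstar * δ) = Dstar * (adOp L L₀)^[k] δ :=
      adOp_iter_left L₀ L₀ L Dstar δ hD.symm
    have hz : Dstar * (adOp L L₀)^[n] δ = 0 := by rw [← key]; exact hn
    have hδn : (adOp L L₀)^[n] δ = 0 :=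
      (mul_eq_zero.mp hz).resolve_left hD0
    refine ⟨δ, hδS, n, ?_⟩
    rw [Function.iterate_succ_apply', hδn]
    simp [adOp]
  exact ⟨⟨fun h => hbc (hab h), hca⟩, ⟨hbc, fun h => hab (hca h)⟩⟩
end

section
/- Let k be a field of characteristic zero, B an associative unital k-algebra that is a domain, S ⊆ B \ {0} a multiplicatively closed subset whose elements pairwise commute, and A a k-algebra domain containing B as a subalgebra such that every element of S is invertible in A and every element of A can be written both as s⁻¹b and as b′(s′)⁻¹ with s, s′ ∈ S and b, b′ ∈ B. Let L₀ ∈ B be locally ad-nilpotent in B, and for nonzero b ∈ B set deg_{L₀}(b) := min{n ≥ 0 : ad_{L₀}^{n+1}(b) = 0}. Then there is a unique function deg : A \ {0} → ℤ such that (0) deg(b) = deg_{L₀}(b) for all nonzero b ∈ B, and (1) deg(a₁a₂) = deg(a₁) + deg(a₂) for all nonzero a₁, a₂ ∈ A. Moreover, this function satisfies (2) deg(a₁ + a₂) ≤ max(deg(a₁), deg(a₂)) whenever a₁, a₂ and a₁ + a₂ are nonzero, and (3) deg(ad_{L₀}(a)) ≤ deg(a) − 1 whenever a and ad_{L₀}(a)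 are nonzero. -/
/-- The ad-nilpotency degree of `b` with respect to `L₀`:
the smallest `n` with `ad_{L₀}^[n+1] b = 0`. -/
noncomputable def degAd {A : Type*} [Ring A] (L₀ b : A) : ℕ :=
  sInf {n : ℕ | (adOp L₀ L₀)^[n + 1] b = 0}

namespace FiltAux

variable {A : Type*} [Ring A] (L₀ : A)

local notation "D" => adOp L₀ L₀

lemma adOp_add (x y : A) : adOp L₀ L₀ (x + y) = adOp L₀ L₀ x + adOp L₀ L₀ y := by
  simp only [adOp]; noncomm_ring

lemma adOp_zero : adOp L₀ L₀ (0 : A) = 0 := by simp [adOp]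

lemma adOp_mul (x y : A) : adOp L₀ L₀ (x * y) = adOp L₀ L₀ x * y + x * adOp L₀ L₀ y := by
  simp only [adOp]; noncomm_ring

lemma adOp_nsmul (n : ℕ) (x : A) : adOp L₀ L₀ (n • x) = n • adOp L₀ L₀ x := by
  simp only [adOp, mul_smul_comm, smul_mul_assoc, smul_sub]

lemma adOp_sum {ι : Type*} (s : Finset ι) (f : ι → A) :
    adOp L₀ L₀ (∑ i ∈ s, f i) = ∑ i ∈ s, adOp L₀ L₀ (f i) :=
  map_sum (AddMonoidHom.mk' (adOp L₀ L₀) (adOp_add L₀)) f s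

open Finset in
lemma iter_mul (x y : A) (n : ℕ) :
    (adOp L₀ L₀)^[n] (x * y) =
      ∑ k ∈ range n.succ, n.choose k •
        ((adOp L₀ L₀)^[n - k] x * (adOp L₀ L₀)^[k] y) := by
  induction n with
  | zero => simp
  | succ n IH =>
    calc
      D^[n + 1] (x * y) =
          D (∑ k ∈ range n.succ, n.choose k • (D^[n - k] x * D^[k] y)) := by
        rw [Function.iterate_succ_apply', IH]
      _ = (∑ k ∈ range n.succ,
            n.choose k • (D^[n - k + 1] x * D^[k] y)) +
          ∑ k ∈ range n.succ,
            n.choose k • (D^[n - k] x * D^[k + 1] y) := by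
        rw [adOp_sum]
        simp_rw [adOp_nsmul, adOp_mul, Function.iterate_succ_apply',
          smul_add, sum_add_distrib]
      _ = (∑ k ∈ range n.succ,
                n.choose k.succ • (D^[n - k] x * D^[k + 1] y)) +
              1 • (D^[n + 1] x * D^[0] y) +
            ∑ k ∈ range n.succ, n.choose k • (D^[n - k] x * D^[k + 1] y) :=
        ?_
      _ = ((∑ k ∈ range n.succ, n.choose k • (D^[n - k] x * D^[k + 1] y)) +
              ∑ k ∈ range n.succ,
                n.choose k.succ • (D^[n - k] x * D^[k + 1] y)) +
            1 • (D^[n + 1] x * D^[0] y) := by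
        rw [add_comm, add_assoc]
      _ = (∑ i ∈ range n.succ,
              (n + 1).choose (i + 1) • (D^[n + 1 - (i + 1)] x * D^[i + 1] y)) +
            1 • (D^[n + 1] x * D^[0] y) := by
        simp_rw [Nat.choose_succ_succ, Nat.succ_sub_succ, add_smul, sum_add_distrib]
      _ = ∑ k ∈ range n.succ.succ,
            n.succ.choose k • (D^[n.succ - k] x * D^[k] y) := by
        rw [sum_range_succ' _ n.succ, Nat.choose_zero_right, tsub_zero]
    congr
    refine (sum_range_succ' _ _).trans (congr_arg₂ (· + ·) ?_ ?_)
    · rw [sum_range_succ, Nat.choose_succ_self, zero_smul, add_zero]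
      refine sum_congr rfl fun k hk => ?_
      rw [mem_range] at hk
      congr
      omega
    · rw [Nat.choose_zero_right, tsub_zero]


lemma iter_zero (n : ℕ) : D^[n] (0 : A) = 0 :=
  Function.iterate_fixed (adOp_zero L₀) n

variable {L₀}

lemma iter_mono {b : A} {m m' : ℕ} (h : D^[m] b = 0) (hm : m ≤ m') : D^[m'] b = 0 := by
  obtain ⟨c, rfl⟩ := Nat.exists_eq_add_of_le hm
  rw [add_comm, Function.iterate_add_apply, h, iter_zero]

lemma degAd_spec {b : A} (hnil : ∃ n, D^[n] b = 0) : D^[degAd L₀ b + 1] b = 0 := by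
  obtain ⟨n, hn⟩ := hnil
  exact Nat.sInf_mem (⟨n, iter_mono hn (Nat.le_succ n)⟩ : {m : ℕ | D^[m + 1] b = 0}.Nonempty)

lemma degAd_le {b : A} {n : ℕ} (h : D^[n + 1] b = 0) : degAd L₀ b ≤ n := Nat.sInf_le h

lemma le_degAd {b : A} {n : ℕ} (hnil : ∃ m, D^[m] b = 0) (h : D^[n] b ≠ 0) :
    n ≤ degAd L₀ b := by
  by_contra hc
  exact h (iter_mono (degAd_spec hnil) (by omega))

lemma iter_degAd_ne {b : A} (hb : b ≠ 0) : D^[degAd L₀ b] b ≠ 0 := by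
  rcases Nat.eq_zero_or_pos (degAd L₀ b) with h | h
  · rw [h]; simpa using hb
  · intro hz
    have : degAd L₀ b ≤ degAd L₀ b - 1 :=
      degAd_le (by rw [show degAd L₀ b - 1 + 1 = degAd L₀ b by omega]; exact hz)
    omega

open Finset in
lemma degAd_mul [NoZeroDivisors A] [CharZero A] {x y : A} (hx : x ≠ 0) (hy : y ≠ 0)
    (nx : ∃ n, D^[n] x = 0) (ny : ∃ n, D^[n] y = 0) :
    degAd L₀ (x * y) = degAd L₀ x + degAd L₀ y := by
  set dx := degAd L₀ x
  set dy := degAd L₀ y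
  have hxv : D^[dx] x ≠ 0 := iter_degAd_ne hx
  have hyv : D^[dy] y ≠ 0 := iter_degAd_ne hy
  have hxz : ∀ m, dx < m → D^[m] x = 0 := fun m hm => iter_mono (degAd_spec nx) (by omega)
  have hyz : ∀ m, dy < m → D^[m] y = 0 := fun m hm => iter_mono (degAd_spec ny) (by omega)
  have htop : D^[dx + dy + 1] (x * y) = 0 := by
    rw [iter_mul]
    refine Finset.sum_eq_zero fun k hk => ?_
    rcases le_or_gt k dy with h | h
    · rw [hxz (dx + dy + 1 - k) (by omega), zero_mul, smul_zero]
    · rw [hyz k h, mul_zero, smul_zero]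
  have hval : D^[dx + dy] (x * y) ≠ 0 := by
    rw [iter_mul]
    rw [Finset.sum_eq_single_of_mem dy (by simp [Nat.succ_eq_add_one])]
    · have h1 : D^[dx + dy - dy] x * D^[dy] y ≠ 0 := by
        rw [show dx + dy - dy = dx by omega]
        exact mul_ne_zero hxv hyv
      have h2 : ((dx + dy).choose dy : A) ≠ 0 :=
        Nat.cast_ne_zero.mpr (Nat.choose_pos (by omega)).ne'
      rw [nsmul_eq_mul]
      exact mul_ne_zero h2 h1
    · intro k hk hne
      rcases lt_or_gt_of_ne hne with h | h
      · rw [hxz (dx + dy - k) (by omega), zero_mul, smul_zero]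
      · rw [hyz k (by omega), mul_zero, smul_zero]
  exact le_antisymm (degAd_le htop) (le_degAd ⟨dx + dy + 1, htop⟩ hval)

lemma degAd_add {x y : A} (nx : ∃ n, D^[n] x = 0) (ny : ∃ n, D^[n] y = 0) :
    degAd L₀ (x + y) ≤ max (degAd L₀ x) (degAd L₀ y) := by
  apply degAd_le
  have hadd : ∀ n : ℕ, ∀ a b : A, D^[n] (a + b) = D^[n] a + D^[n] b := by
    intro n
    induction n with
    | zero => intro a b; simp
    | succ n IH =>
      intro a b
      simp only [Function.iterate_succ_apply]
      rw [show D (a + b) = D a + D b by simp only [adOp]; noncomm_ring, IH]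
  rw [hadd, iter_mono (degAd_spec nx) (by omega), iter_mono (degAd_spec ny) (by omega),
    add_zero]

lemma degAd_adOp {b : A} (hb : b ≠ 0) (hDb : D b ≠ 0) (nb : ∃ n, D^[n] b = 0) :
    degAd L₀ (D b) + 1 = degAd L₀ b := by
  have hiter : ∀ n : ℕ, D^[n] (D b) = D^[n + 1] b := fun n =>
    (Function.iterate_succ_apply D n b).symm
  have hd1 : 1 ≤ degAd L₀ b := le_degAd nb (by simpa using hDb)
  have hle : degAd L₀ (D b) ≤ degAd L₀ b - 1 := by
    apply degAd_le
    rw [hiter, show degAd L₀ b - 1 + 1 + 1 = degAd L₀ b + 1 by omega]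
    exact degAd_spec nb
  have hge : degAd L₀ b - 1 ≤ degAd L₀ (D b) := by
    apply le_degAd ⟨degAd L₀ b, by rw [hiter]; exact degAd_spec nb⟩
    rw [hiter, show degAd L₀ b - 1 + 1 = degAd L₀ b by omega]
    exact iter_degAd_ne hb
  omega

lemma degAd_neg_one : degAd L₀ (-1 : A) = 0 := by
  have : D^[0 + 1] (-1 : A) = 0 := by simp [adOp]
  exact Nat.le_zero.mp (degAd_le this)

end FiltAux

/-- Lemma 4.2 (filtl): the ad-nilpotent degree function extends uniquely from `B` to the
localization `A = B[S⁻¹]` as an additive-multiplicative degree function, which moreover is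
subadditive on sums and drops under `ad_{L₀}`. -/
theorem stmt2 {k A : Type*} [Field k] [CharZero k] [Ring A] [IsDomain A] [Algebra k A]
    (B : Subalgebra k A)
    (S : Set A) (hSB : S ⊆ (B : Set A)) (hS0 : (0 : A) ∉ S)
    (hScomm : ∀ s ∈ S, ∀ t ∈ S, s * t = t * s)
    (hSmul : ∀ s ∈ S, ∀ t ∈ S, s * t ∈ S)
    (hSunit : ∀ s ∈ S, IsUnit s)
    (hleft : ∀ a : A, ∃ s ∈ S, s * a ∈ B)
    (hright : ∀ a : A, ∃ s ∈ S, a * s ∈ B)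
    (L₀ : A) (hL₀ : L₀ ∈ B)
    (hnil : ∀ b ∈ B, ∃ n : ℕ, (adOp L₀ L₀)^[n] b = 0) :
    ∃ deg : A → ℤ,
      (∀ b ∈ B, b ≠ 0 → deg b = degAd L₀ b) ∧
      (∀ a₁ a₂ : A, a₁ ≠ 0 → a₂ ≠ 0 → deg (a₁ * a₂) = deg a₁ + deg a₂) ∧
      (∀ deg' : A → ℤ,
        (∀ b ∈ B, b ≠ 0 → deg' b = degAd L₀ b) →
        (∀ a₁ a₂ : A, a₁ ≠ 0 → a₂ ≠ 0 → deg' (a₁ * a₂) = deg' a₁ + deg' a₂) →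
        ∀ a : A, a ≠ 0 → deg' a = deg a) ∧
      (∀ a₁ a₂ : A, a₁ ≠ 0 → a₂ ≠ 0 → a₁ + a₂ ≠ 0 →
        deg (a₁ + a₂) ≤ max (deg a₁) (deg a₂)) ∧
      (∀ a : A, a ≠ 0 → adOp L₀ L₀ a ≠ 0 → deg (adOp L₀ L₀ a) ≤ deg a - 1) := by
  classical
  haveI : CharZero A := charZero_of_injective_algebraMap (algebraMap k A).injective
  have hSne : ∀ s ∈ S, s ≠ (0 : A) := fun s hs h => hS0 (h ▸ hs)
  choose σ hσS hσB using hleft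
  set deg : A → ℤ := fun a => (degAd L₀ (σ a * a) : ℤ) - (degAd L₀ (σ a) : ℤ) with hdeg
  have dmulZ : ∀ x ∈ B, ∀ y ∈ B, x ≠ 0 → y ≠ 0 →
      (degAd L₀ (x * y) : ℤ) = degAd L₀ x + degAd L₀ y := by
    intro x hx y hy hx0 hy0
    rw [FiltAux.degAd_mul hx0 hy0 (hnil x hx) (hnil y hy)]
    push_cast; ring
  have key : ∀ a : A, a ≠ 0 → ∀ s, s ∈ S → s * a ∈ B →
      deg a = (degAd L₀ (s * a) : ℤ) - degAd L₀ s := by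
    intro a ha s hs hsa
    have ht : σ a ∈ S := hσS a
    have h1 : σ a * (s * a) = s * (σ a * a) := by
      rw [← mul_assoc, ← mul_assoc, hScomm _ ht _ hs]
    have e1 : (degAd L₀ (σ a * (s * a)) : ℤ) = degAd L₀ (σ a) + degAd L₀ (s * a) :=
      dmulZ _ (hSB ht) _ hsa (hSne _ ht) (mul_ne_zero (hSne _ hs) ha)
    have e2 : (degAd L₀ (s * (σ a * a)) : ℤ) = degAd L₀ s + degAd L₀ (σ a * a) :=
      dmulZ _ (hSB hs) _ (hσB a) (hSne _ hs) (mul_ne_zero (hSne _ ht) ha)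
    rw [h1] at e1
    simp only [hdeg]
    omega
  have hdegB : ∀ b, b ∈ B → b ≠ 0 → deg b = (degAd L₀ b : ℤ) := by
    intro b hb hb0
    rw [key b hb0 (σ b) (hσS b) (hσB b),
      dmulZ _ (hSB (hσS b)) _ hb (hSne _ (hσS b)) hb0]
    ring
  have hmul : ∀ a₁ a₂ : A, a₁ ≠ 0 → a₂ ≠ 0 → deg (a₁ * a₂) = deg a₁ + deg a₂ := by
    intro a₁ a₂ h1 h2
    obtain ⟨s, hsS, hb₁⟩ : ∃ s ∈ S, s * a₁ ∈ B := ⟨σ a₁, hσS a₁, hσB a₁⟩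
    obtain ⟨t, htS, hb₂⟩ : ∃ t ∈ S, t * a₂ ∈ B := ⟨σ a₂, hσS a₂, hσB a₂⟩
    set b₁ := s * a₁ with hb₁def
    set b₂ := t * a₂ with hb₂def
    set u := (hSunit t htS).unit with hudef
    have hu : (u : A) = t := (hSunit t htS).unit_spec
    obtain ⟨v, hvS, hvB⟩ : ∃ v ∈ S, v * (b₁ * (↑u⁻¹ : A)) ∈ B :=
      ⟨σ (b₁ * ↑u⁻¹), hσS (b₁ * ↑u⁻¹), hσB (b₁ * ↑u⁻¹)⟩
    set c := v * (b₁ * (↑u⁻¹ : A)) with hcdef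
    have h3 : ((↑u⁻¹ : A)) * t = 1 := by rw [← hu]; exact u.inv_mul
    have hct : c * t = v * b₁ := by
      calc c * t = v * (b₁ * (((↑u⁻¹ : A)) * t)) := by rw [hcdef]; noncomm_ring
        _ = v * b₁ := by rw [h3, mul_one]
    have hb₁0 : b₁ ≠ 0 := mul_ne_zero (hSne _ hsS) h1
    have hb₂0 : b₂ ≠ 0 := mul_ne_zero (hSne _ htS) h2
    have hc0 : c ≠ 0 := by
      intro h
      rw [h, zero_mul] at hct
      exact (mul_ne_zero (hSne _ hvS) hb₁0) hct.symm
    have hprod : (v * s) * (a₁ * a₂) = c * b₂ := by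
      calc (v * s) * (a₁ * a₂) = v * (b₁ * (((↑u⁻¹ : A)) * t) * a₂) := by
            rw [h3, mul_one, hb₁def]; noncomm_ring
        _ = c * b₂ := by rw [hcdef, hb₂def]; noncomm_ring
    have hvsS : v * s ∈ S := hSmul v hvS s hsS
    have hvsB : (v * s) * (a₁ * a₂) ∈ B := by rw [hprod]; exact mul_mem hvB hb₂
    have h12 : a₁ * a₂ ≠ 0 := mul_ne_zero h1 h2
    have e0 := key _ h12 _ hvsS hvsB
    rw [hprod] at e0
    have e_cb : (degAd L₀ (c * b₂) : ℤ) = degAd L₀ c + degAd L₀ b₂ :=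
      dmulZ _ hvB _ hb₂ hc0 hb₂0
    have e_vs : (degAd L₀ (v * s) : ℤ) = degAd L₀ v + degAd L₀ s :=
      dmulZ _ (hSB hvS) _ (hSB hsS) (hSne _ hvS) (hSne _ hsS)
    have e_ct : (degAd L₀ (c * t) : ℤ) = degAd L₀ c + degAd L₀ t :=
      dmulZ _ hvB _ (hSB htS) hc0 (hSne _ htS)
    have e_vb : (degAd L₀ (v * b₁) : ℤ) = degAd L₀ v + degAd L₀ b₁ :=
      dmulZ _ (hSB hvS) _ hb₁ (hSne _ hvS) hb₁0
    rw [hct] at e_ct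
    rw [key a₁ h1 s hsS hb₁, key a₂ h2 t htS hb₂, e0, ← hb₁def, ← hb₂def]
    omega
  have hadd : ∀ a₁ a₂ : A, a₁ ≠ 0 → a₂ ≠ 0 → a₁ + a₂ ≠ 0 →
      deg (a₁ + a₂) ≤ max (deg a₁) (deg a₂) := by
    intro a₁ a₂ h1 h2 h12
    set s₁ := σ a₁ with hs₁
    set w := σ (s₁ * a₂) with hw
    set s := w * s₁ with hs
    have hsS : s ∈ S := hSmul _ (hσS _) _ (hσS a₁)
    have hsa₁ : s * a₁ ∈ B := by rw [hs, mul_assoc]; exact mul_mem (hSB (hσS _)) (hσB a₁)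
    have hsa₂ : s * a₂ ∈ B := by rw [hs, mul_assoc]; exact hσB (s₁ * a₂)
    have hsum : s * (a₁ + a₂) = s * a₁ + s * a₂ := mul_add s a₁ a₂
    have hsumB : s * (a₁ + a₂) ∈ B := by rw [hsum]; exact add_mem hsa₁ hsa₂
    have hb := FiltAux.degAd_add (L₀ := L₀) (hnil _ hsa₁) (hnil _ hsa₂)
    rw [key _ h12 s hsS hsumB, key a₁ h1 s hsS hsa₁, key a₂ h2 s hsS hsa₂, hsum]
    have hb' : (degAd L₀ (s * a₁ + s * a₂) : ℤ) ≤
        max (degAd L₀ (s * a₁) : ℤ) (degAd L₀ (s * a₂) : ℤ) := by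
      calc (degAd L₀ (s * a₁ + s * a₂) : ℤ) ≤
          ((max (degAd L₀ (s * a₁)) (degAd L₀ (s * a₂)) : ℕ) : ℤ) := by exact_mod_cast hb
        _ = _ := by push_cast [Nat.cast_max]; ring
    calc (degAd L₀ (s * a₁ + s * a₂) : ℤ) - degAd L₀ s ≤
        max (degAd L₀ (s * a₁) : ℤ) (degAd L₀ (s * a₂) : ℤ) - degAd L₀ s :=
          sub_le_sub_right hb' _
      _ = _ := by rw [max_sub_sub_right]
  have hneg : ∀ z : A, z ≠ 0 → deg (-z) = deg z := by
    intro z hz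
    rw [← neg_one_mul, hmul _ _ (by simp : (-1 : A) ≠ 0) hz,
      hdegB (-1) (neg_mem (one_mem B)) (by simp), FiltAux.degAd_neg_one]
    simp
  have huniq : ∀ deg' : A → ℤ,
      (∀ b ∈ B, b ≠ 0 → deg' b = degAd L₀ b) →
      (∀ a₁ a₂ : A, a₁ ≠ 0 → a₂ ≠ 0 → deg' (a₁ * a₂) = deg' a₁ + deg' a₂) →
      ∀ a : A, a ≠ 0 → deg' a = deg a := by
    intro deg' h0 h1 a ha
    have hsS := hσS a
    have hs0 := hSne _ hsS
    have e1 : deg' (σ a * a) = deg' (σ a) + deg' a := h1 _ _ hs0 ha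
    have e2 : deg' (σ a * a) = degAd L₀ (σ a * a) :=
      h0 _ (hσB a) (mul_ne_zero hs0 ha)
    have e3 : deg' (σ a) = degAd L₀ (σ a) := h0 _ (hSB hsS) hs0
    have e4 := key a ha (σ a) hsS (hσB a)
    omega
  have hD3 : ∀ a : A, a ≠ 0 → adOp L₀ L₀ a ≠ 0 → deg (adOp L₀ L₀ a) ≤ deg a - 1 := by
    intro a ha hDa
    obtain ⟨s, hsS, hbB⟩ : ∃ s ∈ S, s * a ∈ B := ⟨σ a, hσS a, hσB a⟩
    have hs0 : s ≠ 0 := hSne _ hsS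
    have hsB : s ∈ B := hSB hsS
    set b := s * a with hbdef
    have hb0 : b ≠ 0 := mul_ne_zero hs0 ha
    set X := adOp L₀ L₀ b with hXdef
    set Y := adOp L₀ L₀ s * a with hYdef
    have hsplit : s * adOp L₀ L₀ a = X - Y := by
      rw [hXdef, hYdef, hbdef]; simp only [adOp]; noncomm_ring
    have hsDa0 : s * adOp L₀ L₀ a ≠ 0 := mul_ne_zero hs0 hDa
    have hXB : X ∈ B := sub_mem (mul_mem hL₀ hbB) (mul_mem hbB hL₀)
    have hDsB : adOp L₀ L₀ s ∈ B := sub_mem (mul_mem hL₀ hsB) (mul_mem hsB hL₀)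
    have e0 : deg (s * adOp L₀ L₀ a) = deg s + deg (adOp L₀ L₀ a) := hmul s _ hs0 hDa
    have es : deg s = (degAd L₀ s : ℤ) := hdegB s hsB hs0
    have eb : deg b = (degAd L₀ b : ℤ) := hdegB _ hbB hb0
    have eb2 : deg b = deg s + deg a := hmul s a hs0 ha
    have hXbd : X ≠ 0 → deg X = (degAd L₀ b : ℤ) - 1 := by
      intro hX
      rw [hdegB X hXB hX]
      have h6 := FiltAux.degAd_adOp (L₀ := L₀) hb0 hX (hnil _ hbB)
      rw [← hXdef] at h6
      omega
    have hYbd : Y ≠ 0 → deg Y = (degAd L₀ b : ℤ) - 1 := by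
      intro hY
      have hDs0 : adOp L₀ L₀ s ≠ 0 := fun h => hY (by rw [hYdef, h, zero_mul])
      rw [hYdef, hmul _ _ hDs0 ha, hdegB _ hDsB hDs0]
      have h5 := FiltAux.degAd_adOp (L₀ := L₀) hs0 hDs0 (hnil _ hsB)
      omega
    have hmain : deg (s * adOp L₀ L₀ a) ≤ (degAd L₀ b : ℤ) - 1 := by
      by_cases hX : X = 0
      · have hY : Y ≠ 0 := by
          intro h; apply hsDa0; rw [hsplit, hX, h, sub_zero]
        have : s * adOp L₀ L₀ a = -Y := by rw [hsplit, hX, zero_sub]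
        rw [this, hneg Y hY, hYbd hY]
      · by_cases hY : Y = 0
        · have : s * adOp L₀ L₀ a = X := by rw [hsplit, hY, sub_zero]
          rw [this, hXbd hX]
        · have hform : s * adOp L₀ L₀ a = X + -Y := by rw [hsplit, sub_eq_add_neg]
          have hsum0 : X + -Y ≠ 0 := by rw [← hform]; exact hsDa0
          have := hadd X (-Y) hX (neg_ne_zero.mpr hY) hsum0
          rw [hform]
          calc deg (X + -Y) ≤ max (deg X) (deg (-Y)) := this
            _ ≤ (degAd L₀ b : ℤ) - 1 := by
              rw [hneg Y hY, hXbd hX, hYbd hY]; simp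
    omega
  exact ⟨deg, hdegB, hmul, huniq, hadd, hD3⟩
end

section
/- Let A be an associative unital ring. For all a, b, c, x, y ∈ A and every integer n ≥ 0, the following identity holds: ad_{a,c}ⁿ(x·y) = Σ_{k=0}ⁿ C(n, k) · ad_{a,b}^{k}(x) · ad_{b,c}^{n−k}(y). -/
lemma adOp_mul {A : Type*} [Ring A] (a b c x y : A) :
    adOp a c (x * y) = adOp a b x * y + x * adOp b c y := by
  simp only [adOp]; noncomm_ring

lemma adOp_add {A : Type*} [Ring A] (a b x y : A) :
    adOp a b (x + y) = adOp a b x + adOp a b y := by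
  simp only [adOp]; noncomm_ring

lemma adOp_nsmul {A : Type*} [Ring A] (a b : A) (n : ℕ) (x : A) :
    adOp a b (n • x) = n • adOp a b x := by
  simp only [adOp, mul_smul_comm, smul_mul_assoc, smul_sub]

/-- The twisted Leibniz identity (coad), equivalent to Lemma 4.7:
`ad_{a,c}^n (x*y) = Σ_{k=0}^n C(n,k) ad_{a,b}^k(x) · ad_{b,c}^{n-k}(y)`. -/
theorem stmt3 {A : Type*} [Ring A] (a b c x y : A) (n : ℕ) :
    (adOp a c)^[n] (x * y) =
      ∑ j ∈ Finset.range (n + 1),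
        (n.choose j) • ((adOp a b)^[j] x * (adOp b c)^[n - j] y) := by
  induction n with
  | zero => simp
  | succ n ih =>
    rw [Function.iterate_succ_apply', ih]
    have hlin : ∀ (s : Finset ℕ) (f : ℕ → A),
        adOp a c (∑ j ∈ s, f j) = ∑ j ∈ s, adOp a c (f j) := by
      intro s f
      induction s using Finset.cons_induction with
      | empty => simp [adOp]
      | cons i s hi ihs => rw [Finset.sum_cons, adOp_add, ihs, Finset.sum_cons]
    rw [hlin]
    have step : ∀ j, adOp a c ((n.choose j) • ((adOp a b)^[j] x * (adOp b c)^[n - j] y))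
        = (n.choose j) • ((adOp a b)^[j+1] x * (adOp b c)^[n - j] y)
          + (n.choose j) • ((adOp a b)^[j] x * (adOp b c)^[n - j + 1] y) := by
      intro j
      rw [adOp_nsmul, adOp_mul a b c, smul_add, Function.iterate_succ_apply',
        Function.iterate_succ_apply']
    simp only [step]
    rw [Finset.sum_add_distrib]
    have hsub : ∀ j ∈ Finset.range (n+1),
        (n.choose j) • ((adOp a b)^[j] x * (adOp b c)^[n - j + 1] y)
        = (n.choose j) • ((adOp a b)^[j] x * (adOp b c)^[n + 1 - j] y) := by
      intro j hj
      rw [Finset.mem_range] at hj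
      have h : n - j + 1 = n + 1 - j := by omega
      rw [h]
    rw [Finset.sum_congr rfl hsub]
    rw [Finset.sum_range_succ'
      (fun j => ((n+1).choose j) • ((adOp a b)^[j] x * (adOp b c)^[n + 1 - j] y)) (n+1)]
    simp only [Nat.succ_sub_succ, Nat.choose_succ_succ', add_smul, Nat.choose_zero_right,
      one_smul, Nat.sub_zero, Function.iterate_zero_apply]
    rw [Finset.sum_add_distrib]
    rw [Finset.sum_range_succ'
      (fun j => (n.choose j) • ((adOp a b)^[j] x * (adOp b c)^[n + 1 - j] y)) n]
    rw [Finset.sum_range_succ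
      (fun j => (n.choose (j+1)) • ((adOp a b)^[j+1] x * (adOp b c)^[n - j] y)) n]
    simp only [Nat.succ_sub_succ, Nat.choose_succ_self, zero_smul, add_zero,
      Nat.choose_zero_right, one_smul, Nat.sub_zero, Function.iterate_zero_apply]
    abel
end

section
/- Assume the Setup. Let L ∈ A satisfy condition (2), and suppose there is a k-subspace U ⊆ M satisfying condition (1) for L. Then there exists a nonzero D ∈ A with L·D = D·L₀; in fact, if s ∈ S is a witness for condition (1) and N is the smallest integer with ad_{L,L₀}^{N+1}(s) = 0 (such N exists), then D := ad_{L,L₀}^{N}(s) is nonzero and satisfies L·D = D·L₀. -/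
/-- Condition (2) of Theorem 4.4: `L = L₀` or `deg(L - L₀) < 0`, expressed via some `s' ∈ S`
with `s'(L - L₀)` a nonzero element of `B` of `ad_{L₀}`-degree smaller than that of `s'`. -/
def cond2 {k A : Type*} [CommSemiring k] [Ring A] [Algebra k A]
    (B : Subalgebra k A) (S : Set A) (L₀ L : A) : Prop :=
  L = L₀ ∨ ∃ s' ∈ S, s' * (L - L₀) ∈ B ∧ s' * (L - L₀) ≠ 0 ∧
    degAd L₀ (s' * (L - L₀)) < degAd L₀ s'

/-- A `k`-subspace of the `A`-module `M` (with `k` acting through `algebraMap k A`). -/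
def isSubspace (k A : Type*) {M : Type*} [CommSemiring k] [Ring A] [Algebra k A]
    [AddCommGroup M] [Module A M] (U : Set M) : Prop :=
  (0 : M) ∈ U ∧ (∀ u ∈ U, ∀ v ∈ U, u + v ∈ U) ∧
    (∀ c : k, ∀ u ∈ U, (algebraMap k A c) • u ∈ U)

namespace Thm44

variable {A : Type*} [Ring A] (L₀ : A)

local notation "∂" => adOp L₀ L₀

lemma adOp_zero : ∂ 0 = 0 := by simp [adOp]

lemma adOp_add (x y : A) : ∂ (x + y) = ∂ x + ∂ y := by
  simp only [adOp]; noncomm_ring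

lemma adOp_sub (x y : A) : ∂ (x - y) = ∂ x - ∂ y := by
  simp only [adOp]; noncomm_ring

lemma adOp_nsmul (m : ℕ) (x : A) : ∂ (m • x) = m • ∂ x := by
  simp only [adOp, mul_smul_comm, smul_mul_assoc, smul_sub]

lemma adOp_mul (x y : A) : ∂ (x * y) = ∂ x * y + x * ∂ y := by
  simp only [adOp]; noncomm_ring

/-- `∂` as an additive monoid hom. -/
def adHom : A →+ A :=
  { toFun := ∂, map_zero' := adOp_zero L₀, map_add' := adOp_add L₀ }

lemma adOp_sum {ι : Type*} (t : Finset ι) (f : ι → A) :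
    ∂ (∑ i ∈ t, f i) = ∑ i ∈ t, ∂ (f i) :=
  map_sum (adHom L₀) f t

lemma iter_zero (n : ℕ) : ∂^[n] (0 : A) = 0 := by
  induction n with
  | zero => rfl
  | succ n ih => rw [Function.iterate_succ_apply', ih, adOp_zero]

lemma iter_add (n : ℕ) (x y : A) : ∂^[n] (x + y) = ∂^[n] x + ∂^[n] y := by
  induction n with
  | zero => rfl
  | succ n ih => rw [Function.iterate_succ_apply', ih, adOp_add,
      Function.iterate_succ_apply', Function.iterate_succ_apply']

lemma iter_sub (n : ℕ) (x y : A) : ∂^[n] (x - y) = ∂^[n] x - ∂^[n] y := by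
  induction n with
  | zero => rfl
  | succ n ih => rw [Function.iterate_succ_apply', ih, adOp_sub,
      Function.iterate_succ_apply', Function.iterate_succ_apply']

lemma iter_upward {m : ℕ} {x : A} (h : ∂^[m] x = 0) {n : ℕ} (hmn : m ≤ n) :
    ∂^[n] x = 0 := by
  obtain ⟨c, rfl⟩ := Nat.exists_eq_add_of_le hmn
  rw [Nat.add_comm, Function.iterate_add_apply, h, iter_zero]

lemma ad_leibniz (x y : A) (n : ℕ) :
    ∂^[n] (x * y)
      = ∑ i ∈ Finset.range (n + 1), n.choose i • (∂^[i] x * ∂^[n - i] y) := by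
  induction n with
  | zero => simp
  | succ n ih =>
    rw [Function.iterate_succ_apply', ih, adOp_sum]
    have hterm : ∀ i ∈ Finset.range (n + 1),
        ∂ (n.choose i • (∂^[i] x * ∂^[n - i] y))
          = n.choose i • (∂^[i+1] x * ∂^[n - i] y)
            + n.choose i • (∂^[i] x * ∂^[n - i + 1] y) := by
      intro i _
      rw [adOp_nsmul, adOp_mul, smul_add, ← Function.iterate_succ_apply' (∂),
        ← Function.iterate_succ_apply' (∂)]
    rw [Finset.sum_congr rfl hterm, Finset.sum_add_distrib]
    rw [Finset.sum_range_succ' (fun i => (n+1).choose i • (∂^[i] x * ∂^[n + 1 - i] y)) (n+1)]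
    have h1 : ∑ i ∈ Finset.range (n+1), (n+1).choose (i+1) • (∂^[i+1] x * ∂^[n + 1 - (i+1)] y)
        = (∑ i ∈ Finset.range (n+1), n.choose i • (∂^[i+1] x * ∂^[n - i] y))
          + ∑ i ∈ Finset.range (n+1), n.choose (i+1) • (∂^[i+1] x * ∂^[n - i] y) := by
      rw [← Finset.sum_add_distrib]
      refine Finset.sum_congr rfl fun i hi => ?_
      rw [Nat.succ_sub_succ, Nat.choose_succ_succ, add_smul]
    have h2 : ∑ i ∈ Finset.range (n+1), n.choose i • (∂^[i] x * ∂^[n - i + 1] y)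
        = (∑ i ∈ Finset.range (n+1), n.choose (i+1) • (∂^[i+1] x * ∂^[n - i] y))
          + (n+1).choose 0 • (∂^[0] x * ∂^[n + 1 - 0] y) := by
      rw [Finset.sum_range_succ' (fun i => n.choose i • (∂^[i] x * ∂^[n - i + 1] y)) n,
        Finset.sum_range_succ (fun i => n.choose (i+1) • (∂^[i+1] x * ∂^[n - i] y)) n]
      simp only [Nat.choose_succ_self, zero_smul, add_zero, Nat.choose_zero_right,
        Nat.sub_zero, Nat.sub_self, Function.iterate_zero, id_eq, one_smul]
      congr 1
      refine Finset.sum_congr rfl fun i hi => ?_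
      have h3 : n - (i+1) + 1 = n - i := by
        have := Finset.mem_range.mp hi; omega
      rw [h3]
    rw [h1, h2]
    abel

lemma vmul {a b : ℕ} {x y : A} (hx : ∂^[a+1] x = 0) (hy : ∂^[b+1] y = 0) :
    ∂^[a+b+1] (x * y) = 0 := by
  rw [ad_leibniz]
  refine Finset.sum_eq_zero fun i hi => ?_
  rcases le_or_gt (a+1) i with h | h
  · rw [iter_upward L₀ hx h, zero_mul, smul_zero]
  · have : b + 1 ≤ a + b + 1 - i := by omega
    rw [iter_upward L₀ hy this, mul_zero, smul_zero]

lemma vmul_top {a b : ℕ} {x y : A} (hx : ∂^[a+1] x = 0) (hy : ∂^[b+1] y = 0) :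
    ∂^[a+b] (x * y) = (a+b).choose a • (∂^[a] x * ∂^[b] y) := by
  rw [ad_leibniz]
  rw [Finset.sum_eq_single a]
  · have h4 : a + b - a = b := by omega
    rw [h4]
  · intro i hi hne
    rcases lt_or_ge a i with h | h
    · rw [iter_upward L₀ hx h, zero_mul, smul_zero]
    · have : b + 1 ≤ a + b - i := by omega
      rw [iter_upward L₀ hy this, mul_zero, smul_zero]
  · intro h
    exact absurd (Finset.mem_range.mpr (by omega)) h

/-- Nilpotency witness set. -/
def Nd (x : A) : Prop := {n : ℕ | ∂^[n + 1] x = 0}.Nonempty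

lemma nd_of_nil {x : A} (hx : x ≠ 0) (h : ∃ n, ∂^[n] x = 0) : Nd L₀ x := by
  obtain ⟨n, hn⟩ := h
  match n, hn with
  | 0, hn => exact absurd hn hx
  | (m+1), hn => exact ⟨m, hn⟩

lemma deg_spec {x : A} (h : Nd L₀ x) : ∂^[degAd L₀ x + 1] x = 0 :=
  Nat.sInf_mem h

lemma deg_le {x : A} {m : ℕ} (h : ∂^[m+1] x = 0) : degAd L₀ x ≤ m :=
  Nat.sInf_le h

lemma deg_ne {x : A} (hx : x ≠ 0) (h : Nd L₀ x) : ∂^[degAd L₀ x] x ≠ 0 := by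
  intro h0
  cases hd : degAd L₀ x with
  | zero => rw [hd] at h0; exact hx h0
  | succ m =>
    rw [hd] at h0
    have : degAd L₀ x ≤ m := Nat.sInf_le h0
    omega

variable [IsDomain A] [CharZero A]

lemma nd_mul {x y : A} (hx : x ≠ 0) (hy : y ≠ 0) (hnx : Nd L₀ x) (hny : Nd L₀ y) :
    Nd L₀ (x * y) ∧ degAd L₀ (x * y) = degAd L₀ x + degAd L₀ y := by
  have hv : ∂^[degAd L₀ x + degAd L₀ y + 1] (x * y) = 0 :=
    vmul L₀ (deg_spec L₀ hnx) (deg_spec L₀ hny)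
  have htop : ∂^[degAd L₀ x + degAd L₀ y] (x * y) ≠ 0 := by
    rw [vmul_top L₀ (deg_spec L₀ hnx) (deg_spec L₀ hny), nsmul_eq_mul]
    exact mul_ne_zero
      (Nat.cast_ne_zero.mpr (Nat.choose_pos (Nat.le_add_right _ _)).ne')
      (mul_ne_zero (deg_ne L₀ hx hnx) (deg_ne L₀ hy hny))
  refine ⟨⟨_, hv⟩, le_antisymm (deg_le L₀ hv) ?_⟩
  by_contra hlt
  push_neg at hlt
  exact htop (iter_upward L₀ (deg_spec L₀ ⟨_, hv⟩) (by omega))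

end Thm44

/-- Sufficiency part of Theorem 4.4: if `L` satisfies condition (2) and there is a `k`-subspace
`U` with `L·U ⊆ U`, `s·U₀ ⊆ U` and `s·U ⊆ U₀` for some `s ∈ S`, then a nonzero shift operator
`D` with `L·D = D·L₀` exists; in fact `D = ad_{L,L₀}^[N] s` for the smallest `N` with
`ad_{L,L₀}^[N+1] s = 0`. -/

theorem stmt4
    {k A M : Type*} [Field k] [CharZero k] [Ring A] [IsDomain A] [Algebra k A]
    [AddCommGroup M] [Module A M]
    (B R : Subalgebra k A) (hRB : R ≤ B)
    (hRcomm : ∀ x ∈ R, ∀ y ∈ R, x * y = y * x)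
    (S : Set A) (hSR : S ⊆ (R : Set A)) (hS0 : (0 : A) ∉ S) (hS1 : (1 : A) ∈ S)
    (hSmul : ∀ s ∈ S, ∀ t ∈ S, s * t ∈ S)
    (hSunit : ∀ s ∈ S, IsUnit s)
    (hleft : ∀ a : A, ∃ s ∈ S, s * a ∈ B)
    (hright : ∀ a : A, ∃ s ∈ S, a * s ∈ B)
    (U₀ : Set M) (hU₀0 : (0 : M) ∈ U₀)
    (hU₀add : ∀ u ∈ U₀, ∀ v ∈ U₀, u + v ∈ U₀)
    (hU₀neg : ∀ u ∈ U₀, -u ∈ U₀)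
    (hU₀R : ∀ r ∈ (R : Set A), ∀ u ∈ U₀, r • u ∈ U₀)
    (hB : ∀ a : A, a ∈ B ↔ ∀ u ∈ U₀, a • u ∈ U₀)
    (L₀ : A) (hL₀ : L₀ ∈ B)
    (hnil : ∀ b ∈ B, ∃ n : ℕ, (adOp L₀ L₀)^[n] b = 0)
    (L : A) (h2 : cond2 B S L₀ L)
    (U : Set M) (hU : isSubspace k A U)
    (hLU : ∀ u ∈ U, L • u ∈ U)
    (s : A) (hs : s ∈ S)
    (hsU₀ : ∀ u ∈ U₀, s • u ∈ U) (hsU : ∀ u ∈ U, s • u ∈ U₀) :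
    (∃ D : A, D ≠ 0 ∧ L * D = D * L₀) ∧
    {n : ℕ | (adOp L L₀)^[n + 1] s = 0}.Nonempty ∧
    (adOp L L₀)^[sInf {n : ℕ | (adOp L L₀)^[n + 1] s = 0}] s ≠ 0 ∧
    L * (adOp L L₀)^[sInf {n : ℕ | (adOp L L₀)^[n + 1] s = 0}] s =
      (adOp L L₀)^[sInf {n : ℕ | (adOp L L₀)^[n + 1] s = 0}] s * L₀ := by
  classical
  have hsne : s ≠ 0 := fun h => hS0 (h ▸ hs)
  haveI : CharZero A := charZero_of_injective_algebraMap (algebraMap k A).injective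
  obtain ⟨hU0, hUadd, hUsmul⟩ := hU
  have hUneg : ∀ u ∈ U, -u ∈ U := by
    intro u hu
    have := hUsmul (-1) u hu
    simpa using this
  have hUsub : ∀ u ∈ U, ∀ v ∈ U, u - v ∈ U := fun u hu v hv => by
    rw [sub_eq_add_neg]; exact hUadd u hu _ (hUneg v hv)
  -- the orbit of `U₀` under the iterated `ad` of `s` stays in `U`
  have hTU : ∀ n : ℕ, ∀ u ∈ U₀, ((adOp L L₀)^[n] s) • u ∈ U := by
    intro n
    induction n with
    | zero => exact fun u hu => hsU₀ u hu
    | succ n ih =>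
      intro u hu
      rw [Function.iterate_succ_apply']
      have hsplit : (adOp L L₀ ((adOp L L₀)^[n] s)) • u
          = L • (((adOp L L₀)^[n] s) • u) - ((adOp L L₀)^[n] s) • (L₀ • u) := by
        show (L * _ - _ * L₀) • u = _
        rw [sub_smul, mul_smul, mul_smul]
      rw [hsplit]
      exact hUsub _ (hLU _ (ih u hu)) _ (ih _ ((hB L₀).mp hL₀ u hu))
  have hsT : ∀ n : ℕ, s * (adOp L L₀)^[n] s ∈ B := by
    intro n
    rw [hB]
    intro u hu
    rw [mul_smul]
    exact hsU _ (hTU n u hu)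
  have hSB : ∀ t ∈ S, t ∈ B := fun t ht => hRB (hSR ht)
  have hSne : ∀ t ∈ S, t ≠ (0:A) := fun t ht h => hS0 (h ▸ ht)
  have hNdS : ∀ t ∈ S, Thm44.Nd L₀ t := fun t ht =>
    Thm44.nd_of_nil L₀ (hSne t ht) (hnil t (hSB t ht))
  have hNds : Thm44.Nd L₀ s := hNdS s hs
  have swap : ∀ a ∈ S, ∀ b ∈ S, a * b = b * a :=
    fun a ha b hb => hRcomm a (hSR ha) b (hSR hb)
  set ds := degAd L₀ s with hds_def
  have hkey : {n : ℕ | (adOp L L₀)^[n + 1] s = 0}.Nonempty := by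
    rcases h2 with rfl | ⟨s', hs'S, hcB, hcne, hdeg⟩
    · exact hNds
    · -- the hard branch: a degree-counting induction
      have hs'ne : s' ≠ 0 := hSne s' hs'S
      have hNds' : Thm44.Nd L₀ s' := hNdS s' hs'S
      have hcNd : Thm44.Nd L₀ (s' * (L - L₀)) := Thm44.nd_of_nil L₀ hcne (hnil _ hcB)
      set c := s' * (L - L₀) with hc_def
      set dc := degAd L₀ c with hdc_def
      set ds' := degAd L₀ s' with hds'_def
      have main : ∀ n : ℕ, (adOp L L₀)^[n] s = 0 ∨
          ∃ t ∈ S, ∃ p : ℕ, (adOp L₀ L₀)^[p+1] (t * (adOp L L₀)^[n] s) = 0 ∧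
            p + n ≤ degAd L₀ t + ds := by
        intro n
        induction n with
        | zero =>
          right
          refine ⟨1, hS1, ds, ?_, ?_⟩
          · simp only [Function.iterate_zero, id_eq, one_mul]
            exact Thm44.deg_spec L₀ hNds
          · omega
        | succ n ih =>
          by_cases hx0 : (adOp L L₀)^[n] s = 0
          · left
            rw [Function.iterate_succ_apply', hx0]
            simp [adOp]
          rcases ih with h | ⟨t, htS, p, hp, hpn⟩
          · exact absurd h hx0
          right
          set x := (adOp L L₀)^[n] s with hx_def
          have htne : t ≠ 0 := hSne t htS
          have hNdt : Thm44.Nd L₀ t := hNdS t htS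
          set q := degAd L₀ t with hq_def
          have hqt : (adOp L₀ L₀)^[q+1] t = 0 := Thm44.deg_spec L₀ hNdt
          -- Ore-type multiplier for `∂ t`
          obtain ⟨wt, hwt⟩ := hSunit t htS
          obtain ⟨v, hvS, hbB⟩ := hleft (adOp L₀ L₀ t * ↑wt⁻¹)
          set b := v * (adOp L₀ L₀ t * ↑wt⁻¹) with hb_def
          have hvne : v ≠ 0 := hSne v hvS
          have hvb : v * adOp L₀ L₀ t = b * t := by
            rw [hb_def, mul_assoc, mul_assoc, ← hwt, Units.inv_mul, mul_one]
          -- Ore-type multiplier for `c`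
          have hvtS : v * t ∈ S := hSmul v hvS t htS
          obtain ⟨wvt, hwvt⟩ := hSunit _ hvtS
          obtain ⟨e, heS, hfB⟩ := hleft (c * ↑wvt⁻¹)
          set f := e * (c * ↑wvt⁻¹) with hf_def
          have hene : e ≠ 0 := hSne e heS
          have hef : e * c = f * (v * t) := by
            rw [hf_def, mul_assoc, mul_assoc, ← hwvt, Units.inv_mul, mul_one]
          have hfne : f ≠ 0 := by
            intro h
            rw [h, zero_mul] at hef
            exact (mul_ne_zero hene hcne) hef
          have hNdf : Thm44.Nd L₀ f := Thm44.nd_of_nil L₀ hfne (hnil f hfB)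
          set qv := degAd L₀ v with hqv_def
          set qe := degAd L₀ e with hqe_def
          set df := degAd L₀ f with hdf_def
          have hqvv : (adOp L₀ L₀)^[qv+1] v = 0 := Thm44.deg_spec L₀ (hNdS v hvS)
          have hqee : (adOp L₀ L₀)^[qe+1] e = 0 := Thm44.deg_spec L₀ (hNdS e heS)
          have hdff : (adOp L₀ L₀)^[df+1] f = 0 := Thm44.deg_spec L₀ hNdf
          have hds's : (adOp L₀ L₀)^[ds'+1] s' = 0 := Thm44.deg_spec L₀ hNds'
          -- degree bookkeeping
          have hdvt := Thm44.nd_mul L₀ hvne htne (hNdS v hvS) hNdt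
          have hd1 := (Thm44.nd_mul L₀ hene hcne (hNdS e heS) hcNd).2
          have hd2 := (Thm44.nd_mul L₀ hfne (mul_ne_zero hvne htne) hNdf hdvt.1).2
          have hdfe : df + (qv + q) = qe + dc := by
            rw [hdvt.2] at hd2
            rw [hef, hd2] at hd1
            omega
          -- the new multiplier
          set t' := v * (t * (e * s')) with ht'_def
          have ht'S : t' ∈ S := hSmul v hvS _ (hSmul t htS _ (hSmul e heS s' hs'S))
          have hdegt' : degAd L₀ t' = qv + (q + (qe + ds')) := by
            have h1 := Thm44.nd_mul L₀ hene hs'ne (hNdS e heS) hNds'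
            have h2 := Thm44.nd_mul L₀ htne (mul_ne_zero hene hs'ne) hNdt h1.1
            have h3 := Thm44.nd_mul L₀ hvne
              (mul_ne_zero htne (mul_ne_zero hene hs'ne)) (hNdS v hvS) h2.1
            rw [ht'_def, h3.2, h2.2, h1.2]
          have hn1Q : n + 1 ≤ qe + ds' + (qv + q) + ds := by omega
          set p' := qe + ds' + (qv + q) + ds - (n+1) with hp'_def
          have hp'eq : p' + (n + 1) = qe + ds' + (qv + q) + ds := by omega
          refine ⟨t', ht'S, p', ?_, by omega⟩
          -- decompose `T^[n+1] s`
          have hxstep : (adOp L L₀)^[n+1] s = (L - L₀) * x + adOp L₀ L₀ x := by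
            rw [Function.iterate_succ_apply', ← hx_def]
            show L * x - x * L₀ = _
            have : adOp L₀ L₀ x = L₀ * x - x * L₀ := rfl
            rw [this]; noncomm_ring
          have hid1 : t' * ((L - L₀) * x) = (v * (t * f)) * (v * (t * x)) := by
            have h0 : s' * ((L - L₀) * x) = c * x := by rw [hc_def, mul_assoc]
            calc t' * ((L-L₀)*x) = v * (t * (e * (s' * ((L-L₀)*x)))) := by
                  rw [ht'_def]; simp only [mul_assoc]
            _ = v * (t * (e * (c * x))) := by rw [h0]
            _ = v * (t * ((e * c) * x)) := by rw [← mul_assoc e c x]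
            _ = v * (t * ((f * (v*t)) * x)) := by rw [hef]
            _ = (v * (t * f)) * (v * (t * x)) := by simp only [mul_assoc]
          have hco : t' = (e * s') * (v * t) := by
            rw [ht'_def]
            have h1 : t * e = e * t := swap t htS e heS
            have h2 : t * s' = s' * t := swap t htS s' hs'S
            have h3 : v * e = e * v := swap v hvS e heS
            have h4 : v * s' = s' * v := swap v hvS s' hs'S
            calc v * (t * (e * s')) = v * (e * (s' * t)) := by
                  rw [← mul_assoc t e, h1, mul_assoc e t s', h2, ← mul_assoc e s' t]
            _ = (e * s') * (v * t) := by
                  rw [← mul_assoc v e, h3, mul_assoc e v, ← mul_assoc v s', h4,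
                    mul_assoc s' v t, ← mul_assoc e s']
          have htdx : t * adOp L₀ L₀ x = adOp L₀ L₀ (t*x) - adOp L₀ L₀ t * x := by
            rw [Thm44.adOp_mul]; abel
          have hid2 : t' * (adOp L₀ L₀ x)
              = e * (s' * (v * (adOp L₀ L₀ (t * x)))) - e * (s' * (b * (t * x))) := by
            calc t' * (adOp L₀ L₀ x) = (e*s') * (v * (t * adOp L₀ L₀ x)) := by
                  rw [hco, mul_assoc, ← mul_assoc v t]
            _ = (e*s') * (v * (adOp L₀ L₀ (t*x) - adOp L₀ L₀ t * x)) := by rw [htdx]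
            _ = (e*s') * (v * adOp L₀ L₀ (t*x) - b * (t * x)) := by
                  rw [mul_sub, ← mul_assoc v _ x, hvb, mul_assoc b t x]
            _ = e * (s' * (v * (adOp L₀ L₀ (t * x)))) - e * (s' * (b * (t * x))) := by
                  rw [mul_sub]; simp only [mul_assoc]
          -- vanishing of the three terms
          have hterm1 : (adOp L₀ L₀)^[p'+1] ((v * (t * f)) * (v * (t * x))) = 0 := by
            have e1 := Thm44.vmul L₀ hqvv (Thm44.vmul L₀ hqt hdff)
            have e2 := Thm44.vmul L₀ hqvv hp
            have e3 := Thm44.vmul L₀ e1 e2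
            exact Thm44.iter_upward L₀ e3 (by omega)
          have hterm2a : (adOp L₀ L₀)^[p'+1]
              (e * (s' * (v * (adOp L₀ L₀ (t * x))))) = 0 := by
            cases p with
            | zero =>
              have h0 : adOp L₀ L₀ (t * x) = 0 := by simpa using hp
              rw [h0]
              simp only [mul_zero]
              exact Thm44.iter_zero L₀ _
            | succ pp =>
              have h0 : (adOp L₀ L₀)^[pp+1] (adOp L₀ L₀ (t * x)) = 0 := by
                rw [← Function.iterate_succ_apply]
                exact hp
              have e3 := Thm44.vmul L₀ hqee (Thm44.vmul L₀ hds's (Thm44.vmul L₀ hqvv h0))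
              exact Thm44.iter_upward L₀ e3 (by omega)
          have hterm2b : (adOp L₀ L₀)^[p'+1] (e * (s' * (b * (t * x)))) = 0 := by
            by_cases hbz : b = 0
            · rw [hbz]
              simp only [zero_mul, mul_zero]
              exact Thm44.iter_zero L₀ _
            · have hdtne : adOp L₀ L₀ t ≠ 0 := by
                intro h
                apply hbz
                have h5 : b * t = 0 := by rw [← hvb, h, mul_zero]
                rcases mul_eq_zero.mp h5 with h' | h'
                · exact h'
                · exact absurd h' htne
              have hq1 : 1 ≤ q := by
                rcases Nat.eq_zero_or_pos q with h | h
                · exfalso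
                  apply hdtne
                  have := hqt
                  rw [h] at this
                  simpa using this
                · exact h
              have hdtN : (adOp L₀ L₀)^[(q-1)+1] (adOp L₀ L₀ t) = 0 := by
                rw [Nat.sub_add_cancel hq1, ← Function.iterate_succ_apply]
                exact hqt
              have hNddt : Thm44.Nd L₀ (adOp L₀ L₀ t) := ⟨q-1, hdtN⟩
              have hddt_le : degAd L₀ (adOp L₀ L₀ t) ≤ q - 1 := Thm44.deg_le L₀ hdtN
              have hNdb : Thm44.Nd L₀ b := Thm44.nd_of_nil L₀ hbz (hnil b hbB)
              set db := degAd L₀ b with hdb_def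
              have hdbb : (adOp L₀ L₀)^[db+1] b = 0 := Thm44.deg_spec L₀ hNdb
              have hA := (Thm44.nd_mul L₀ hvne hdtne (hNdS v hvS) hNddt).2
              have hB2 := (Thm44.nd_mul L₀ hbz htne hNdb hNdt).2
              have hdbeq : db + q = qv + degAd L₀ (adOp L₀ L₀ t) := by
                rw [hvb] at hA
                rw [hA] at hB2
                omega
              have e3 := Thm44.vmul L₀ hqee (Thm44.vmul L₀ hds's (Thm44.vmul L₀ hdbb hp))
              exact Thm44.iter_upward L₀ e3 (by omega)
          rw [hxstep, mul_add, hid1, hid2, Thm44.iter_add, Thm44.iter_sub,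
            hterm1, hterm2a, hterm2b]
          simp
      -- final contradiction: `T^[2 ds + 1] s = 0`
      refine ⟨2*ds, ?_⟩
      show (adOp L L₀)^[2*ds+1] s = 0
      by_contra hx
      rcases main (2*ds+1) with h | ⟨t, htS, p, hp, hpn⟩
      · exact hx h
      · have htne : t ≠ 0 := hSne t htS
        have htxne : t * (adOp L L₀)^[2*ds+1] s ≠ 0 := mul_ne_zero htne hx
        have hNdtx : Thm44.Nd L₀ (t * (adOp L L₀)^[2*ds+1] s) := ⟨p, hp⟩
        have hsxne : s * (adOp L L₀)^[2*ds+1] s ≠ 0 := mul_ne_zero hsne hx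
        have hNdsx : Thm44.Nd L₀ (s * (adOp L L₀)^[2*ds+1] s) :=
          Thm44.nd_of_nil L₀ hsxne (hnil _ (hsT (2*ds+1)))
        have hswap : t * (s * (adOp L L₀)^[2*ds+1] s)
            = s * (t * (adOp L L₀)^[2*ds+1] s) := by
          rw [← mul_assoc, swap t htS s hs, mul_assoc]
        have h1 := (Thm44.nd_mul L₀ htne hsxne (hNdS t htS) hNdsx).2
        have h2 := (Thm44.nd_mul L₀ hsne htxne hNds hNdtx).2
        have h3 : degAd L₀ (t * (adOp L L₀)^[2*ds+1] s) ≤ p := Thm44.deg_le L₀ hp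
        rw [hswap, h2] at h1
        omega
  -- conclude from `hkey`
  have hN1 : (adOp L L₀)^[sInf {n : ℕ | (adOp L L₀)^[n + 1] s = 0} + 1] s = 0 :=
    Nat.sInf_mem hkey
  have hDne : (adOp L L₀)^[sInf {n : ℕ | (adOp L L₀)^[n + 1] s = 0}] s ≠ 0 := by
    intro h0
    cases hd : sInf {n : ℕ | (adOp L L₀)^[n + 1] s = 0} with
    | zero => rw [hd] at h0; simp at h0; exact hsne h0
    | succ m =>
      rw [hd] at h0
      have hle : sInf {n : ℕ | (adOp L L₀)^[n + 1] s = 0} ≤ m := Nat.sInf_le h0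
      omega
  have hLD : L * (adOp L L₀)^[sInf {n : ℕ | (adOp L L₀)^[n + 1] s = 0}] s
      = (adOp L L₀)^[sInf {n : ℕ | (adOp L L₀)^[n + 1] s = 0}] s * L₀ := by
    have h5 := hN1
    rw [Function.iterate_succ_apply'] at h5
    exact sub_eq_zero.mp h5
  exact ⟨⟨_, hDne, hLD⟩, hkey, hDne, hLD⟩
end

section
/- Assume the Setup. Let L ∈ A and suppose there exists a nonzero D ∈ A with L·D = D·L₀. Then L satisfies condition (2), and there exists a k-subspace U ⊆ M satisfying condition (1) for L. -/
namespace Stmt5Aux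

variable {A : Type*} [Ring A]

lemma adOp_mul' (L₀ x y : A) :
    adOp L₀ L₀ (x * y) = adOp L₀ L₀ x * y + x * adOp L₀ L₀ y := by
  simp only [adOp]; noncomm_ring

lemma adOp_add' (L₀ x y : A) :
    adOp L₀ L₀ (x + y) = adOp L₀ L₀ x + adOp L₀ L₀ y := by
  simp only [adOp]; noncomm_ring

lemma adOp_neg' (L₀ x : A) : adOp L₀ L₀ (-x) = - adOp L₀ L₀ x := by
  simp only [adOp]; noncomm_ring

lemma adOp_zero' (L₀ : A) : adOp L₀ L₀ (0:A) = 0 := by simp [adOp]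

lemma iter_zero' (L₀ : A) (n : ℕ) : (adOp L₀ L₀)^[n] (0:A) = 0 := by
  induction n with
  | zero => rfl
  | succ n ih => rw [Function.iterate_succ_apply, adOp_zero', ih]

lemma iter_add' (L₀ : A) (n : ℕ) (x y : A) :
    (adOp L₀ L₀)^[n] (x + y) = (adOp L₀ L₀)^[n] x + (adOp L₀ L₀)^[n] y := by
  induction n generalizing x y with
  | zero => rfl
  | succ n ih =>
      rw [Function.iterate_succ_apply, Function.iterate_succ_apply, Function.iterate_succ_apply,
        adOp_add', ih]

lemma iter_neg' (L₀ : A) (n : ℕ) (x : A) :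
    (adOp L₀ L₀)^[n] (-x) = - (adOp L₀ L₀)^[n] x := by
  induction n generalizing x with
  | zero => rfl
  | succ n ih => rw [Function.iterate_succ_apply, Function.iterate_succ_apply, adOp_neg', ih]

lemma iter_sub' (L₀ : A) (n : ℕ) (x y : A) :
    (adOp L₀ L₀)^[n] (x - y) = (adOp L₀ L₀)^[n] x - (adOp L₀ L₀)^[n] y := by
  rw [sub_eq_add_neg, iter_add', iter_neg', sub_eq_add_neg]

lemma kill_mono' (L₀ : A) {n : ℕ} {z : A} (h : (adOp L₀ L₀)^[n] z = 0) {m : ℕ} (hm : n ≤ m) :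
    (adOp L₀ L₀)^[m] z = 0 := by
  have hmn : m = (m - n) + n := by omega
  rw [hmn, Function.iterate_add_apply, h, iter_zero']

lemma iter_mul_left' (L₀ : A) {x : A} (h : adOp L₀ L₀ x = 0) (n : ℕ) (y : A) :
    (adOp L₀ L₀)^[n] (x * y) = x * (adOp L₀ L₀)^[n] y := by
  induction n generalizing y with
  | zero => rfl
  | succ n ih =>
      rw [Function.iterate_succ_apply, Function.iterate_succ_apply,
        show adOp L₀ L₀ (x*y) = x * adOp L₀ L₀ y by rw [adOp_mul', h, zero_mul, zero_add]]
      exact ih _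

lemma iter_mul_right' (L₀ : A) {y : A} (h : adOp L₀ L₀ y = 0) (n : ℕ) (x : A) :
    (adOp L₀ L₀)^[n] (x * y) = (adOp L₀ L₀)^[n] x * y := by
  induction n generalizing x with
  | zero => rfl
  | succ n ih =>
      rw [Function.iterate_succ_apply, Function.iterate_succ_apply,
        show adOp L₀ L₀ (x*y) = adOp L₀ L₀ x * y by rw [adOp_mul', h, mul_zero, add_zero]]
      exact ih _

lemma Vlem (L₀ : A) :
    ∀ (n a b : ℕ) (x y : A), a + b = n →
      (adOp L₀ L₀)^[a+1] x = 0 → (adOp L₀ L₀)^[b+1] y = 0 →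
      (adOp L₀ L₀)^[a+b+1] (x * y) = 0 := by
  intro n
  induction n using Nat.strong_induction_on with
  | _ n IH =>
    intro a b x y hab hx hy
    match a, b with
    | 0, b =>
        have hx1 : adOp L₀ L₀ x = 0 := by simpa using hx
        rw [show (0:ℕ)+b+1 = b+1 by omega, iter_mul_left' L₀ hx1, hy, mul_zero]
    | a+1, 0 =>
        have hy1 : adOp L₀ L₀ y = 0 := by simpa using hy
        rw [show a+1+0+1 = a+1+1 by omega, iter_mul_right' L₀ hy1, hx, zero_mul]
    | a+1, b+1 =>
        have hx' : (adOp L₀ L₀)^[a+1] (adOp L₀ L₀ x) = 0 := by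
          rw [← Function.iterate_succ_apply]; exact hx
        have hy' : (adOp L₀ L₀)^[b+1] (adOp L₀ L₀ y) = 0 := by
          rw [← Function.iterate_succ_apply]; exact hy
        have IH1 := IH (a+(b+1)) (by omega) a (b+1) (adOp L₀ L₀ x) y rfl hx' hy
        have IH2 := IH ((a+1)+b) (by omega) (a+1) b x (adOp L₀ L₀ y) rfl hx hy'
        rw [show (a+1)+b = a+b+1 by omega] at IH2
        rw [show a+(b+1) = a+b+1 by omega] at IH1
        have key : (adOp L₀ L₀)^[(a+1)+(b+1)+1] (x*y)
            = (adOp L₀ L₀)^[a+b+1+1] (adOp L₀ L₀ x * y)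
              + (adOp L₀ L₀)^[a+b+1+1] (x * adOp L₀ L₀ y) := by
          rw [show (a+1)+(b+1)+1 = (a+b+1+1)+1 by omega, Function.iterate_succ_apply,
            adOp_mul', iter_add']
        rw [key, IH1, IH2, add_zero]

lemma Mlem (L₀ : A) :
    ∀ (n a b : ℕ) (x y : A), a + b = n →
      (adOp L₀ L₀)^[a+1] x = 0 → (adOp L₀ L₀)^[b+1] y = 0 →
      (adOp L₀ L₀)^[a+b] (x * y)
        = ((a+b).choose a : A) * ((adOp L₀ L₀)^[a] x * (adOp L₀ L₀)^[b] y) := by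
  intro n
  induction n using Nat.strong_induction_on with
  | _ n IH =>
    intro a b x y hab hx hy
    match a, b with
    | 0, b =>
        have hx1 : adOp L₀ L₀ x = 0 := by simpa using hx
        simp [iter_mul_left' L₀ hx1]
    | a+1, 0 =>
        have hy1 : adOp L₀ L₀ y = 0 := by simpa using hy
        simp [iter_mul_right' L₀ hy1]
    | a+1, b+1 =>
        have hx' : (adOp L₀ L₀)^[a+1] (adOp L₀ L₀ x) = 0 := by
          rw [← Function.iterate_succ_apply]; exact hx
        have hy' : (adOp L₀ L₀)^[b+1] (adOp L₀ L₀ y) = 0 := by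
          rw [← Function.iterate_succ_apply]; exact hy
        have IH1 := IH (a+(b+1)) (by omega) a (b+1) (adOp L₀ L₀ x) y rfl hx' hy
        have IH2 := IH ((a+1)+b) (by omega) (a+1) b x (adOp L₀ L₀ y) rfl hx hy'
        rw [← Function.iterate_succ_apply] at IH1 IH2
        simp only [Nat.succ_eq_add_one] at IH1 IH2
        rw [show (a+1)+b = a+b+1 by omega] at IH2
        rw [show a+(b+1) = a+b+1 by omega] at IH1
        have key : (adOp L₀ L₀)^[(a+1)+(b+1)] (x*y)
            = (adOp L₀ L₀)^[a+b+1] (adOp L₀ L₀ x * y)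
              + (adOp L₀ L₀)^[a+b+1] (x * adOp L₀ L₀ y) := by
          rw [show (a+1)+(b+1) = (a+b+1)+1 by omega, Function.iterate_succ_apply,
            adOp_mul', iter_add']
        rw [key, IH1, IH2, show (a+1)+(b+1) = (a+b+1)+1 by omega,
          Nat.choose_succ_succ (a+b+1) a, Nat.cast_add, add_mul]

lemma degAd_le' (L₀ : A) {x : A} {n : ℕ} (h : (adOp L₀ L₀)^[n+1] x = 0) : degAd L₀ x ≤ n :=
  Nat.sInf_le h

lemma degAd_eq' (L₀ : A) {x : A} {n : ℕ} (h0 : (adOp L₀ L₀)^[n+1] x = 0)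
    (h1 : (adOp L₀ L₀)^[n] x ≠ 0) : degAd L₀ x = n := by
  refine le_antisymm (degAd_le' L₀ h0) ?_
  refine le_csInf ⟨n, h0⟩ ?_
  intro m hm
  by_contra hlt
  push_neg at hlt
  exact h1 (kill_mono' L₀ hm (by omega))

lemma degAd_spec' (L₀ : A) {x : A} (hx : x ≠ 0) (hex : ∃ N, (adOp L₀ L₀)^[N] x = 0) :
    (adOp L₀ L₀)^[degAd L₀ x + 1] x = 0 ∧ (adOp L₀ L₀)^[degAd L₀ x] x ≠ 0 := by
  classical
  have hspec : (adOp L₀ L₀)^[Nat.find hex] x = 0 := Nat.find_spec hex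
  have hpos : Nat.find hex ≠ 0 := by
    intro h; rw [h] at hspec; exact hx hspec
  have hmin : (adOp L₀ L₀)^[Nat.find hex - 1] x ≠ 0 := Nat.find_min hex (by omega)
  have hdeg : degAd L₀ x = Nat.find hex - 1 :=
    degAd_eq' L₀ (by rw [show Nat.find hex - 1 + 1 = Nat.find hex by omega]; exact hspec) hmin
  rw [hdeg, show Nat.find hex - 1 + 1 = Nat.find hex by omega]
  exact ⟨hspec, hmin⟩

lemma degAd_mul' [IsDomain A] [CharZero A] (L₀ : A) {x y : A} (hx : x ≠ 0) (hy : y ≠ 0)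
    (hex : ∃ N, (adOp L₀ L₀)^[N] x = 0) (hey : ∃ N, (adOp L₀ L₀)^[N] y = 0) :
    degAd L₀ (x*y) = degAd L₀ x + degAd L₀ y := by
  obtain ⟨hx0, hx1⟩ := degAd_spec' L₀ hx hex
  obtain ⟨hy0, hy1⟩ := degAd_spec' L₀ hy hey
  refine degAd_eq' L₀ (Vlem L₀ (degAd L₀ x + degAd L₀ y) _ _ x y rfl hx0 hy0) ?_
  rw [Mlem L₀ (degAd L₀ x + degAd L₀ y) _ _ x y rfl hx0 hy0]
  refine mul_ne_zero ?_ (mul_ne_zero hx1 hy1)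
  exact_mod_cast (Nat.choose_pos (Nat.le_add_right _ _)).ne'

lemma degAd_adOp_lt' (L₀ : A) {x : A} (h : adOp L₀ L₀ x ≠ 0)
    (hex : ∃ N, (adOp L₀ L₀)^[N] x = 0) :
    degAd L₀ (adOp L₀ L₀ x) < degAd L₀ x := by
  have hx : x ≠ 0 := by rintro rfl; exact h (adOp_zero' L₀)
  obtain ⟨h0, h1⟩ := degAd_spec' L₀ hx hex
  have ha : degAd L₀ x ≠ 0 := by
    intro hz
    rw [hz] at h0
    exact h (by simpa using h0)
  have h2 : (adOp L₀ L₀)^[(degAd L₀ x - 1) + 1] (adOp L₀ L₀ x) = 0 := by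
    rw [← Function.iterate_succ_apply]
    simp only [Nat.succ_eq_add_one]
    rw [show degAd L₀ x - 1 + 1 + 1 = degAd L₀ x + 1 by omega]
    exact h0
  have := degAd_le' L₀ h2
  omega



end Stmt5Aux
open Stmt5Aux

/-- Necessity part of Theorem 4.4: if there is a nonzero `D ∈ A` with `L·D = D·L₀`, then `L`
satisfies condition (2) and there is a `k`-subspace `U ⊆ M` satisfying condition (1) for `L`. -/
theorem stmt5
    {k A M : Type*} [Field k] [CharZero k] [Ring A] [IsDomain A] [Algebra k A]
    [AddCommGroup M] [Module A M]
    (B R : Subalgebra k A) (hRB : R ≤ B)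
    (hRcomm : ∀ x ∈ R, ∀ y ∈ R, x * y = y * x)
    (S : Set A) (hSR : S ⊆ (R : Set A)) (hS0 : (0 : A) ∉ S) (hS1 : (1 : A) ∈ S)
    (hSmul : ∀ s ∈ S, ∀ t ∈ S, s * t ∈ S)
    (hSunit : ∀ s ∈ S, IsUnit s)
    (hleft : ∀ a : A, ∃ s ∈ S, s * a ∈ B)
    (hright : ∀ a : A, ∃ s ∈ S, a * s ∈ B)
    (U₀ : Set M) (hU₀0 : (0 : M) ∈ U₀)
    (hU₀add : ∀ u ∈ U₀, ∀ v ∈ U₀, u + v ∈ U₀)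
    (hU₀neg : ∀ u ∈ U₀, -u ∈ U₀)
    (hU₀R : ∀ r ∈ (R : Set A), ∀ u ∈ U₀, r • u ∈ U₀)
    (hB : ∀ a : A, a ∈ B ↔ ∀ u ∈ U₀, a • u ∈ U₀)
    (L₀ : A) (hL₀ : L₀ ∈ B)
    (hnil : ∀ b ∈ B, ∃ n : ℕ, (adOp L₀ L₀)^[n] b = 0)
    (L : A) (D : A) (hD : D ≠ 0) (hLD : L * D = D * L₀) :
    cond2 B S L₀ L ∧
    ∃ U : Set M, isSubspace k A U ∧
      (∀ u ∈ U, L • u ∈ U) ∧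
      ∃ s ∈ S, (∀ u ∈ U₀, s • u ∈ U) ∧ (∀ u ∈ U, s • u ∈ U₀) := by
  classical
  haveI : CharZero A := charZero_of_injective_algebraMap (algebraMap k A).injective
  have hSne : ∀ s ∈ S, s ≠ (0:A) := fun s hs h => hS0 (h ▸ hs)
  have hSB : ∀ s ∈ S, s ∈ B := fun s hs => hRB (hSR hs)
  obtain ⟨s₀, hs₀S, hs₀D⟩ := hleft D
  have hs₀0 : s₀ ≠ 0 := hSne s₀ hs₀S
  have hδD : adOp L₀ L₀ D = -((L - L₀) * D) := by
    simp only [adOp]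
    rw [← hLD]
    noncomm_ring
  -- Part 1 : condition (2)
  have hcond2 : cond2 B S L₀ L := by
    by_cases hLL : L = L₀
    · exact Or.inl hLL
    · have hε : L - L₀ ≠ 0 := sub_ne_zero.mpr hLL
      obtain ⟨s', hs'S, hbB⟩ := hleft (L - L₀)
      have hs'0 : s' ≠ 0 := hSne s' hs'S
      have hb0 : s' * (L - L₀) ≠ 0 := mul_ne_zero hs'0 hε
      refine Or.inr ⟨s', hs'S, hbB, hb0, ?_⟩
      obtain ⟨q, hqS, hfB⟩ := hright D
      have hq0 : q ≠ 0 := hSne q hqS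
      have hf0 : D * q ≠ 0 := mul_ne_zero hD hq0
      have he0 : s₀ * D ≠ 0 := mul_ne_zero hs₀0 hD
      have hcomm : s₀ * s' = s' * s₀ := hRcomm s₀ (hSR hs₀S) s' (hSR hs'S)
      have hkey2 : s₀ * (s' * (L - L₀)) * (D * q)
          = s' * (s₀ * D) * adOp L₀ L₀ q - s' * s₀ * adOp L₀ L₀ (D * q) := by
        rw [adOp_mul' L₀ D q, hδD]
        rw [show s₀ * (s' * (L - L₀)) = s₀ * s' * (L - L₀) from (mul_assoc _ _ _).symm, hcomm]
        noncomm_ring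
      have hs'B : s' ∈ B := hSB s' hs'S
      have hs₀B : s₀ ∈ B := hSB s₀ hs₀S
      have hqB : q ∈ B := hSB q hqS
      have hδqB : adOp L₀ L₀ q ∈ B := by
        simpa [adOp] using sub_mem (mul_mem hL₀ hqB) (mul_mem hqB hL₀)
      have hδfB : adOp L₀ L₀ (D * q) ∈ B := by
        simpa [adOp] using sub_mem (mul_mem hL₀ hfB) (mul_mem hfB hL₀)
      have hdg_eq : degAd L₀ (s₀*D) + degAd L₀ q = degAd L₀ s₀ + degAd L₀ (D*q) := by
        have h1 := degAd_mul' L₀ he0 hq0 (hnil _ hs₀D) (hnil _ hqB)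
        have h2 := degAd_mul' L₀ hs₀0 hf0 (hnil _ hs₀B) (hnil _ hfB)
        rw [← h1, ← h2, mul_assoc]
      set K := degAd L₀ s' + degAd L₀ s₀ + degAd L₀ (D*q) with hK
      have hT1 : (adOp L₀ L₀)^[K] (s' * (s₀ * D) * adOp L₀ L₀ q) = 0 := by
        by_cases hdq : adOp L₀ L₀ q = 0
        · rw [hdq, mul_zero, iter_zero']
        · have hT1ne : s' * (s₀*D) * adOp L₀ L₀ q ≠ 0 :=
            mul_ne_zero (mul_ne_zero hs'0 he0) hdq
          have hd1 : degAd L₀ (s' * (s₀*D) * adOp L₀ L₀ q)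
              = degAd L₀ s' + degAd L₀ (s₀*D) + degAd L₀ (adOp L₀ L₀ q) := by
            rw [degAd_mul' L₀ (mul_ne_zero hs'0 he0) hdq (hnil _ (mul_mem hs'B hs₀D))
                (hnil _ hδqB),
              degAd_mul' L₀ hs'0 he0 (hnil _ hs'B) (hnil _ hs₀D)]
          have hlt := degAd_adOp_lt' L₀ hdq (hnil _ hqB)
          obtain ⟨hz, -⟩ := degAd_spec' L₀ hT1ne (hnil _ (mul_mem (mul_mem hs'B hs₀D) hδqB))
          exact kill_mono' L₀ hz (by omega)
      have hT2 : (adOp L₀ L₀)^[K] (s' * s₀ * adOp L₀ L₀ (D * q)) = 0 := by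
        by_cases hdf : adOp L₀ L₀ (D * q) = 0
        · rw [hdf, mul_zero, iter_zero']
        · have hT2ne : s' * s₀ * adOp L₀ L₀ (D*q) ≠ 0 :=
            mul_ne_zero (mul_ne_zero hs'0 hs₀0) hdf
          have hd2 : degAd L₀ (s' * s₀ * adOp L₀ L₀ (D*q))
              = degAd L₀ s' + degAd L₀ s₀ + degAd L₀ (adOp L₀ L₀ (D*q)) := by
            rw [degAd_mul' L₀ (mul_ne_zero hs'0 hs₀0) hdf (hnil _ (mul_mem hs'B hs₀B))
                (hnil _ hδfB),
              degAd_mul' L₀ hs'0 hs₀0 (hnil _ hs'B) (hnil _ hs₀B)]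
          have hlt := degAd_adOp_lt' L₀ hdf (hnil _ hfB)
          obtain ⟨hz, -⟩ := degAd_spec' L₀ hT2ne (hnil _ (mul_mem (mul_mem hs'B hs₀B) hδfB))
          exact kill_mono' L₀ hz (by omega)
      have hKz : (adOp L₀ L₀)^[K] (s₀ * (s' * (L - L₀)) * (D * q)) = 0 := by
        rw [hkey2, iter_sub', hT1, hT2, sub_zero]
      have hP0 : s₀ * (s' * (L - L₀)) * (D * q) ≠ 0 :=
        mul_ne_zero (mul_ne_zero hs₀0 hb0) hf0
      have hKpos : K ≠ 0 := by
        intro h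
        rw [h, Function.iterate_zero_apply] at hKz
        exact hP0 hKz
      have hdgP : degAd L₀ (s₀ * (s' * (L - L₀)) * (D * q))
          = degAd L₀ s₀ + degAd L₀ (s' * (L - L₀)) + degAd L₀ (D * q) := by
        rw [degAd_mul' L₀ (mul_ne_zero hs₀0 hb0) hf0 (hnil _ (mul_mem hs₀B hbB)) (hnil _ hfB),
          degAd_mul' L₀ hs₀0 hb0 (hnil _ hs₀B) (hnil _ hbB)]
      have hle : degAd L₀ (s₀ * (s' * (L - L₀)) * (D * q)) ≤ K - 1 :=
        degAd_le' L₀ (by rw [show K - 1 + 1 = K by omega]; exact hKz)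
      omega
  -- Part 2 : the subspace U
  obtain ⟨n₀, hn₀⟩ := hnil (s₀ * D) hs₀D
  let Q : ℕ → A := fun j => Nat.rec s₀ (fun _ q => adOp L₀ L₀ q - q * (L - L₀)) j
  have hQ0 : Q 0 = s₀ := rfl
  have hQs : ∀ j, Q (j+1) = adOp L₀ L₀ (Q j) - Q j * (L - L₀) := fun j => rfl
  have hQD : ∀ j, (adOp L₀ L₀)^[j] (s₀ * D) = Q j * D := by
    intro j
    induction j with
    | zero => rw [Function.iterate_zero_apply, hQ0]
    | succ j ih =>
        rw [Function.iterate_succ_apply', ih, hQs, adOp_mul' L₀ (Q j) D, hδD]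
        noncomm_ring
  have hQzero : ∀ j, n₀ ≤ j → Q j = 0 := by
    intro j hj
    have h0 : (adOp L₀ L₀)^[j] (s₀ * D) = 0 := kill_mono' L₀ hn₀ hj
    rw [hQD j] at h0
    rcases mul_eq_zero.mp h0 with h | h
    · exact h
    · exact absurd h hD
  have hv : ∀ N : ℕ, ∃ v ∈ S, ∀ j < N, Q j * v ∈ B := by
    intro N
    induction N with
    | zero => exact ⟨1, hS1, fun j hj => absurd hj (by omega)⟩
    | succ N ih =>
        obtain ⟨v, hvS, hvB⟩ := ih
        obtain ⟨w, hwS, hwB⟩ := hright (Q N * v)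
        refine ⟨v * w, hSmul v hvS w hwS, ?_⟩
        intro j hj
        rcases Nat.lt_succ_iff_lt_or_eq.mp hj with h | h
        · rw [← mul_assoc]
          exact mul_mem (hvB j h) (hSB w hwS)
        · subst h
          rw [← mul_assoc]
          exact hwB
  obtain ⟨v, hvS, hvB'⟩ := hv n₀
  have hvB : ∀ j : ℕ, Q j * v ∈ B := by
    intro j
    by_cases hj : j < n₀
    · exact hvB' j hj
    · rw [hQzero j (by omega), zero_mul]
      exact zero_mem B
  set Sgen : Set A := {x | ∃ e j : ℕ, x = L₀^e * ((adOp L₀ L₀)^[j] (s₀ * D))} with hSgen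
  have hstab : ∀ x ∈ AddSubgroup.closure Sgen, x * L₀ ∈ AddSubgroup.closure Sgen := by
    intro x hx
    induction hx using AddSubgroup.closure_induction with
    | mem x hxg =>
        obtain ⟨e, j, rfl⟩ := hxg
        have hz : ((adOp L₀ L₀)^[j] (s₀*D)) * L₀
            = L₀ * ((adOp L₀ L₀)^[j] (s₀*D)) - (adOp L₀ L₀)^[j+1] (s₀*D) := by
          rw [Function.iterate_succ_apply']
          simp only [adOp]
          noncomm_ring
        have hrw : (L₀^e * ((adOp L₀ L₀)^[j] (s₀*D))) * L₀
            = L₀^(e+1) * ((adOp L₀ L₀)^[j] (s₀*D)) - L₀^e * ((adOp L₀ L₀)^[j+1] (s₀*D)) := by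
          rw [mul_assoc, hz]
          noncomm_ring
        rw [hrw]
        exact sub_mem (AddSubgroup.subset_closure ⟨e+1, j, rfl⟩)
          (AddSubgroup.subset_closure ⟨e, j+1, rfl⟩)
    | zero => rw [zero_mul]; exact zero_mem _
    | add x y hx hy px py => rw [add_mul]; exact add_mem px py
    | neg x hx px => rw [neg_mul]; exact neg_mem px
  have h1 : ∀ n : ℕ, s₀ * L^n * D ∈ AddSubgroup.closure Sgen := by
    intro n
    induction n with
    | zero =>
        apply AddSubgroup.subset_closure
        exact ⟨0, 0, by simp⟩
    | succ n ih =>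
        have hrw : s₀ * L^(n+1) * D = (s₀ * L^n * D) * L₀ := by
          have h' : L^(n+1) * D = L^n * (D * L₀) := by
            rw [pow_succ, mul_assoc, hLD]
          calc s₀ * L^(n+1) * D = s₀ * (L^(n+1) * D) := by rw [mul_assoc]
          _ = s₀ * (L^n * (D * L₀)) := by rw [h']
          _ = (s₀ * L^n * D) * L₀ := by noncomm_ring
        rw [hrw]
        exact hstab _ ih
  have htrans : ∀ x ∈ AddSubgroup.closure Sgen, ∃ y, x = y * D ∧ y * v ∈ B := by
    intro x hx
    induction hx using AddSubgroup.closure_induction with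
    | mem x hxg =>
        obtain ⟨e, j, rfl⟩ := hxg
        refine ⟨L₀^e * Q j, ?_, ?_⟩
        · rw [hQD j, mul_assoc]
        · rw [mul_assoc]
          exact mul_mem (pow_mem hL₀ e) (hvB j)
    | zero => exact ⟨0, by rw [zero_mul], by rw [zero_mul]; exact zero_mem B⟩
    | add x y hx hy px py =>
        obtain ⟨y₁, hy₁, hy₁B⟩ := px
        obtain ⟨y₂, hy₂, hy₂B⟩ := py
        exact ⟨y₁ + y₂, by rw [hy₁, hy₂, add_mul], by rw [add_mul]; exact add_mem hy₁B hy₂B⟩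
    | neg x hx px =>
        obtain ⟨y₁, hy₁, hy₁B⟩ := px
        exact ⟨-y₁, by rw [hy₁, neg_mul], by rw [neg_mul]; exact neg_mem hy₁B⟩
  have hkey : ∀ n : ℕ, (s₀ * L^n) * v ∈ B := by
    intro n
    obtain ⟨y, hyD, hyv⟩ := htrans _ (h1 n)
    have h' : s₀ * L^n = y := mul_right_cancel₀ hD hyD
    rw [h']
    exact hyv
  set Gset : Set M := {m | ∃ n : ℕ, ∃ u ∈ U₀, m = (L^n * v) • u} with hGset
  refine ⟨hcond2, (AddSubmonoid.closure Gset : Set M), ⟨zero_mem _,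
    fun a ha b hb => add_mem ha hb, ?_⟩, ?_, ?_⟩
  · -- closed under k-scalars
    intro c u hu
    replace hu : u ∈ AddSubmonoid.closure Gset := hu
    induction hu using AddSubmonoid.closure_induction with
    | mem x hxg =>
        obtain ⟨n, u₀, hu₀, rfl⟩ := hxg
        apply AddSubmonoid.subset_closure
        refine ⟨n, algebraMap k A c • u₀, hU₀R _ (R.algebraMap_mem c) u₀ hu₀, ?_⟩
        rw [smul_smul, smul_smul, Algebra.commutes]
    | zero => rw [smul_zero]; exact zero_mem _
    | add x y hx hy px py => rw [smul_add]; exact add_mem px py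
  · -- L-stability
    intro u hu
    replace hu : u ∈ AddSubmonoid.closure Gset := hu
    induction hu using AddSubmonoid.closure_induction with
    | mem x hxg =>
        obtain ⟨n, u₀, hu₀, rfl⟩ := hxg
        apply AddSubmonoid.subset_closure
        refine ⟨n+1, u₀, hu₀, ?_⟩
        rw [smul_smul, ← mul_assoc, ← pow_succ']
    | zero => rw [smul_zero]; exact zero_mem _
    | add x y hx hy px py => rw [smul_add]; exact add_mem px py
  · -- the witness s = s₀ * v
    refine ⟨s₀ * v, hSmul s₀ hs₀S v hvS, ?_, ?_⟩
    · intro u hu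
      apply AddSubmonoid.subset_closure
      refine ⟨0, s₀ • u, hU₀R s₀ (hSR hs₀S) u hu, ?_⟩
      rw [smul_smul, pow_zero, one_mul, hRcomm s₀ (hSR hs₀S) v (hSR hvS)]
    · intro x hx
      replace hx : x ∈ AddSubmonoid.closure Gset := hx
      induction hx using AddSubmonoid.closure_induction with
      | mem x hxg =>
          obtain ⟨n, u₀, hu₀, rfl⟩ := hxg
          rw [smul_smul]
          have hrw : (s₀ * v) * (L^n * v) = v * ((s₀ * L^n) * v) := by
            rw [hRcomm s₀ (hSR hs₀S) v (hSR hvS)]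
            noncomm_ring
          rw [hrw]
          exact (hB _).mp (mul_mem (hSB v hvS) (hkey n)) u₀ hu₀
      | zero => rw [smul_zero]; exact hU₀0
      | add x y hx hy px py => rw [smul_add]; exact hU₀add _ px _ py
end

section
/- Assume the Setup. Let U ⊆ M be a k-subspace for which there exists s ∈ S with s·U₀ ⊆ U and s·U ⊆ U₀. If L₁, L₂ ∈ A both satisfy condition (2) and both satisfy L₁·U ⊆ U and L₂·U ⊆ U, then L₁ = L₂. -/
section AdHelpers
variable {A : Type*} [Ring A] (L₀ : A)

/-- `adOp L₀ L₀` as an additive endomorphism. -/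
def adE : AddMonoid.End A :=
  AddMonoidHom.mk' (adOp L₀ L₀) (fun x y => by
    simp only [adOp, mul_add, add_mul]; abel)

@[simp] lemma adE_apply (x : A) : adE L₀ x = L₀ * x - x * L₀ := rfl

lemma adE_pow_apply (n : ℕ) (x : A) : (adE L₀ ^ n) x = (adOp L₀ L₀)^[n] x := by
  induction n generalizing x with
  | zero => rfl
  | succ n ih =>
    rw [pow_succ]
    show (adE L₀ ^ n) (adE L₀ x) = _
    rw [ih, Function.iterate_succ_apply]
    rfl

lemma degAd_eq_sInf (b : A) :
    degAd L₀ b = sInf {n : ℕ | (adE L₀ ^ (n + 1)) b = 0} := by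
  simp only [degAd, adE_pow_apply]

lemma adE_mul (a b : A) : adE L₀ (a * b) = adE L₀ a * b + a * adE L₀ b := by
  simp only [adE_apply, sub_mul, mul_sub, mul_assoc]
  abel

lemma adE_leibniz (x y : A) (n : ℕ) :
    (adE L₀ ^ n) (x * y)
      = ∑ i ∈ Finset.range (n + 1),
          n.choose i • ((adE L₀ ^ i) x * (adE L₀ ^ (n - i)) y) := by
  induction n with
  | zero => simp
  | succ n ih =>
    have hmul : ∀ (f g : AddMonoid.End A) (z : A), (f * g) z = f (g z) := fun _ _ _ => rfl
    rw [pow_succ', hmul, ih, map_sum]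
    have step : ∀ i ∈ Finset.range (n + 1),
        adE L₀ (n.choose i • ((adE L₀ ^ i) x * (adE L₀ ^ (n - i)) y))
          = n.choose i • ((adE L₀ ^ (i+1)) x * (adE L₀ ^ (n + 1 - (i+1))) y)
            + n.choose i • ((adE L₀ ^ i) x * (adE L₀ ^ (n + 1 - i)) y) := by
      intro i hi
      rw [Finset.mem_range] at hi
      have h1 : n + 1 - (i + 1) = n - i := by omega
      have h2 : n + 1 - i = (n - i) + 1 := by omega
      rw [map_nsmul, adE_mul, h1, h2, pow_succ', pow_succ', hmul, hmul, smul_add]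
    rw [Finset.sum_congr rfl step, Finset.sum_add_distrib]
    -- now combine
    rw [Finset.sum_range_succ' (fun j => (n+1).choose j • ((adE L₀ ^ j) x * (adE L₀ ^ (n + 1 - j)) y)) (n+1)]
    have hA : ∑ i ∈ Finset.range (n + 1),
        (n+1).choose (i+1) • ((adE L₀ ^ (i+1)) x * (adE L₀ ^ (n + 1 - (i+1))) y)
        = ∑ i ∈ Finset.range (n + 1),
            (n.choose i • ((adE L₀ ^ (i+1)) x * (adE L₀ ^ (n + 1 - (i+1))) y)
             + n.choose (i+1) • ((adE L₀ ^ (i+1)) x * (adE L₀ ^ (n + 1 - (i+1))) y)) := by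
      refine Finset.sum_congr rfl fun i _ => ?_
      rw [Nat.choose_succ_succ, add_smul]
    rw [hA, Finset.sum_add_distrib]
    have hB : ∑ i ∈ Finset.range (n + 1),
        n.choose (i+1) • ((adE L₀ ^ (i+1)) x * (adE L₀ ^ (n + 1 - (i+1))) y)
        + (n+1).choose 0 • ((adE L₀ ^ 0) x * (adE L₀ ^ (n + 1 - 0)) y)
        = ∑ i ∈ Finset.range (n + 1),
            n.choose i • ((adE L₀ ^ i) x * (adE L₀ ^ (n + 1 - i)) y) := by
      rw [Finset.sum_range_succ (fun i => n.choose (i+1) • ((adE L₀ ^ (i+1)) x * (adE L₀ ^ (n + 1 - (i+1))) y)) n]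
      simp only [Nat.choose_succ_self, zero_smul, add_zero, Nat.choose_zero_right, one_smul]
      rw [Finset.sum_range_succ' (fun i => n.choose i • ((adE L₀ ^ i) x * (adE L₀ ^ (n + 1 - i)) y)) n]
      simp
    rw [add_assoc, hB]

lemma adE_pow_vanish_of_le {p q : ℕ} {b : A} (h : (adE L₀ ^ p) b = 0) (hpq : p ≤ q) :
    (adE L₀ ^ q) b = 0 := by
  obtain ⟨r, rfl⟩ := Nat.exists_eq_add_of_le hpq
  rw [add_comm, pow_add]
  show (adE L₀ ^ r) ((adE L₀ ^ p) b) = 0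
  rw [h, map_zero]

lemma degAd_vanish {b : A} (h : ∃ m, (adE L₀ ^ (m + 1)) b = 0) :
    (adE L₀ ^ (degAd L₀ b + 1)) b = 0 := by
  rw [degAd_eq_sInf]
  exact Nat.sInf_mem (h.imp fun m hm => hm)

lemma degAd_apply_ne {b : A} (hb : b ≠ 0) : (adE L₀ ^ degAd L₀ b) b ≠ 0 := by
  rcases hd : degAd L₀ b with _ | m
  · simpa using hb
  · have hlt : m < sInf {n : ℕ | (adE L₀ ^ (n + 1)) b = 0} := by
      rw [← degAd_eq_sInf, hd]; omega
    exact Nat.notMem_of_lt_sInf hlt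

lemma degAd_le {b : A} {n : ℕ} (h : (adE L₀ ^ (n + 1)) b = 0) : degAd L₀ b ≤ n := by
  rw [degAd_eq_sInf]; exact Nat.sInf_le h

lemma degAd_eq_of {b : A} {m : ℕ} (h1 : (adE L₀ ^ (m + 1)) b = 0)
    (h2 : (adE L₀ ^ m) b ≠ 0) : degAd L₀ b = m := by
  refine le_antisymm (degAd_le L₀ h1) ?_
  by_contra hlt
  exact h2 (adE_pow_vanish_of_le L₀ (degAd_vanish L₀ ⟨m, h1⟩) (by omega))

lemma degAd_neg (b : A) : degAd L₀ (-b) = degAd L₀ b := by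
  rw [degAd_eq_sInf, degAd_eq_sInf]
  congr 1
  ext n
  show (adE L₀ ^ (n+1)) (-b) = 0 ↔ (adE L₀ ^ (n+1)) b = 0
  rw [map_neg, neg_eq_zero]

lemma degAd_mul {k : Type*} [Field k] [CharZero k] [IsDomain A] [Algebra k A]
    {x y : A} (hx : x ≠ 0) (hy : y ≠ 0)
    (hnx : (adE L₀ ^ (degAd L₀ x + 1)) x = 0)
    (hny : (adE L₀ ^ (degAd L₀ y + 1)) y = 0) :
    (adE L₀ ^ (degAd L₀ x + degAd L₀ y + 1)) (x * y) = 0 ∧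
      degAd L₀ (x * y) = degAd L₀ x + degAd L₀ y := by
  haveI : CharZero A := charZero_of_injective_algebraMap (algebraMap k A).injective
  set dx := degAd L₀ x
  set dy := degAd L₀ y
  have hvan : (adE L₀ ^ (dx + dy + 1)) (x * y) = 0 := by
    rw [adE_leibniz]
    refine Finset.sum_eq_zero fun i hi => ?_
    rw [Finset.mem_range] at hi
    rcases le_or_gt i dx with h | h
    · have : (adE L₀ ^ (dx + dy + 1 - i)) y = 0 :=
        adE_pow_vanish_of_le L₀ hny (by omega)
      rw [this, mul_zero, smul_zero]
    · have : (adE L₀ ^ i) x = 0 := adE_pow_vanish_of_le L₀ hnx (by omega)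
      rw [this, zero_mul, smul_zero]
  refine ⟨hvan, degAd_eq_of L₀ hvan ?_⟩
  rw [adE_leibniz]
  have hsingle : ∑ i ∈ Finset.range (dx + dy + 1),
      (dx + dy).choose i • ((adE L₀ ^ i) x * (adE L₀ ^ (dx + dy - i)) y)
      = (dx + dy).choose dx • ((adE L₀ ^ dx) x * (adE L₀ ^ dy) y) := by
    rw [Finset.sum_eq_single dx]
    · have h : dx + dy - dx = dy := by omega
      rw [h]
    · intro i hi hne
      rw [Finset.mem_range] at hi
      rcases lt_or_gt_of_ne hne with h | h
      · have : (adE L₀ ^ (dx + dy - i)) y = 0 :=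
          adE_pow_vanish_of_le L₀ hny (by omega)
        rw [this, mul_zero, smul_zero]
      · have : (adE L₀ ^ i) x = 0 := adE_pow_vanish_of_le L₀ hnx (by omega)
        rw [this, zero_mul, smul_zero]
    · intro h
      exact absurd (Finset.mem_range.mpr (by omega)) h
  have hprod : (adE L₀ ^ dx) x * (adE L₀ ^ dy) y ≠ 0 :=
    mul_ne_zero (degAd_apply_ne L₀ hx) (degAd_apply_ne L₀ hy)
  have hc : (((dx + dy).choose dx : ℕ) : A) ≠ 0 :=
    Nat.cast_ne_zero.mpr (Nat.choose_pos (Nat.le_add_right dx dy)).ne'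
  rw [hsingle, nsmul_eq_mul]
  exact mul_ne_zero hc hprod

end AdHelpers

/-- Uniqueness claim of Theorem 4.4: given a `k`-subspace `U` satisfying condition (1b),
there is at most one operator satisfying conditions (1a) and (2). -/
theorem stmt6
    {k A M : Type*} [Field k] [CharZero k] [Ring A] [IsDomain A] [Algebra k A]
    [AddCommGroup M] [Module A M]
    (B R : Subalgebra k A) (hRB : R ≤ B)
    (hRcomm : ∀ x ∈ R, ∀ y ∈ R, x * y = y * x)
    (S : Set A) (hSR : S ⊆ (R : Set A)) (hS0 : (0 : A) ∉ S) (hS1 : (1 : A) ∈ S)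
    (hSmul : ∀ s ∈ S, ∀ t ∈ S, s * t ∈ S)
    (hSunit : ∀ s ∈ S, IsUnit s)
    (hleft : ∀ a : A, ∃ s ∈ S, s * a ∈ B)
    (hright : ∀ a : A, ∃ s ∈ S, a * s ∈ B)
    (U₀ : Set M) (hU₀0 : (0 : M) ∈ U₀)
    (hU₀add : ∀ u ∈ U₀, ∀ v ∈ U₀, u + v ∈ U₀)
    (hU₀neg : ∀ u ∈ U₀, -u ∈ U₀)
    (hU₀R : ∀ r ∈ (R : Set A), ∀ u ∈ U₀, r • u ∈ U₀)
    (hB : ∀ a : A, a ∈ B ↔ ∀ u ∈ U₀, a • u ∈ U₀)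
    (L₀ : A) (hL₀ : L₀ ∈ B)
    (hnil : ∀ b ∈ B, ∃ n : ℕ, (adOp L₀ L₀)^[n] b = 0)
    (U : Set M) (hU : isSubspace k A U)
    (s : A) (hs : s ∈ S)
    (hsU₀ : ∀ u ∈ U₀, s • u ∈ U) (hsU : ∀ u ∈ U, s • u ∈ U₀)
    (L₁ L₂ : A) (h₁ : cond2 B S L₀ L₁) (h₂ : cond2 B S L₀ L₂)
    (hL₁U : ∀ u ∈ U, L₁ • u ∈ U) (hL₂U : ∀ u ∈ U, L₂ • u ∈ U) :
    L₁ = L₂ := by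
  by_contra hne
  obtain ⟨hU0, hUadd, hUsmul⟩ := hU
  -- basic facts
  have hSB : ∀ x ∈ S, x ∈ B := fun x hx => hRB (hSR hx)
  have hSne : ∀ x ∈ S, x ≠ (0 : A) := fun x hx h0 => hS0 (h0 ▸ hx)
  have hnil' : ∀ b ∈ B, (adE L₀ ^ (degAd L₀ b + 1)) b = 0 := by
    intro b hb
    obtain ⟨n, hn⟩ := hnil b hb
    refine degAd_vanish L₀ ?_
    rcases n with _ | m
    · simp only [Function.iterate_zero, id_eq] at hn
      exact ⟨0, by rw [hn, map_zero]⟩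
    · exact ⟨m, by rw [adE_pow_apply]; exact hn⟩
  have hmulB : ∀ x y : A, x ∈ B → y ∈ B → x ≠ 0 → y ≠ 0 →
      degAd L₀ (x * y) = degAd L₀ x + degAd L₀ y := fun x y hxB hyB hx hy =>
    (degAd_mul (k := k) L₀ hx hy (hnil' x hxB) (hnil' y hyB)).2
  have hUneg : ∀ u ∈ U, -u ∈ U := fun u hu => by
    have h := hUsmul (-1) u hu
    rwa [map_neg, map_one, neg_smul, one_smul] at h
  set D := L₁ - L₂ with hDdef
  have hD : D ≠ 0 := sub_ne_zero.mpr hne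
  have hDU : ∀ u ∈ U, D • u ∈ U := fun u hu => by
    rw [hDdef, sub_smul, sub_eq_add_neg]
    exact hUadd _ (hL₁U u hu) _ (hUneg _ (hL₂U u hu))
  have hDnU : ∀ n : ℕ, ∀ u ∈ U, (D ^ n) • u ∈ U := by
    intro n
    induction n with
    | zero => intro u hu; simpa using hu
    | succ n ih =>
      intro u hu
      rw [pow_succ, mul_smul]
      exact ih _ (hDU u hu)
  have hsandwich : ∀ n : ℕ, s * D ^ n * s ∈ B := fun n => (hB _).mpr fun u hu => by
    rw [mul_smul, mul_smul]
    exact hsU _ (hDnU n _ (hsU₀ u hu))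
  -- step 4: a left denominator for D with degree drop
  have key : ∃ t ∈ S, t * D ∈ B ∧ degAd L₀ (t * D) < degAd L₀ t := by
    rcases h₁ with h₁ | ⟨s₁, hs₁, hb₁, hb₁0, hd₁⟩
    · rcases h₂ with h₂ | ⟨s₂, hs₂, hb₂, hb₂0, hd₂⟩
      · exact absurd (h₁.trans h₂.symm) hne
      · have he : s₂ * D = -(s₂ * (L₂ - L₀)) := by
          rw [hDdef, h₁, ← neg_sub L₂ L₀, mul_neg]
        exact ⟨s₂, hs₂, by rw [he]; exact neg_mem hb₂, by rw [he, degAd_neg]; exact hd₂⟩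
    · rcases h₂ with h₂ | ⟨s₂, hs₂, hb₂, hb₂0, hd₂⟩
      · have he : s₁ * D = s₁ * (L₁ - L₀) := by rw [hDdef, h₂]
        exact ⟨s₁, hs₁, by rw [he]; exact hb₁, by rw [he]; exact hd₁⟩
      · have hcomm : s₁ * s₂ = s₂ * s₁ := hRcomm _ (hSR hs₁) _ (hSR hs₂)
        have hsplit : (s₁ * s₂) * D = s₂ * (s₁ * (L₁ - L₀)) - s₁ * (s₂ * (L₂ - L₀)) := by
          rw [hDdef, show L₁ - L₂ = (L₁ - L₀) - (L₂ - L₀) from by abel, mul_sub]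
          congr 1
          · rw [hcomm, mul_assoc]
          · rw [mul_assoc]
        have hmemB : (s₁ * s₂) * D ∈ B := by
          rw [hsplit]
          exact sub_mem (mul_mem (hSB _ hs₂) hb₁) (mul_mem (hSB _ hs₁) hb₂)
        have hd12 : degAd L₀ (s₁ * s₂) = degAd L₀ s₁ + degAd L₀ s₂ :=
          hmulB _ _ (hSB _ hs₁) (hSB _ hs₂) (hSne _ hs₁) (hSne _ hs₂)
        have hdt₁ : degAd L₀ (s₂ * (s₁ * (L₁ - L₀))) = degAd L₀ s₂ + degAd L₀ (s₁ * (L₁ - L₀)) :=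
          hmulB _ _ (hSB _ hs₂) hb₁ (hSne _ hs₂) hb₁0
        have hdt₂ : degAd L₀ (s₁ * (s₂ * (L₂ - L₀))) = degAd L₀ s₁ + degAd L₀ (s₂ * (L₂ - L₀)) :=
          hmulB _ _ (hSB _ hs₁) hb₂ (hSne _ hs₁) hb₂0
        have hv₁ : (adE L₀ ^ degAd L₀ (s₁ * s₂)) (s₂ * (s₁ * (L₁ - L₀))) = 0 :=
          adE_pow_vanish_of_le L₀
            (hnil' _ (mul_mem (hSB _ hs₂) hb₁)) (by omega)
        have hv₂ : (adE L₀ ^ degAd L₀ (s₁ * s₂)) (s₁ * (s₂ * (L₂ - L₀))) = 0 :=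
          adE_pow_vanish_of_le L₀
            (hnil' _ (mul_mem (hSB _ hs₁) hb₂)) (by omega)
        have hvD : (adE L₀ ^ degAd L₀ (s₁ * s₂)) ((s₁ * s₂) * D) = 0 := by
          rw [hsplit, map_sub, hv₁, hv₂, sub_zero]
        have hle : degAd L₀ ((s₁ * s₂) * D) ≤ degAd L₀ (s₁ * s₂) - 1 :=
          degAd_le L₀ (by rw [show degAd L₀ (s₁ * s₂) - 1 + 1 = degAd L₀ (s₁ * s₂) from by omega]; exact hvD)
        exact ⟨s₁ * s₂, hSmul _ hs₁ _ hs₂, hmemB, by omega⟩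
  obtain ⟨t, htS, htDB, htDd⟩ := key
  -- step 5: a right denominator with degree drop
  obtain ⟨t', ht'S, ht'B⟩ := hright D
  have hDt'0 : D * t' ≠ 0 := mul_ne_zero hD (hSne _ ht'S)
  have htD0 : t * D ≠ 0 := mul_ne_zero (hSne _ htS) hD
  have he5 : degAd L₀ t + degAd L₀ (D * t') = degAd L₀ (t * D) + degAd L₀ t' := by
    rw [← hmulB t (D * t') (hSB _ htS) ht'B (hSne _ htS) hDt'0,
      ← hmulB (t * D) t' htDB (hSB _ ht'S) htD0 (hSne _ ht'S), ← mul_assoc]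
  have hdt' : degAd L₀ (D * t') + 1 ≤ degAd L₀ t' := by omega
  -- step 6: induction
  have main : ∀ n : ℕ, ∃ p ∈ S, p * D ^ n ∈ B ∧ degAd L₀ (p * D ^ n) + n ≤ degAd L₀ p := by
    intro n
    induction n with
    | zero => exact ⟨1, hS1, by simpa using one_mem B, by simp⟩
    | succ n ih =>
      obtain ⟨p, hpS, hpB, hpd⟩ := ih
      obtain ⟨u, huS, huB⟩ := hleft (D ^ (n + 1))
      refine ⟨u, huS, huB, ?_⟩
      have hpu : p * u = u * p := hRcomm _ (hSR hpS) _ (hSR huS)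
      have hDn0 : D ^ n ≠ 0 := pow_ne_zero _ hD
      have hDn10 : D ^ (n + 1) ≠ 0 := pow_ne_zero _ hD
      have hpDn0 : p * D ^ n ≠ 0 := mul_ne_zero (hSne _ hpS) hDn0
      have huDn0 : u * D ^ (n + 1) ≠ 0 := mul_ne_zero (hSne _ huS) hDn10
      have heq : p * (u * D ^ (n + 1)) * t' = u * ((p * D ^ n) * (D * t')) := by
        simp only [pow_succ, mul_assoc]
        rw [← mul_assoc p u, hpu, mul_assoc]
      have dL : degAd L₀ (p * (u * D ^ (n + 1)) * t')
          = degAd L₀ p + degAd L₀ (u * D ^ (n + 1)) + degAd L₀ t' := by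
        rw [hmulB _ t' (mul_mem (hSB _ hpS) huB) (hSB _ ht'S)
            (mul_ne_zero (hSne _ hpS) huDn0) (hSne _ ht'S),
          hmulB p _ (hSB _ hpS) huB (hSne _ hpS) huDn0]
      have dR : degAd L₀ (u * ((p * D ^ n) * (D * t')))
          = degAd L₀ u + (degAd L₀ (p * D ^ n) + degAd L₀ (D * t')) := by
        rw [hmulB u _ (hSB _ huS) (mul_mem hpB ht'B) (hSne _ huS)
            (mul_ne_zero hpDn0 hDt'0),
          hmulB _ _ hpB ht'B hpDn0 hDt'0]
      have hE : degAd L₀ p + degAd L₀ (u * D ^ (n + 1)) + degAd L₀ t'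
          = degAd L₀ u + (degAd L₀ (p * D ^ n) + degAd L₀ (D * t')) := by
        rw [← dL, ← dR, heq]
      omega
  -- step 7: contradiction
  obtain ⟨p, hpS, hpB, hpd⟩ := main (2 * degAd L₀ s + 1)
  set n := 2 * degAd L₀ s + 1 with hn
  have hps : p * s = s * p := hRcomm _ (hSR hpS) _ (hSR hs)
  have hDn0 : D ^ n ≠ 0 := pow_ne_zero _ hD
  have hpDn0 : p * D ^ n ≠ 0 := mul_ne_zero (hSne _ hpS) hDn0
  have hsDns0 : s * D ^ n * s ≠ 0 := mul_ne_zero (mul_ne_zero (hSne _ hs) hDn0) (hSne _ hs)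
  have heq : p * (s * D ^ n * s) = s * (p * D ^ n) * s := by
    simp only [mul_assoc]
    rw [← mul_assoc p s, hps, mul_assoc]
  have dL : degAd L₀ (p * (s * D ^ n * s)) = degAd L₀ p + degAd L₀ (s * D ^ n * s) :=
    hmulB _ _ (hSB _ hpS) (hsandwich n) (hSne _ hpS) hsDns0
  have dR : degAd L₀ (s * (p * D ^ n) * s)
      = degAd L₀ s + degAd L₀ (p * D ^ n) + degAd L₀ s := by
    rw [hmulB _ s (mul_mem (hSB _ hs) hpB) (hSB _ hs)
        (mul_ne_zero (hSne _ hs) hpDn0) (hSne _ hs),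
      hmulB s _ (hSB _ hs) hpB (hSne _ hs) hpDn0]
  have hE : degAd L₀ p + degAd L₀ (s * D ^ n * s)
      = degAd L₀ s + degAd L₀ (p * D ^ n) + degAd L₀ s := by
    rw [← dL, ← dR, heq]
  omega
end

section
/- Assume the Setup. Let L ∈ A satisfy condition (2) and let U ⊆ M be a k-subspace satisfying condition (1) for L with witness s ∈ S. Define 𝓜 := {a ∈ A : a·U₀ ⊆ U}. Then: (i) s·B ⊆ 𝓜, and s·a ∈ B for every a ∈ 𝓜; (ii) the operator ad_{L,L₀} maps 𝓜 into 𝓜 and acts locally nilpotently on 𝓜, i.e. for every a ∈ 𝓜 there is N ≥ 0 with ad_{L,L₀}^{N}(a) = 0. -/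
namespace Stmt7Aux

variable {A : Type*} [Ring A]

lemma ad_add (L₀ x y : A) : adOp L₀ L₀ (x + y) = adOp L₀ L₀ x + adOp L₀ L₀ y := by
  simp only [adOp]; noncomm_ring

lemma ad_zero (L₀ : A) : adOp L₀ L₀ 0 = 0 := by simp [adOp]

lemma ad_neg (L₀ x : A) : adOp L₀ L₀ (-x) = -adOp L₀ L₀ x := by simp only [adOp]; noncomm_ring

lemma ad_nsmul (L₀ : A) (n : ℕ) (x : A) : adOp L₀ L₀ (n • x) = n • adOp L₀ L₀ x := by
  simp only [adOp, nsmul_eq_mul, mul_sub, sub_mul]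
  rw [← mul_assoc L₀, ← (Nat.cast_commute n L₀).eq, mul_assoc, mul_assoc]

lemma ad_mul (L₀ x y : A) :
    adOp L₀ L₀ (x * y) = adOp L₀ L₀ x * y + x * adOp L₀ L₀ y := by
  simp only [adOp]; noncomm_ring

lemma it_add (L₀ : A) (n : ℕ) (x y : A) :
    (adOp L₀ L₀)^[n] (x + y) = (adOp L₀ L₀)^[n] x + (adOp L₀ L₀)^[n] y := by
  induction n generalizing x y with
  | zero => simp
  | succ n ih =>
    simp only [Function.iterate_succ_apply, ad_add, ih]

lemma it_zero (L₀ : A) (n : ℕ) : (adOp L₀ L₀)^[n] (0 : A) = 0 :=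
  Function.iterate_fixed (ad_zero L₀) n

lemma it_neg (L₀ : A) (n : ℕ) (x : A) :
    (adOp L₀ L₀)^[n] (-x) = -(adOp L₀ L₀)^[n] x := by
  induction n generalizing x with
  | zero => simp
  | succ n ih => simp only [Function.iterate_succ_apply, ad_neg, ih]

lemma it_nsmul (L₀ : A) (n m : ℕ) (x : A) :
    (adOp L₀ L₀)^[n] (m • x) = m • (adOp L₀ L₀)^[n] x := by
  induction n generalizing x with
  | zero => simp
  | succ n ih => simp only [Function.iterate_succ_apply, ad_nsmul, ih]

lemma it_sum (L₀ : A) (n : ℕ) {ι : Type*} (t : Finset ι) (f : ι → A) :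
    (adOp L₀ L₀)^[n] (∑ i ∈ t, f i) = ∑ i ∈ t, (adOp L₀ L₀)^[n] (f i) := by
  classical
  induction t using Finset.induction with
  | empty => simp [it_zero]
  | @insert _ _ h ih => rw [Finset.sum_insert h, Finset.sum_insert h, it_add, ih]

lemma leibniz (L₀ x y : A) (n : ℕ) :
    (adOp L₀ L₀)^[n] (x * y)
      = ∑ i ∈ Finset.range (n + 1),
          n.choose i • ((adOp L₀ L₀)^[i] x * (adOp L₀ L₀)^[n - i] y) := by
  induction n with
  | zero => simp
  | succ n ih =>
    rw [Function.iterate_succ_apply', ih, show (adOp L₀ L₀)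
        (∑ i ∈ Finset.range (n + 1),
          n.choose i • ((adOp L₀ L₀)^[i] x * (adOp L₀ L₀)^[n - i] y))
      = ∑ i ∈ Finset.range (n + 1),
          (adOp L₀ L₀) (n.choose i • ((adOp L₀ L₀)^[i] x * (adOp L₀ L₀)^[n - i] y)) from
        (it_sum L₀ 1 _ _ : _)]
    simp only [ad_nsmul, ad_mul, smul_add, ← Function.iterate_succ_apply' (adOp L₀ L₀)]
    rw [Finset.sum_add_distrib]
    -- goal : Σ_{i<n+1} C(n,i)•(f(i+1) g(n-i)) + Σ_{i<n+1} C(n,i)•(f i g(n-i+1))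
    --       = Σ_{i<n+2} C(n+1,i)•(f i g(n+1-i))
    rw [Finset.sum_range_succ' (fun i => (n+1).choose i •
        ((adOp L₀ L₀)^[i] x * (adOp L₀ L₀)^[n + 1 - i] y)) (n+1)]
    rw [Finset.sum_range_succ' (fun i => n.choose i •
        ((adOp L₀ L₀)^[i] x * (adOp L₀ L₀)^[n - i + 1] y)) n]
    have hresplit : ∀ i ∈ Finset.range (n + 1),
        (n+1).choose (i+1) • ((adOp L₀ L₀)^[i+1] x * (adOp L₀ L₀)^[n + 1 - (i+1)] y)
        = n.choose i • ((adOp L₀ L₀)^[i+1] x * (adOp L₀ L₀)^[n - i] y)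
          + n.choose (i+1) • ((adOp L₀ L₀)^[i+1] x * (adOp L₀ L₀)^[n - i] y) := by
      intro i hi
      rw [Nat.succ_sub_succ, Nat.choose_succ_succ, add_smul]
    rw [Finset.sum_congr rfl hresplit, Finset.sum_add_distrib]
    have h2 : ∑ i ∈ Finset.range (n+1),
        n.choose (i+1) • ((adOp L₀ L₀)^[i+1] x * (adOp L₀ L₀)^[n - i] y)
        = ∑ i ∈ Finset.range n,
        n.choose (i+1) • ((adOp L₀ L₀)^[i+1] x * (adOp L₀ L₀)^[n - (i+1) + 1] y) := by
      rw [Finset.sum_range_succ]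
      simp only [Nat.choose_succ_self, zero_smul, add_zero]
      apply Finset.sum_congr rfl
      intro i hi
      rw [Finset.mem_range] at hi
      congr 3
      omega
    rw [h2]
    simp only [Nat.choose_zero_right, Nat.sub_zero, Function.iterate_zero_apply, one_smul,
      Nat.succ_eq_add_one]
    abel

noncomputable def dd (L₀ x : A) : ℕ := sInf {n : ℕ | (adOp L₀ L₀)^[n] x = 0}

lemma it_vanish (L₀ : A) {x : A} {n m : ℕ} (h : (adOp L₀ L₀)^[n] x = 0) (hnm : n ≤ m) :
    (adOp L₀ L₀)^[m] x = 0 := by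
  obtain ⟨c, rfl⟩ := Nat.exists_eq_add_of_le hnm
  rw [add_comm, Function.iterate_add_apply, h, it_zero]

lemma dd_spec {L₀ x : A} (h : ∃ n, (adOp L₀ L₀)^[n] x = 0) :
    (adOp L₀ L₀)^[dd L₀ x] x = 0 := Nat.sInf_mem h

lemma dd_le {L₀ x : A} {n : ℕ} (h : (adOp L₀ L₀)^[n] x = 0) : dd L₀ x ≤ n := Nat.sInf_le h

lemma dd_lt_ne {L₀ x : A} {m : ℕ} (hm : m < dd L₀ x) : (adOp L₀ L₀)^[m] x ≠ 0 :=
  fun h => absurd (dd_le h) (by omega)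

lemma dd_pos {L₀ x : A} (hN : ∃ n, (adOp L₀ L₀)^[n] x = 0) (hx : x ≠ 0) : 1 ≤ dd L₀ x := by
  rcases Nat.eq_zero_or_pos (dd L₀ x) with h | h
  · exact absurd (by simpa [h] using dd_spec hN) hx
  · exact h

lemma dd_gt {L₀ x : A} {m : ℕ} (hN : ∃ n, (adOp L₀ L₀)^[n] x = 0)
    (h : (adOp L₀ L₀)^[m] x ≠ 0) : m < dd L₀ x := by
  by_contra hc
  exact h (it_vanish L₀ (dd_spec hN) (by omega))

lemma dd_neg (L₀ x : A) : dd L₀ (-x) = dd L₀ x := by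
  unfold dd
  congr 1
  ext n
  simp [it_neg]

lemma nil_neg {L₀ x : A} (h : ∃ n, (adOp L₀ L₀)^[n] x = 0) :
    ∃ n, (adOp L₀ L₀)^[n] (-x) = 0 := by
  obtain ⟨n, hn⟩ := h
  exact ⟨n, by rw [it_neg, hn, neg_zero]⟩

lemma dd_one [Nontrivial A] (L₀ : A) : dd L₀ (1 : A) = 1 := by
  have h1 : (adOp L₀ L₀)^[1] (1 : A) = 0 := by simp [adOp]
  have := dd_le h1
  have := dd_pos ⟨1, h1⟩ (one_ne_zero (α := A))
  omega

section Domain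
variable [IsDomain A] [CharZero A]

lemma dd_mul (L₀ : A) {x y : A} (hx : x ≠ 0) (hy : y ≠ 0)
    (hnx : ∃ n, (adOp L₀ L₀)^[n] x = 0) (hny : ∃ n, (adOp L₀ L₀)^[n] y = 0) :
    (∃ n, (adOp L₀ L₀)^[n] (x * y) = 0) ∧ dd L₀ (x * y) + 1 = dd L₀ x + dd L₀ y := by
  obtain ⟨p, hp⟩ : ∃ p, dd L₀ x = p + 1 := ⟨dd L₀ x - 1, by have := dd_pos hnx hx; omega⟩
  obtain ⟨q, hq⟩ : ∃ q, dd L₀ y = q + 1 := ⟨dd L₀ y - 1, by have := dd_pos hny hy; omega⟩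
  have hx1 : (adOp L₀ L₀)^[p + 1] x = 0 := hp ▸ dd_spec hnx
  have hy1 : (adOp L₀ L₀)^[q + 1] y = 0 := hq ▸ dd_spec hny
  have hx0 : (adOp L₀ L₀)^[p] x ≠ 0 := dd_lt_ne (by omega)
  have hy0 : (adOp L₀ L₀)^[q] y ≠ 0 := dd_lt_ne (by omega)
  have hzero : (adOp L₀ L₀)^[p + q + 1] (x * y) = 0 := by
    rw [leibniz]
    apply Finset.sum_eq_zero
    intro i hi
    rw [Finset.mem_range] at hi
    rcases le_or_gt (p + 1) i with h | h
    · rw [it_vanish L₀ hx1 h, zero_mul, smul_zero]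
    · rw [it_vanish L₀ hy1 (by omega), mul_zero, smul_zero]
  have hnonzero : (adOp L₀ L₀)^[p + q] (x * y) ≠ 0 := by
    rw [leibniz]
    rw [Finset.sum_eq_single p]
    · have hc : ((p + q).choose p : A) ≠ 0 :=
        Nat.cast_ne_zero.mpr (Nat.choose_pos (by omega)).ne'
      have : (p + q).choose p • ((adOp L₀ L₀)^[p] x * (adOp L₀ L₀)^[p + q - p] y)
          = ((p + q).choose p : A) * ((adOp L₀ L₀)^[p] x * (adOp L₀ L₀)^[q] y) := by
        rw [nsmul_eq_mul]
        congr 3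
        omega
      rw [this]
      exact mul_ne_zero hc (mul_ne_zero hx0 (by simpa using hy0))
    · intro i hi hne
      rw [Finset.mem_range] at hi
      rcases lt_or_gt_of_ne hne with h | h
      · rw [it_vanish L₀ hy1 (by omega), mul_zero, smul_zero]
      · rw [it_vanish L₀ hx1 (by omega), zero_mul, smul_zero]
    · intro h
      exact absurd (Finset.mem_range.mpr (by omega)) h
  constructor
  · exact ⟨p + q + 1, hzero⟩
  · have h1 := dd_le hzero
    have h2 := dd_gt ⟨p + q + 1, hzero⟩ hnonzero
    omega

omit [IsDomain A] [CharZero A] in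
lemma dd_add (L₀ : A) {x y : A}
    (hnx : ∃ n, (adOp L₀ L₀)^[n] x = 0) (hny : ∃ n, (adOp L₀ L₀)^[n] y = 0) :
    (∃ n, (adOp L₀ L₀)^[n] (x + y) = 0) ∧ dd L₀ (x + y) ≤ max (dd L₀ x) (dd L₀ y) := by
  have h : (adOp L₀ L₀)^[max (dd L₀ x) (dd L₀ y)] (x + y) = 0 := by
    rw [it_add, it_vanish L₀ (dd_spec hnx) (le_max_left _ _),
      it_vanish L₀ (dd_spec hny) (le_max_right _ _), add_zero]
  exact ⟨⟨_, h⟩, dd_le h⟩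

end Domain

lemma degAd_eq [Nontrivial A] {L₀ x : A} (hN : ∃ n, (adOp L₀ L₀)^[n] x = 0) (hx : x ≠ 0) :
    degAd L₀ x + 1 = dd L₀ x := by
  obtain ⟨p, hp⟩ : ∃ p, dd L₀ x = p + 1 := ⟨dd L₀ x - 1, by have := dd_pos hN hx; omega⟩
  have hmem : p ∈ {n : ℕ | (adOp L₀ L₀)^[n + 1] x = 0} := by
    have h := dd_spec hN
    rw [hp] at h
    exact h
  have hle : degAd L₀ x ≤ p := Nat.sInf_le hmem
  have hmem2 : (adOp L₀ L₀)^[degAd L₀ x + 1] x = 0 := Nat.sInf_mem ⟨p, hmem⟩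
  have := dd_le hmem2
  omega

lemma dd_D_lt {L₀ x : A} (hN : ∃ n, (adOp L₀ L₀)^[n] x = 0) (hx : x ≠ 0) :
    dd L₀ (adOp L₀ L₀ x) < dd L₀ x := by
  obtain ⟨p, hp⟩ : ∃ p, dd L₀ x = p + 1 := ⟨dd L₀ x - 1, by have := dd_pos hN hx; omega⟩
  have : (adOp L₀ L₀)^[p] (adOp L₀ L₀ x) = 0 := by
    rw [← Function.iterate_succ_apply]
    have h := dd_spec hN
    rw [hp] at h
    exact h
  have := dd_le this
  omega

end Stmt7Aux


open Stmt7Aux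

/-- Key step in the proof of Theorem 4.4: for `𝓜 = {a ∈ A : a·U₀ ⊆ U}` one has
`s·B ⊆ 𝓜 ⊆ s⁻¹·B`, and `ad_{L,L₀}` maps `𝓜` to itself and acts locally nilpotently on it. -/
theorem stmt7
    {k A M : Type*} [Field k] [CharZero k] [Ring A] [IsDomain A] [Algebra k A]
    [AddCommGroup M] [Module A M]
    (B R : Subalgebra k A) (hRB : R ≤ B)
    (hRcomm : ∀ x ∈ R, ∀ y ∈ R, x * y = y * x)
    (S : Set A) (hSR : S ⊆ (R : Set A)) (hS0 : (0 : A) ∉ S) (hS1 : (1 : A) ∈ S)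
    (hSmul : ∀ s ∈ S, ∀ t ∈ S, s * t ∈ S)
    (hSunit : ∀ s ∈ S, IsUnit s)
    (hleft : ∀ a : A, ∃ s ∈ S, s * a ∈ B)
    (hright : ∀ a : A, ∃ s ∈ S, a * s ∈ B)
    (U₀ : Set M) (hU₀0 : (0 : M) ∈ U₀)
    (hU₀add : ∀ u ∈ U₀, ∀ v ∈ U₀, u + v ∈ U₀)
    (hU₀neg : ∀ u ∈ U₀, -u ∈ U₀)
    (hU₀R : ∀ r ∈ (R : Set A), ∀ u ∈ U₀, r • u ∈ U₀)
    (hB : ∀ a : A, a ∈ B ↔ ∀ u ∈ U₀, a • u ∈ U₀)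
    (L₀ : A) (hL₀ : L₀ ∈ B)
    (hnil : ∀ b ∈ B, ∃ n : ℕ, (adOp L₀ L₀)^[n] b = 0)
    (L : A) (h2 : cond2 B S L₀ L)
    (U : Set M) (hU : isSubspace k A U)
    (hLU : ∀ u ∈ U, L • u ∈ U)
    (s : A) (hs : s ∈ S)
    (hsU₀ : ∀ u ∈ U₀, s • u ∈ U) (hsU : ∀ u ∈ U, s • u ∈ U₀) :
    (∀ b ∈ B, s * b ∈ {a : A | ∀ u ∈ U₀, a • u ∈ U}) ∧
    (∀ a ∈ {a : A | ∀ u ∈ U₀, a • u ∈ U}, s * a ∈ B) ∧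
    (∀ a ∈ {a : A | ∀ u ∈ U₀, a • u ∈ U}, adOp L L₀ a ∈ {a : A | ∀ u ∈ U₀, a • u ∈ U}) ∧
    (∀ a ∈ {a : A | ∀ u ∈ U₀, a • u ∈ U}, ∃ N : ℕ, (adOp L L₀)^[N] a = 0) := by
  classical
  haveI hchar : CharZero A := charZero_of_injective_algebraMap (algebraMap k A).injective
  have hSne0 : ∀ t ∈ S, t ≠ (0 : A) := fun t ht h => hS0 (h ▸ ht)
  have hSB : ∀ t ∈ S, t ∈ B := fun t ht => hRB (hSR ht)
  have hs0 : s ≠ 0 := hSne0 s hs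
  have hDB : ∀ b ∈ B, adOp L₀ L₀ b ∈ B := fun b hb => by
    show L₀ * b - b * L₀ ∈ B
    exact B.sub_mem (B.mul_mem hL₀ hb) (B.mul_mem hb hL₀)
  -- part 1
  have part1 : ∀ b ∈ B, s * b ∈ {a : A | ∀ u ∈ U₀, a • u ∈ U} := by
    intro b hb u hu
    rw [mul_smul]
    exact hsU₀ _ ((hB b).1 hb u hu)
  -- part 2
  have part2 : ∀ a ∈ {a : A | ∀ u ∈ U₀, a • u ∈ U}, s * a ∈ B := by
    intro a ha
    rw [hB]
    intro u hu
    rw [mul_smul]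
    exact hsU _ (ha u hu)
  -- U is closed under subtraction
  have hUsub : ∀ u ∈ U, ∀ v ∈ U, u - v ∈ U := by
    intro u hu v hv
    obtain ⟨-, hadd, hsmul⟩ := hU
    have h1 := hsmul (-1) v hv
    rw [map_neg, map_one, neg_smul, one_smul] at h1
    have h2 := hadd u hu _ h1
    rwa [← sub_eq_add_neg] at h2
  -- part 3
  have part3 : ∀ a ∈ {a : A | ∀ u ∈ U₀, a • u ∈ U},
      adOp L L₀ a ∈ {a : A | ∀ u ∈ U₀, a • u ∈ U} := by
    intro a ha u hu
    have h1 : (adOp L L₀ a) • u = L • (a • u) - a • (L₀ • u) := by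
      show (L * a - a * L₀) • u = _
      rw [sub_smul, mul_smul, mul_smul]
    rw [h1]
    exact hUsub _ (hLU _ (ha u hu)) _ (ha _ ((hB L₀).1 hL₀ u hu))
  -- the degree function
  choose σ hσS hσB using hleft
  have hσ0 : ∀ x : A, σ x ≠ 0 := fun x => hSne0 _ (hσS x)
  set deg : A → ℤ := fun a => (dd L₀ (σ a * a) : ℤ) - (dd L₀ (σ a) : ℤ) with hdeg
  have hW : ∀ a : A, a ≠ 0 → ∀ t ∈ S, t * a ∈ B →
      deg a = (dd L₀ (t * a) : ℤ) - (dd L₀ t : ℤ) := by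
    intro a ha t htS htB
    have ht0 : t ≠ 0 := hSne0 t htS
    have hcomm : t * σ a = σ a * t := hRcomm t (hSR htS) (σ a) (hSR (hσS a))
    have he : t * (σ a * a) = σ a * (t * a) := by
      rw [← mul_assoc, hcomm, mul_assoc]
    have h1 := (dd_mul L₀ ht0 (mul_ne_zero (hσ0 a) ha) (hnil t (hSB t htS))
        (hnil _ (hσB a))).2
    have h2 := (dd_mul L₀ (hσ0 a) (mul_ne_zero ht0 ha) (hnil _ (hSB _ (hσS a)))
        (hnil _ htB)).2
    rw [he] at h1
    simp only [hdeg]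
    omega
  have hW' : ∀ a : A, a ≠ 0 → ∀ t ∈ S, a * t ∈ B →
      deg a = (dd L₀ (a * t) : ℤ) - (dd L₀ t : ℤ) := by
    intro a ha t htS htB
    have ht0 : t ≠ 0 := hSne0 t htS
    have h1 := (dd_mul L₀ (hσ0 a) (mul_ne_zero ha ht0) (hnil _ (hSB _ (hσS a)))
        (hnil _ htB)).2
    have h2 := (dd_mul L₀ (mul_ne_zero (hσ0 a) ha) ht0 (hnil _ (hσB a))
        (hnil _ (hSB t htS))).2
    rw [← mul_assoc] at h1
    simp only [hdeg]
    omega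
  have hdegB : ∀ b ∈ B, b ≠ 0 → deg b = (dd L₀ b : ℤ) - 1 := by
    intro b hb hb0
    have h := hW b hb0 1 hS1 (by rwa [one_mul])
    rwa [one_mul, dd_one] at h
  have hdegNeg : ∀ z : A, z ≠ 0 → deg (-z) = deg z := by
    intro z hz
    have h1 := hW (-z) (neg_ne_zero.mpr hz) (σ z) (hσS z)
      (by rw [mul_neg]; exact B.neg_mem (hσB z))
    rw [mul_neg, dd_neg] at h1
    rw [h1]
  have hdegMul : ∀ x y : A, x ≠ 0 → y ≠ 0 → deg (x * y) = deg x + deg y := by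
    intro x y hx hy
    obtain ⟨t, htS, htB⟩ := hright y
    have ht0 : t ≠ 0 := hSne0 t htS
    have hxy : x * y ≠ 0 := mul_ne_zero hx hy
    have hxyt : x * y * t ≠ 0 := mul_ne_zero hxy ht0
    have hb1 : σ x * x ∈ B := hσB x
    have he1 : σ x * (x * y * t) = (σ x * x) * (y * t) := by
      simp only [mul_assoc]
    have hmem1 : σ x * (x * y * t) ∈ B := by rw [he1]; exact B.mul_mem hb1 htB
    have e1 := hW _ hxyt (σ x) (hσS x) hmem1
    rw [he1] at e1
    have hb2 : σ (x * y) * (x * y) ∈ B := hσB (x * y)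
    have he2 : σ (x * y) * (x * y * t) = (σ (x * y) * (x * y)) * t := by
      simp only [mul_assoc]
    have hmem2 : σ (x * y) * (x * y * t) ∈ B := by
      rw [he2]; exact B.mul_mem hb2 (hSB t htS)
    have e2 := hW _ hxyt _ (hσS (x * y)) hmem2
    rw [he2] at e2
    have m1 := (dd_mul L₀ (mul_ne_zero (hσ0 x) hx) (mul_ne_zero hy ht0)
      (hnil _ hb1) (hnil _ htB)).2
    have m2 := (dd_mul L₀ (mul_ne_zero (hσ0 (x * y)) hxy) ht0
      (hnil _ hb2) (hnil _ (hSB t htS))).2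
    have ey := hW' y hy t htS htB
    have ex : deg x = (dd L₀ (σ x * x) : ℤ) - dd L₀ (σ x) := rfl
    have exy : deg (x * y) = (dd L₀ (σ (x * y) * (x * y)) : ℤ) - dd L₀ (σ (x * y)) := rfl
    omega
  have hdegAdd : ∀ x y : A, x ≠ 0 → y ≠ 0 → x + y ≠ 0 →
      deg (x + y) ≤ max (deg x) (deg y) := by
    intro x y hx hy hxy
    have huS : σ (σ x * y) * σ x ∈ S := hSmul _ (hσS _) _ (hσS x)
    have hu0 : σ (σ x * y) * σ x ≠ 0 := hSne0 _ huS
    have hux : (σ (σ x * y) * σ x) * x ∈ B := by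
      rw [mul_assoc]
      exact B.mul_mem (hSB _ (hσS _)) (hσB x)
    have huy : (σ (σ x * y) * σ x) * y ∈ B := by
      rw [mul_assoc]
      exact hσB (σ x * y)
    have huxy : (σ (σ x * y) * σ x) * (x + y) ∈ B := by
      rw [mul_add]; exact B.add_mem hux huy
    have e0 := hW _ hxy _ huS huxy
    have exu := hW x hx _ huS hux
    have eyu := hW y hy _ huS huy
    have hadd := (dd_add L₀ (hnil _ hux) (hnil _ huy)).2
    rw [mul_add] at e0
    rw [e0, exu, eyu]
    rcases le_total (dd L₀ ((σ (σ x * y) * σ x) * x)) (dd L₀ ((σ (σ x * y) * σ x) * y))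
      with h | h
    · rw [max_eq_right h] at hadd
      refine le_trans ?_ (le_max_right _ _)
      omega
    · rw [max_eq_left h] at hadd
      refine le_trans ?_ (le_max_left _ _)
      omega
  have hdegD : ∀ x : A, x ≠ 0 → adOp L₀ L₀ x ≠ 0 →
      deg (adOp L₀ L₀ x) + 1 ≤ deg x := by
    intro x hx hDx
    have hs₁S := hσS x
    have hs₁0 : σ x ≠ 0 := hσ0 x
    have hb : σ x * x ∈ B := hσB x
    have hb0 : σ x * x ≠ 0 := mul_ne_zero hs₁0 hx
    have hcB : adOp L₀ L₀ (σ x * x) ∈ B := hDB _ hb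
    have heB : adOp L₀ L₀ (σ x) ∈ B := hDB _ (hSB _ hs₁S)
    have hkey : σ x * adOp L₀ L₀ x
        = adOp L₀ L₀ (σ x * x) - adOp L₀ L₀ (σ x) * x := by
      simp only [adOp]
      noncomm_ring
    have hsDx0 : σ x * adOp L₀ L₀ x ≠ 0 := mul_ne_zero hs₁0 hDx
    have hmul1 : deg (σ x * adOp L₀ L₀ x) = deg (σ x) + deg (adOp L₀ L₀ x) :=
      hdegMul _ _ hs₁0 hDx
    have hdegs₁x : deg (σ x * x) = deg (σ x) + deg x := hdegMul _ _ hs₁0 hx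
    have hdegs₁xB : deg (σ x * x) = (dd L₀ (σ x * x) : ℤ) - 1 := hdegB _ hb hb0
    have hcbound : adOp L₀ L₀ (σ x * x) ≠ 0 →
        deg (adOp L₀ L₀ (σ x * x)) ≤ deg (σ x) + deg x - 1 := by
      intro hc0
      have hlt : dd L₀ (adOp L₀ L₀ (σ x * x)) < dd L₀ (σ x * x) := dd_D_lt (hnil _ hb) hb0
      have h := hdegB _ hcB hc0
      omega
    have hebound : adOp L₀ L₀ (σ x) ≠ 0 →
        deg (adOp L₀ L₀ (σ x) * x) ≤ deg (σ x) + deg x - 1 := by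
      intro he0
      have hlt : dd L₀ (adOp L₀ L₀ (σ x)) < dd L₀ (σ x) :=
        dd_D_lt (hnil _ (hSB _ hs₁S)) hs₁0
      have h1 := hdegB _ heB he0
      have h2 := hdegB _ (hSB _ hs₁S) hs₁0
      have h3 := hdegMul (adOp L₀ L₀ (σ x)) x he0 hx
      omega
    by_cases hc0 : adOp L₀ L₀ (σ x * x) = 0
    · have hex0 : adOp L₀ L₀ (σ x) * x ≠ 0 := by
        intro h
        apply hsDx0
        rw [hkey, hc0, h, sub_zero]
      have he0 : adOp L₀ L₀ (σ x) ≠ 0 := left_ne_zero_of_mul hex0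
      have heq : σ x * adOp L₀ L₀ x = -(adOp L₀ L₀ (σ x) * x) := by
        rw [hkey, hc0, zero_sub]
      have h4 : deg (σ x * adOp L₀ L₀ x) = deg (adOp L₀ L₀ (σ x) * x) := by
        rw [heq, hdegNeg _ hex0]
      have h5 := hebound he0
      omega
    · by_cases hex0 : adOp L₀ L₀ (σ x) * x = 0
      · have heq : σ x * adOp L₀ L₀ x = adOp L₀ L₀ (σ x * x) := by
          rw [hkey, hex0, sub_zero]
        have h4 : deg (σ x * adOp L₀ L₀ x) = deg (adOp L₀ L₀ (σ x * x)) := by rw [heq]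
        have h5 := hcbound hc0
        omega
      · have hsum : σ x * adOp L₀ L₀ x
            = adOp L₀ L₀ (σ x * x) + -(adOp L₀ L₀ (σ x) * x) := by
          rw [hkey, sub_eq_add_neg]
        have hne : adOp L₀ L₀ (σ x * x) + -(adOp L₀ L₀ (σ x) * x) ≠ 0 := by
          rw [← hsum]; exact hsDx0
        have hmax := hdegAdd _ _ hc0 (neg_ne_zero.mpr hex0) hne
        rw [hdegNeg _ hex0] at hmax
        have h5 := hcbound hc0
        have h6 := hebound (left_ne_zero_of_mul hex0)
        have h7 : deg (σ x * adOp L₀ L₀ x)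
            ≤ max (deg (adOp L₀ L₀ (σ x * x))) (deg (adOp L₀ L₀ (σ x) * x)) := by
          rw [hsum]; exact hmax
        have h8 := h7.trans (max_le h5 h6)
        omega
  have hdec : ∀ a ∈ {a : A | ∀ u ∈ U₀, a • u ∈ U}, a ≠ 0 → adOp L L₀ a ≠ 0 →
      deg (adOp L L₀ a) + 1 ≤ deg a := by
    intro a haM ha hTa
    rcases h2 with hL | ⟨s', hs'S, hs'B, hs'0, hs'deg⟩
    · subst hL
      exact hdegD a ha hTa
    · have hΔ0 : L - L₀ ≠ 0 := by
        intro h; exact hs'0 (by rw [h, mul_zero])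
      have hdegΔ : deg (L - L₀) ≤ -1 := by
        have h1 := hW _ hΔ0 s' hs'S hs'B
        have e1 := degAd_eq (hnil _ hs'B) hs'0
        have e2 := degAd_eq (hnil _ (hSB s' hs'S)) (hSne0 s' hs'S)
        omega
      have hTa_eq : adOp L L₀ a = adOp L₀ L₀ a + (L - L₀) * a := by
        simp only [adOp]; noncomm_ring
      have hΔa0 : (L - L₀) * a ≠ 0 := mul_ne_zero hΔ0 ha
      have hΔadeg : deg ((L - L₀) * a) ≤ deg a - 1 := by
        have h := hdegMul _ _ hΔ0 ha
        omega
      by_cases hDa : adOp L₀ L₀ a = 0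
      · rw [hTa_eq, hDa, zero_add]
        omega
      · have h1 := hdegD a ha hDa
        have hadd := hdegAdd _ _ hDa hΔa0 (by rw [← hTa_eq]; exact hTa)
        have h3 : max (deg (adOp L₀ L₀ a)) (deg ((L - L₀) * a)) ≤ deg a - 1 :=
          max_le (by omega) hΔadeg
        have h4 := hadd.trans h3
        rw [hTa_eq]
        omega
  have hlow : ∀ a ∈ {a : A | ∀ u ∈ U₀, a • u ∈ U}, a ≠ 0 →
      (1 : ℤ) ≤ deg a + (dd L₀ s : ℤ) := by
    intro a haM ha
    have hsa := part2 a haM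
    have h1 := hW a ha s hs hsa
    have h2 := dd_pos (hnil _ hsa) (mul_ne_zero hs0 ha)
    omega
  have key : ∀ n : ℕ, ∀ a ∈ {a : A | ∀ u ∈ U₀, a • u ∈ U}, a ≠ 0 →
      deg a + (dd L₀ s : ℤ) ≤ n → ∃ N : ℕ, (adOp L L₀)^[N] a = 0 := by
    intro n
    induction n with
    | zero =>
      intro a haM ha hle
      exact absurd (hlow a haM ha) (by omega)
    | succ n ih =>
      intro a haM ha hle
      by_cases hTa : adOp L L₀ a = 0
      · exact ⟨1, by simpa using hTa⟩
      · have hTM := part3 a haM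
        have hd := hdec a haM ha hTa
        obtain ⟨N, hN⟩ := ih _ hTM hTa (by push_cast at hle ⊢; omega)
        exact ⟨N + 1, by rw [Function.iterate_succ_apply]; exact hN⟩
  refine ⟨part1, part2, part3, ?_⟩
  intro a haM
  by_cases ha : a = 0
  · exact ⟨0, by simpa using ha⟩
  · exact key (deg a + (dd L₀ s : ℤ)).toNat a haM ha (Int.self_le_toNat _)
end

section
/- Assume the Setup. Let L ∈ A satisfy condition (2), and let U ⊆ M be a k-subspace that is maximal (with respect to inclusion) among all k-subspaces of M satisfying condition (1) for L. Then 𝓜 := {a ∈ A : a·U₀ ⊆ U} = {a ∈ A : ad_{L,L₀}^{N}(a) = 0 for some N ≥ 0}. -/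
namespace StmtAux

variable {A : Type*} [Ring A]

/-- the ad operator as an additive monoid hom -/
def adHom (a b : A) : A →+ A where
  toFun := adOp a b
  map_zero' := by simp [adOp]
  map_add' x y := by simp only [adOp, add_mul, mul_add]; abel

lemma adHom_coe (a b : A) : ⇑(adHom a b) = adOp a b := rfl

lemma adOp_mul (L₀ x y : A) :
    adOp L₀ L₀ (x * y) = adOp L₀ L₀ x * y + x * adOp L₀ L₀ y := by
  simp only [adOp]; noncomm_ring

lemma adOp_nsmul (L₀ : A) (n : ℕ) (x : A) :
    adOp L₀ L₀ (n • x) = n • adOp L₀ L₀ x := by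
  rw [← adHom_coe, map_nsmul]

lemma iter_add (L₀ : A) (n : ℕ) (x y : A) :
    (adOp L₀ L₀)^[n] (x + y) = (adOp L₀ L₀)^[n] x + (adOp L₀ L₀)^[n] y := by
  rw [← adHom_coe]; exact iterate_map_add _ n x y

lemma iter_sub (L₀ : A) (n : ℕ) (x y : A) :
    (adOp L₀ L₀)^[n] (x - y) = (adOp L₀ L₀)^[n] x - (adOp L₀ L₀)^[n] y := by
  rw [← adHom_coe]; exact iterate_map_sub _ n x y

lemma iter_zero (L₀ : A) (n : ℕ) : (adOp L₀ L₀)^[n] (0 : A) = 0 := by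
  rw [← adHom_coe]; exact iterate_map_zero _ n

lemma iter_nsmul (L₀ : A) (n k : ℕ) (x : A) :
    (adOp L₀ L₀)^[n] (k • x) = k • (adOp L₀ L₀)^[n] x := by
  induction n with
  | zero => simp
  | succ n ih => rw [Function.iterate_succ_apply', ih, adOp_nsmul, Function.iterate_succ_apply']

lemma iter_sum (L₀ : A) (n : ℕ) {ι : Type*} (s : Finset ι) (f : ι → A) :
    (adOp L₀ L₀)^[n] (∑ i ∈ s, f i) = ∑ i ∈ s, (adOp L₀ L₀)^[n] (f i) := by
  rw [← adHom_coe]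
  induction n with
  | zero => simp
  | succ n ih => rw [Function.iterate_succ_apply', ih, map_sum]; simp [Function.iterate_succ_apply']

end StmtAux

namespace StmtAux2
open Finset
variable {A : Type*} [Ring A]


lemma adOp_sum (L₀ : A) {ι : Type*} (s : Finset ι) (f : ι → A) :
    adOp L₀ L₀ (∑ i ∈ s, f i) = ∑ i ∈ s, adOp L₀ L₀ (f i) := by
  rw [← StmtAux.adHom_coe]; exact map_sum _ _ _

theorem iterate_ad_mul (L₀ : A) {n : ℕ} (p q : A) :
    (adOp L₀ L₀)^[n] (p * q) =
      ∑ k ∈ range n.succ, (n.choose k • ((adOp L₀ L₀)^[n - k] p * (adOp L₀ L₀)^[k] q)) := by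
  induction n with
  | zero =>
    simp [Finset.range]
  | succ n IH =>
    calc
      (adOp L₀ L₀)^[n + 1] (p * q) =
          adOp L₀ L₀ (∑ k ∈ range n.succ,
              n.choose k • ((adOp L₀ L₀)^[n - k] p * (adOp L₀ L₀)^[k] q)) := by
        rw [Function.iterate_succ_apply', IH]
      _ = (∑ k ∈ range n.succ,
            n.choose k • ((adOp L₀ L₀)^[n - k + 1] p * (adOp L₀ L₀)^[k] q)) +
          ∑ k ∈ range n.succ,
            n.choose k • ((adOp L₀ L₀)^[n - k] p * (adOp L₀ L₀)^[k + 1] q) := by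
        simp_rw [adOp_sum, StmtAux.adOp_nsmul, StmtAux.adOp_mul, Function.iterate_succ_apply',
          smul_add, sum_add_distrib]
      _ = (∑ k ∈ range n.succ,
                n.choose k.succ • ((adOp L₀ L₀)^[n - k] p * (adOp L₀ L₀)^[k + 1] q)) +
              1 • ((adOp L₀ L₀)^[n + 1] p * (adOp L₀ L₀)^[0] q) +
            ∑ k ∈ range n.succ, n.choose k • ((adOp L₀ L₀)^[n - k] p * (adOp L₀ L₀)^[k + 1] q) :=
        ?_
      _ = ((∑ k ∈ range n.succ, n.choose k • ((adOp L₀ L₀)^[n - k] p * (adOp L₀ L₀)^[k + 1] q)) +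
              ∑ k ∈ range n.succ,
                n.choose k.succ • ((adOp L₀ L₀)^[n - k] p * (adOp L₀ L₀)^[k + 1] q)) +
            1 • ((adOp L₀ L₀)^[n + 1] p * (adOp L₀ L₀)^[0] q) := by
        rw [add_comm, add_assoc]
      _ = (∑ i ∈ range n.succ,
              (n + 1).choose (i + 1) • ((adOp L₀ L₀)^[n + 1 - (i + 1)] p * (adOp L₀ L₀)^[i + 1] q)) +
            1 • ((adOp L₀ L₀)^[n + 1] p * (adOp L₀ L₀)^[0] q) := by
        simp_rw [Nat.choose_succ_succ, Nat.succ_sub_succ, add_smul, sum_add_distrib]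
      _ = ∑ k ∈ range n.succ.succ,
            n.succ.choose k • ((adOp L₀ L₀)^[n.succ - k] p * (adOp L₀ L₀)^[k] q) := by
        rw [sum_range_succ' _ n.succ, Nat.choose_zero_right, tsub_zero]
    congr
    refine (sum_range_succ' _ _).trans (congr_arg₂ (· + ·) ?_ ?_)
    · rw [sum_range_succ, Nat.choose_succ_self, zero_smul, add_zero]
      refine sum_congr rfl fun k hk => ?_
      rw [mem_range] at hk
      congr
      omega
    · rw [Nat.choose_zero_right, tsub_zero]

end StmtAux2

namespace StmtAux3
open Finset StmtAux
variable {A : Type*} [Ring A]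

def nil (L₀ x : A) : Prop := ∃ n : ℕ, (adOp L₀ L₀)^[n + 1] x = 0

lemma adOp_zero (L₀ : A) : adOp L₀ L₀ (0 : A) = 0 := by simp [adOp]

lemma vanish_mono {L₀ x : A} {m n : ℕ} (h : (adOp L₀ L₀)^[m] x = 0) (hmn : m ≤ n) :
    (adOp L₀ L₀)^[n] x = 0 := by
  obtain ⟨k, rfl⟩ := Nat.exists_eq_add_of_le hmn
  rw [add_comm, Function.iterate_add_apply, h, iter_zero]

lemma degAd_spec {L₀ x : A} (h : nil L₀ x) : (adOp L₀ L₀)^[degAd L₀ x + 1] x = 0 :=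
  Nat.sInf_mem h

lemma degAd_le {L₀ x : A} {n : ℕ} (h : (adOp L₀ L₀)^[n + 1] x = 0) : degAd L₀ x ≤ n :=
  Nat.sInf_le h

lemma degAd_ne {L₀ x : A} (hx : x ≠ 0) (h : nil L₀ x) :
    (adOp L₀ L₀)^[degAd L₀ x] x ≠ 0 := by
  rcases Nat.eq_zero_or_pos (degAd L₀ x) with h0 | h0
  · rw [h0]; simpa using hx
  · intro hc
    have : degAd L₀ x ≤ degAd L₀ x - 1 := degAd_le (by
      have : degAd L₀ x - 1 + 1 = degAd L₀ x := by omega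
      rw [this]; exact hc)
    omega

lemma le_degAd {L₀ x : A} {n : ℕ} (h : nil L₀ x) (hn : (adOp L₀ L₀)^[n] x ≠ 0) :
    n ≤ degAd L₀ x := by
  by_contra hc
  exact hn (vanish_mono (degAd_spec h) (by omega))

lemma mul_bound {L₀ x y : A} {p q : ℕ} (hx : (adOp L₀ L₀)^[p + 1] x = 0)
    (hy : (adOp L₀ L₀)^[q + 1] y = 0) : (adOp L₀ L₀)^[p + q + 1] (x * y) = 0 := by
  rw [show p + q + 1 = (p + q + 1 : ℕ) from rfl, StmtAux2.iterate_ad_mul]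
  refine Finset.sum_eq_zero fun k hk => ?_
  rcases le_or_gt (q + 1) k with h | h
  · rw [vanish_mono hy h, mul_zero, smul_zero]
  · rw [vanish_mono hx (show p + 1 ≤ p + q + 1 - k by omega), zero_mul, smul_zero]

lemma lead {L₀ x y : A} {p q : ℕ} (hx : (adOp L₀ L₀)^[p + 1] x = 0)
    (hy : (adOp L₀ L₀)^[q + 1] y = 0) :
    (adOp L₀ L₀)^[p + q] (x * y) =
      (p + q).choose q • ((adOp L₀ L₀)^[p] x * (adOp L₀ L₀)^[q] y) := by
  rw [StmtAux2.iterate_ad_mul]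
  rw [Finset.sum_eq_single q]
  · rw [Nat.add_sub_cancel]
  · intro k hk hkq
    rcases lt_or_gt_of_ne hkq with h | h
    · rw [vanish_mono hx (show p + 1 ≤ p + q - k by omega), zero_mul, smul_zero]
    · rw [vanish_mono hy h, mul_zero, smul_zero]
  · intro h; exact absurd (Finset.mem_range.mpr (by omega)) h

lemma nil_mul {L₀ x y : A} (hx : nil L₀ x) (hy : nil L₀ y) : nil L₀ (x * y) := by
  obtain ⟨p, hp⟩ := hx; obtain ⟨q, hq⟩ := hy
  exact ⟨p + q, mul_bound hp hq⟩

variable [IsDomain A] [CharZero A]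

lemma lead_ne {L₀ x y : A} {p q : ℕ} (hx : (adOp L₀ L₀)^[p + 1] x = 0)
    (hy : (adOp L₀ L₀)^[q + 1] y = 0) (hx' : (adOp L₀ L₀)^[p] x ≠ 0)
    (hy' : (adOp L₀ L₀)^[q] y ≠ 0) : (adOp L₀ L₀)^[p + q] (x * y) ≠ 0 := by
  rw [lead hx hy, nsmul_eq_mul]
  refine mul_ne_zero ?_ (mul_ne_zero hx' hy')
  exact Nat.cast_ne_zero.mpr (Nat.choose_pos (Nat.le_add_left q p)).ne'

lemma deg_mul {L₀ x y : A} (hx : nil L₀ x) (hy : nil L₀ y) (hx0 : x ≠ 0) (hy0 : y ≠ 0) :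
    degAd L₀ (x * y) = degAd L₀ x + degAd L₀ y := by
  refine le_antisymm (degAd_le (mul_bound (degAd_spec hx) (degAd_spec hy)))
    (le_degAd (nil_mul hx hy)
      (lead_ne (degAd_spec hx) (degAd_spec hy) (degAd_ne hx0 hx) (degAd_ne hy0 hy)))

end StmtAux3

namespace StmtAux4
open StmtAux StmtAux3
variable {A : Type*} [Ring A] [IsDomain A] [CharZero A]

lemma tri_bound {L₀ x y z : A} {p q r : ℕ} (hx : (adOp L₀ L₀)^[p + 1] x = 0)
    (hy : (adOp L₀ L₀)^[q + 1] y = 0) (hz : (adOp L₀ L₀)^[r + 1] z = 0)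
    {n : ℕ} (hn : p + q + r + 1 ≤ n) : (adOp L₀ L₀)^[n] (x * y * z) = 0 :=
  vanish_mono (mul_bound (mul_bound hx hy) hz) hn

lemma shift_iter {L₀ b : A} (h : nil L₀ b) (hpos : 1 ≤ degAd L₀ b) :
    (adOp L₀ L₀)^[(degAd L₀ b - 1) + 1] (adOp L₀ L₀ b) = 0 := by
  have := degAd_spec h
  rw [show degAd L₀ b - 1 + 1 = degAd L₀ b by omega]
  rw [show degAd L₀ b + 1 = degAd L₀ b + 1 from rfl, Function.iterate_succ_apply] at this
  exact this

lemma key (L₀ L s₀ s' t x : A)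
    (hs₀0 : s₀ ≠ 0) (hns₀ : nil L₀ s₀)
    (hs'0 : s' ≠ 0) (hns' : nil L₀ s')
    (ht0 : t ≠ 0) (hnt : nil L₀ t)
    (hx0 : x ≠ 0)
    (hnc : nil L₀ (x * t))
    (hnb : nil L₀ (s₀ * x))
    (hb1 : s₀ * (L * x - x * L₀) ≠ 0) (hnb1 : nil L₀ (s₀ * (L * x - x * L₀)))
    (hcomm : s' * s₀ = s₀ * s')
    (hq : L = L₀ ∨ (s' * (L - L₀) ≠ 0 ∧ nil L₀ (s' * (L - L₀)) ∧
        degAd L₀ (s' * (L - L₀)) < degAd L₀ s')) :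
    degAd L₀ (s₀ * (L * x - x * L₀)) < degAd L₀ (s₀ * x) := by
  set b := s₀ * x with hbdef
  set b1 := s₀ * (L * x - x * L₀) with hb1def
  set c := x * t with hcdef
  have hb0 : b ≠ 0 := mul_ne_zero hs₀0 hx0
  have hc0 : c ≠ 0 := mul_ne_zero hx0 ht0
  -- the key algebraic identity
  have hswap : ∀ z : A, s₀ * (s' * z) = s' * (s₀ * z) := fun z => by
    rw [← mul_assoc, ← hcomm, mul_assoc]
  have hid : s' * b1 * t =
      s' * (adOp L₀ L₀ b) * t - s' * (adOp L₀ L₀ s₀) * c + s₀ * (s' * (L - L₀)) * c := by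
    simp only [adOp, hbdef, hb1def, hcdef]
    rw [show s₀ * (s' * (L - L₀)) * (x * t) = s' * (s₀ * (L - L₀)) * (x * t) by rw [hswap]]
    noncomm_ring
  -- degree bookkeeping
  have hdeg2 : degAd L₀ b + degAd L₀ t = degAd L₀ s₀ + degAd L₀ c := by
    have h1 : b * t = s₀ * c := by rw [hbdef, hcdef, mul_assoc]
    have := deg_mul hnb hnt hb0 ht0
    rw [h1, deg_mul hns₀ hnc hs₀0 hc0] at this
    omega
  set F := degAd L₀ s' + degAd L₀ b + degAd L₀ t with hF
  have hT1 : (adOp L₀ L₀)^[F] (s' * (adOp L₀ L₀ b) * t) = 0 := by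
    by_cases hdb : adOp L₀ L₀ b = 0
    · rw [hdb, mul_zero, zero_mul, iter_zero]
    · have hpos : 1 ≤ degAd L₀ b := by
        by_contra h
        exact hdb (by simpa using vanish_mono (degAd_spec hnb) (show degAd L₀ b + 1 ≤ 1 by omega))
      exact tri_bound (degAd_spec hns') (shift_iter hnb hpos) (degAd_spec hnt) (by omega)
  have hT2 : (adOp L₀ L₀)^[F] (s' * (adOp L₀ L₀ s₀) * c) = 0 := by
    by_cases hds : adOp L₀ L₀ s₀ = 0
    · rw [hds, mul_zero, zero_mul, iter_zero]
    · have hpos : 1 ≤ degAd L₀ s₀ := by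
        by_contra h
        exact hds (by simpa using vanish_mono (degAd_spec hns₀) (show degAd L₀ s₀ + 1 ≤ 1 by omega))
      exact tri_bound (degAd_spec hns') (shift_iter hns₀ hpos) (degAd_spec hnc) (by omega)
  have hT3 : (adOp L₀ L₀)^[F] (s₀ * (s' * (L - L₀)) * c) = 0 := by
    rcases hq with rfl | ⟨hq0, hqn, hqd⟩
    · rw [sub_self, mul_zero, mul_zero, zero_mul, iter_zero]
    · exact tri_bound (degAd_spec hns₀) (degAd_spec hqn) (degAd_spec hnc) (by omega)
  have hvan : (adOp L₀ L₀)^[F] (s' * b1 * t) = 0 := by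
    rw [hid, iter_add, iter_sub, hT1, hT2, hT3]; abel
  have hne : (adOp L₀ L₀)^[degAd L₀ s' + degAd L₀ b1 + degAd L₀ t] (s' * b1 * t) ≠ 0 := by
    have hd : degAd L₀ (s' * b1 * t) = degAd L₀ s' + degAd L₀ b1 + degAd L₀ t := by
      rw [deg_mul (nil_mul hns' hnb1) hnt (mul_ne_zero hs'0 hb1) ht0,
        deg_mul hns' hnb1 hs'0 hb1]
    rw [← hd]
    exact degAd_ne (mul_ne_zero (mul_ne_zero hs'0 hb1) ht0) (nil_mul (nil_mul hns' hnb1) hnt)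
  have : degAd L₀ s' + degAd L₀ b1 + degAd L₀ t < F := by
    by_contra h
    exact hne (vanish_mono hvan (by omega))
  omega

end StmtAux4

lemma auxT {A : Type*} [Ring A] (S : Set A) (hS1 : (1:A) ∈ S)
    (hSmul : ∀ s ∈ S, ∀ t ∈ S, s * t ∈ S)
    (hcomm : ∀ x ∈ S, ∀ y ∈ S, x * y = y * x) (t : ℕ → A) (ht : ∀ j, t j ∈ S) :
    ∀ m : ℕ, ∃ T ∈ S, ∀ j < m, ∃ c ∈ S, T = c * t j := by
  intro m
  induction m with
  | zero => exact ⟨1, hS1, fun j hj => absurd hj (by omega)⟩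
  | succ m ih =>
    obtain ⟨T, hT, hj⟩ := ih
    refine ⟨T * t m, hSmul _ hT _ (ht m), fun j hjm => ?_⟩
    rcases Nat.lt_succ_iff_lt_or_eq.mp hjm with h | rfl
    · obtain ⟨c, hc, rfl⟩ := hj j h
      exact ⟨c * t m, hSmul _ hc _ (ht m),
        by rw [mul_assoc, hcomm (t j) (ht j) (t m) (ht m), ← mul_assoc]⟩
    · exact ⟨T, hT, rfl⟩

/-- Intrinsic characterization of the ideal `𝓜` (Remark 5.2, proved within Proposition 4.5):
for maximal `U`, `𝓜 = {a ∈ A : a·U₀ ⊆ U}` coincides with the set of elements of `A` on which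
`ad_{L,L₀}` acts nilpotently. -/
theorem stmt8
    {k A M : Type*} [Field k] [CharZero k] [Ring A] [IsDomain A] [Algebra k A]
    [AddCommGroup M] [Module A M]
    (B R : Subalgebra k A) (hRB : R ≤ B)
    (hRcomm : ∀ x ∈ R, ∀ y ∈ R, x * y = y * x)
    (S : Set A) (hSR : S ⊆ (R : Set A)) (hS0 : (0 : A) ∉ S) (hS1 : (1 : A) ∈ S)
    (hSmul : ∀ s ∈ S, ∀ t ∈ S, s * t ∈ S)
    (hSunit : ∀ s ∈ S, IsUnit s)
    (hleft : ∀ a : A, ∃ s ∈ S, s * a ∈ B)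
    (hright : ∀ a : A, ∃ s ∈ S, a * s ∈ B)
    (U₀ : Set M) (hU₀0 : (0 : M) ∈ U₀)
    (hU₀add : ∀ u ∈ U₀, ∀ v ∈ U₀, u + v ∈ U₀)
    (hU₀neg : ∀ u ∈ U₀, -u ∈ U₀)
    (hU₀R : ∀ r ∈ (R : Set A), ∀ u ∈ U₀, r • u ∈ U₀)
    (hB : ∀ a : A, a ∈ B ↔ ∀ u ∈ U₀, a • u ∈ U₀)
    (L₀ : A) (hL₀ : L₀ ∈ B)
    (hnil : ∀ b ∈ B, ∃ n : ℕ, (adOp L₀ L₀)^[n] b = 0)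
    (L : A) (h2 : cond2 B S L₀ L)
    (U : Set M) (hU : isSubspace k A U)
    (hLU : ∀ u ∈ U, L • u ∈ U)
    (hcond1b : ∃ s ∈ S, (∀ u ∈ U₀, s • u ∈ U) ∧ (∀ u ∈ U, s • u ∈ U₀))
    (hUmax : ∀ U' : Set M, isSubspace k A U' → (∀ u ∈ U', L • u ∈ U') →
      (∃ s ∈ S, (∀ u ∈ U₀, s • u ∈ U') ∧ (∀ u ∈ U', s • u ∈ U₀)) → U ⊆ U' → U' = U) :
    {a : A | ∀ u ∈ U₀, a • u ∈ U} = {a : A | ∃ N : ℕ, (adOp L L₀)^[N] a = 0} := by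
  have hCZ : CharZero A := charZero_of_injective_algebraMap (algebraMap k A).injective
  obtain ⟨s₀, hs₀S, hs₀1, hs₀2⟩ := hcond1b
  have hs₀0 : s₀ ≠ 0 := fun h => hS0 (h ▸ hs₀S)
  obtain ⟨hU0, hUadd, hUsmul⟩ := hU
  have hUneg : ∀ u ∈ U, -u ∈ U := by
    intro u hu
    have := hUsmul (-1) u hu
    rwa [map_neg, map_one, neg_smul, one_smul] at this
  have hBact : ∀ z ∈ B, ∀ u ∈ U₀, z • u ∈ U₀ := fun z hz => (hB z).mp hz
  have hL₀U₀ : ∀ u ∈ U₀, L₀ • u ∈ U₀ := hBact L₀ hL₀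
  have hnil' : ∀ z ∈ B, StmtAux3.nil L₀ z := by
    intro z hz
    obtain ⟨n, hn⟩ := hnil z hz
    exact ⟨n, StmtAux3.vanish_mono hn (by omega)⟩
  have hSB : ∀ s ∈ S, s ∈ B := fun s hs => hRB (hSR hs)
  have hSne : ∀ s ∈ S, s ≠ (0 : A) := fun s hs h => hS0 (h ▸ hs)
  ext a
  simp only [Set.mem_setOf_eq]
  constructor
  · -- 𝓜 ⊆ nilpotent
    intro ha
    by_contra hcon
    push_neg at hcon
    have hgsucc : ∀ n : ℕ, (adOp L L₀)^[n+1] a = L * (adOp L L₀)^[n] a - (adOp L L₀)^[n] a * L₀ :=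
      fun n => by rw [Function.iterate_succ_apply']; rfl
    have hgM : ∀ n : ℕ, ∀ u ∈ U₀, (adOp L L₀)^[n] a • u ∈ U := by
      intro n
      induction n with
      | zero => exact ha
      | succ n ih =>
        intro u hu
        rw [hgsucc n, sub_smul, mul_smul, mul_smul, sub_eq_add_neg]
        exact hUadd _ (hLU _ (ih u hu)) _ (hUneg _ (ih _ (hL₀U₀ u hu)))
    have hbB : ∀ n : ℕ, s₀ * (adOp L L₀)^[n] a ∈ B := by
      intro n
      refine (hB _).mpr fun u hu => ?_
      rw [mul_smul]
      exact hs₀2 _ (hgM n u hu)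
    have hb0 : ∀ n : ℕ, s₀ * (adOp L L₀)^[n] a ≠ 0 := fun n => mul_ne_zero hs₀0 (hcon n)
    have hdrop : ∀ n : ℕ,
        degAd L₀ (s₀ * (adOp L L₀)^[n+1] a) < degAd L₀ (s₀ * (adOp L L₀)^[n] a) := by
      intro n
      obtain ⟨t, htS, htB⟩ := hright ((adOp L L₀)^[n] a)
      have hb1 : s₀ * (L * (adOp L L₀)^[n] a - (adOp L L₀)^[n] a * L₀) ≠ 0 := by
        rw [← hgsucc n]; exact hb0 (n+1)
      have hnb1 : StmtAux3.nil L₀ (s₀ * (L * (adOp L L₀)^[n] a - (adOp L L₀)^[n] a * L₀)) := by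
        rw [← hgsucc n]; exact hnil' _ (hbB (n+1))
      rw [hgsucc n]
      rcases h2 with hL | ⟨s', hs'S, hs'B, hs'ne, hs'deg⟩
      · exact StmtAux4.key L₀ L s₀ 1 t _ hs₀0 (hnil' _ (hSB _ hs₀S)) one_ne_zero
          (hnil' _ B.one_mem) (hSne t htS) (hnil' _ (hSB _ htS)) (hcon n)
          (hnil' _ htB) (hnil' _ (hbB n)) hb1 hnb1 (by rw [one_mul, mul_one]) (Or.inl hL)
      · exact StmtAux4.key L₀ L s₀ s' t _ hs₀0 (hnil' _ (hSB _ hs₀S)) (hSne s' hs'S)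
          (hnil' _ (hSB _ hs'S)) (hSne t htS) (hnil' _ (hSB _ htS)) (hcon n)
          (hnil' _ htB) (hnil' _ (hbB n)) hb1 hnb1
          (hRcomm s' (hSR hs'S) s₀ (hSR hs₀S)) (Or.inr ⟨hs'ne, hnil' _ hs'B, hs'deg⟩)
    have hmono : ∀ n : ℕ,
        degAd L₀ (s₀ * (adOp L L₀)^[n] a) + n ≤ degAd L₀ (s₀ * (adOp L L₀)^[0] a) := by
      intro n
      induction n with
      | zero => omega
      | succ n ih => have := hdrop n; omega
    have := hmono (degAd L₀ (s₀ * (adOp L L₀)^[0] a) + 1)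
    omega
  · rintro ⟨N, hN⟩ u₀ hu₀
    rcases Nat.eq_zero_or_pos N with rfl | hNpos
    · rw [Function.iterate_zero_apply] at hN
      rw [hN, zero_smul]; exact hU0
    set U' : Set M := {m | ∃ u ∈ U, ∃ w : ℕ → M, (∀ j, w j ∈ U₀) ∧
        m = u + ∑ j ∈ Finset.range N, (adOp L L₀)^[j] a • w j} with hU'def
    have hUsubU' : U ⊆ U' := fun m hm =>
      ⟨m, hm, fun _ => 0, fun _ => hU₀0, by simp⟩
    have hsub : isSubspace k A U' := by
      refine ⟨hUsubU' hU0, ?_, ?_⟩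
      · rintro _ ⟨u1, hu1, w1, hw1, rfl⟩ _ ⟨u2, hu2, w2, hw2, rfl⟩
        refine ⟨u1 + u2, hUadd _ hu1 _ hu2, fun j => w1 j + w2 j,
          fun j => hU₀add _ (hw1 j) _ (hw2 j), ?_⟩
        simp only [smul_add, Finset.sum_add_distrib]
        abel
      · rintro c _ ⟨u, hu, w, hw, rfl⟩
        refine ⟨algebraMap k A c • u, hUsmul c u hu, fun j => algebraMap k A c • w j,
          fun j => hU₀R _ (R.algebraMap_mem c) _ (hw j), ?_⟩
        rw [smul_add, Finset.smul_sum]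
        congr 1
        refine Finset.sum_congr rfl fun j _ => ?_
        rw [smul_smul, Algebra.commutes, ← smul_smul]
    have hLstab : ∀ m ∈ U', L • m ∈ U' := by
      rintro _ ⟨u, hu, w, hw, rfl⟩
      have hterm : ∀ j : ℕ, L • ((adOp L L₀)^[j] a • w j) =
          (adOp L L₀)^[j+1] a • w j + (adOp L L₀)^[j] a • (L₀ • w j) := by
        intro j
        rw [smul_smul, Function.iterate_succ_apply']
        show (L * (adOp L L₀)^[j] a) • w j =
          (L * (adOp L L₀)^[j] a - (adOp L L₀)^[j] a * L₀) • w j + _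
        rw [sub_smul, smul_smul]
        abel
      have hshift : ∑ j ∈ Finset.range N, (adOp L L₀)^[j+1] a • w j
          = ∑ j ∈ Finset.range N,
              (adOp L L₀)^[j] a • (if j = 0 then (0:M) else w (j-1)) := by
        obtain ⟨N', rfl⟩ : ∃ N', N = N' + 1 := ⟨N - 1, by omega⟩
        rw [Finset.sum_range_succ, Finset.sum_range_succ'
          (fun j => (adOp L L₀)^[j] a • (if j = 0 then (0:M) else w (j-1))) N']
        simp [hN]
      refine ⟨L • u, hLU u hu, fun j => (if j = 0 then (0:M) else w (j-1)) + L₀ • w j,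
        fun j => hU₀add _ (by split <;> [exact hU₀0; exact hw _]) _ (hL₀U₀ _ (hw j)), ?_⟩
      rw [smul_add, Finset.smul_sum]
      simp only [hterm]
      rw [Finset.sum_add_distrib, hshift, ← Finset.sum_add_distrib]
      simp only [smul_add]
    have hcond1' : ∃ s ∈ S, (∀ u ∈ U₀, s • u ∈ U') ∧ (∀ u ∈ U', s • u ∈ U₀) := by
      choose t htS htB using fun j : ℕ => hleft ((adOp L L₀)^[j] a)
      obtain ⟨T, hTS, hTfac⟩ := auxT S hS1 hSmul
        (fun x hx y hy => hRcomm x (hSR hx) y (hSR hy)) t htS N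
      refine ⟨s₀ * (T * s₀), hSmul _ hs₀S _ (hSmul _ hTS _ hs₀S), ?_, ?_⟩
      · intro u hu
        rw [mul_smul]
        exact hUsubU' (hs₀1 _ (hU₀R _ (hSR (hSmul _ hTS _ hs₀S)) _ hu))
      · rintro _ ⟨u, hu, w, hw, rfl⟩
        rw [smul_add, Finset.smul_sum]
        refine hU₀add _ ?_ _ ?_
        · rw [mul_smul, mul_smul]
          exact hU₀R _ (hSR hs₀S) _ (hU₀R _ (hSR hTS) _ (hs₀2 _ hu))
        · refine Finset.sum_induction _ (· ∈ U₀) (fun x y hx hy => hU₀add x hx y hy) hU₀0 ?_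
          intro j hj
          rw [smul_smul]
          have hz : (s₀ * (T * s₀)) * (adOp L L₀)^[j] a ∈ B := by
            obtain ⟨c, hcS, hfac⟩ := hTfac j (Finset.mem_range.mp hj)
            have hre : s₀ * (T * s₀) = (s₀ * (c * s₀)) * t j := by
              rw [hfac, mul_assoc c (t j) s₀, hRcomm (t j) (hSR (htS j)) s₀ (hSR hs₀S)]
              noncomm_ring
            rw [hre, mul_assoc]
            exact B.mul_mem (B.mul_mem (hSB _ hs₀S) (B.mul_mem (hSB _ hcS) (hSB _ hs₀S)))
              (htB j)
          exact hBact _ hz _ (hw j)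
    have hUeq : U' = U := hUmax U' hsub hLstab hcond1' hUsubU'
    have : a • u₀ ∈ U' := by
      refine ⟨0, hU0, fun j => if j = 0 then u₀ else 0, ?_, ?_⟩
      · intro j
        by_cases h : j = 0 <;> simp [h, hu₀, hU₀0]
      · rw [Finset.sum_eq_single_of_mem 0 (Finset.mem_range.mpr hNpos) ?_]
        · simp
        · intro b _ hb
          simp [hb]
    rwa [hUeq] at this
end

section
/- Assume the Setup. Let L ∈ A satisfy condition (2), and let U ⊆ M be a k-subspace that is maximal (with respect to inclusion) among all k-subspaces of M satisfying condition (1) for L. Define 𝓜 := {a ∈ A : a·U₀ ⊆ U} and 𝓓 := {a ∈ A : a·U ⊆ U}. Then 𝓓 = {a ∈ A : ad_{L}^{N}(a) = 0 for some N ≥ 0} = {a ∈ A : a·𝓜 ⊆ 𝓜}. -/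
section Aux
variable {A : Type*} [Ring A] (l : A)

/-- `adOp l l` as an additive monoid hom. -/
def adHom : A →+ A where
  toFun := adOp l l
  map_zero' := by simp [adOp]
  map_add' x y := by simp only [adOp, mul_add, add_mul]; abel

@[simp] lemma adHom_apply (x : A) : adHom l x = adOp l l x := rfl

lemma aux_ad_mul (x y : A) :
    adOp l l (x * y) = adOp l l x * y + x * adOp l l y := by
  simp only [adOp]; noncomm_ring

lemma aux_iter_zero (n : ℕ) : (adOp l l)^[n] (0 : A) = 0 :=
  Function.iterate_fixed (by simp [adOp]) n

lemma aux_iter_add (n : ℕ) (x y : A) :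
    (adOp l l)^[n] (x + y) = (adOp l l)^[n] x + (adOp l l)^[n] y := by
  induction n generalizing x y with
  | zero => rfl
  | succ n ih =>
      rw [Function.iterate_succ_apply, Function.iterate_succ_apply,
        Function.iterate_succ_apply]
      rw [show adOp l l (x + y) = adOp l l x + adOp l l y from (adHom l).map_add x y, ih]

lemma aux_iter_neg (n : ℕ) (x : A) :
    (adOp l l)^[n] (-x) = -(adOp l l)^[n] x := by
  induction n generalizing x with
  | zero => rfl
  | succ n ih =>
      rw [Function.iterate_succ_apply, Function.iterate_succ_apply,
        show adOp l l (-x) = -(adOp l l x) from (adHom l).map_neg x, ih]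

lemma aux_iter_mono {m n : ℕ} {b : A} (h : (adOp l l)^[m] b = 0) (hmn : m ≤ n) :
    (adOp l l)^[n] b = 0 := by
  obtain ⟨p, rfl⟩ := Nat.exists_eq_add_of_le hmn
  rw [add_comm, Function.iterate_add_apply, h, aux_iter_zero]

lemma aux_leibniz (x y : A) (n : ℕ) :
    (adOp l l)^[n] (x * y)
      = ∑ i ∈ Finset.range (n + 1),
          n.choose i • ((adOp l l)^[i] x * (adOp l l)^[n - i] y) := by
  induction n with
  | zero => simp
  | succ n ih =>
      rw [Function.iterate_succ_apply', ih, ← adHom_apply, map_sum]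
      have hterm : ∀ i, adHom l (n.choose i • ((adOp l l)^[i] x * (adOp l l)^[n - i] y))
          = n.choose i • ((adOp l l)^[i+1] x * (adOp l l)^[n - i] y)
            + n.choose i • ((adOp l l)^[i] x * (adOp l l)^[(n - i)+1] y) := by
        intro i
        rw [AddMonoidHom.map_nsmul, adHom_apply, aux_ad_mul, smul_add]
        simp only [← Function.iterate_succ_apply']
      rw [Finset.sum_congr rfl fun i _ => hterm i, Finset.sum_add_distrib]
      -- S1 + S2 = T
      set f : ℕ → ℕ → A := fun i j => (adOp l l)^[i] x * (adOp l l)^[j] y with hf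
      have hS2 : (∑ i ∈ Finset.range (n + 1), n.choose i • (f i ((n - i) + 1)))
          = ∑ i ∈ Finset.range (n + 1), n.choose i • f i (n + 1 - i) := by
        refine Finset.sum_congr rfl fun i hi => ?_
        rw [Finset.mem_range] at hi
        congr 2
        omega
      rw [hS2]
      rw [Finset.sum_range_succ' (fun i => (n+1).choose i • f i (n + 1 - i)) (n+1)]
      simp only [Nat.succ_sub_succ, Nat.choose_succ_succ, add_smul, Nat.choose_zero_right,
        Nat.sub_zero, Finset.sum_add_distrib]
      rw [add_assoc]
      congr 1
      rw [Finset.sum_range_succ (fun i => n.choose (i+1) • f (i+1) (n - i)) n,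
        Nat.choose_succ_self, zero_smul, add_zero,
        Finset.sum_range_succ' (fun i => n.choose i • f i (n + 1 - i)) n]
      simp only [Nat.succ_sub_succ, Nat.choose_zero_right, Nat.sub_zero]

lemma aux_deg_le {m : ℕ} {b : A} (h : (adOp l l)^[m + 1] b = 0) : degAd l b ≤ m :=
  Nat.sInf_le h

lemma aux_deg_top {b : A} (h : ∃ n, (adOp l l)^[n] b = 0) :
    (adOp l l)^[degAd l b + 1] b = 0 := by
  obtain ⟨n, hn⟩ := h
  have hne : {n : ℕ | (adOp l l)^[n + 1] b = 0}.Nonempty :=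
    ⟨n, aux_iter_mono l hn (Nat.le_succ n)⟩
  exact Nat.sInf_mem hne

lemma aux_deg_ne {b : A} (hb : b ≠ 0) : (adOp l l)^[degAd l b] b ≠ 0 := by
  intro h
  rcases Nat.eq_zero_or_pos (degAd l b) with h0 | hpos
  · rw [h0] at h; exact hb h
  · have : (adOp l l)^[(degAd l b - 1) + 1] b = 0 := by
      rwa [Nat.sub_add_cancel hpos]
    have := aux_deg_le l this
    omega

lemma aux_iter_eq_zero_iff {b : A} (hb : b ≠ 0) (h : ∃ n, (adOp l l)^[n] b = 0)
    {N : ℕ} : (adOp l l)^[N] b = 0 ↔ degAd l b + 1 ≤ N := by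
  constructor
  · intro hN
    by_contra hlt
    exact aux_deg_ne l hb (aux_iter_mono l hN (by omega))
  · intro hN
    exact aux_iter_mono l (aux_deg_top l h) hN

lemma aux_degAd_neg (b : A) : degAd l (-b) = degAd l b := by
  unfold degAd
  congr 1
  ext n
  simp [aux_iter_neg]

lemma aux_degAd_one : degAd l (1 : A) = 0 :=
  Nat.le_zero.mp (aux_deg_le l (by simp [adOp]))

lemma aux_degAd_mul [IsDomain A] (hchar : ∀ n : ℕ, n ≠ 0 → (n : A) ≠ 0)
    {b c : A} (hb : b ≠ 0) (hc : c ≠ 0)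
    (hbn : ∃ n, (adOp l l)^[n] b = 0) (hcn : ∃ n, (adOp l l)^[n] c = 0) :
    degAd l (b * c) = degAd l b + degAd l c := by
  set m := degAd l b with hm
  set n := degAd l c with hn
  have hbc : b * c ≠ 0 := mul_ne_zero hb hc
  have htop : (adOp l l)^[m + n] (b * c)
      = (m + n).choose m • ((adOp l l)^[m] b * (adOp l l)^[m + n - m] c) := by
    rw [aux_leibniz]
    refine Finset.sum_eq_single m (fun i hi hne => ?_) (fun h => absurd (by
      simp only [Finset.mem_range]; omega) h)
    rw [Finset.mem_range] at hi
    rcases lt_or_gt_of_ne hne with hlt | hgt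
    · have : (adOp l l)^[m + n - i] c = 0 :=
        aux_iter_mono l (aux_deg_top l hcn) (by omega)
      rw [this, mul_zero, smul_zero]
    · have : (adOp l l)^[i] b = 0 :=
        aux_iter_mono l (aux_deg_top l hbn) (by omega)
      rw [this, zero_mul, smul_zero]
  have hzero : (adOp l l)^[m + n + 1] (b * c) = 0 := by
    rw [aux_leibniz]
    refine Finset.sum_eq_zero fun i hi => ?_
    rw [Finset.mem_range] at hi
    rcases le_or_gt i m with hle | hgt
    · have : (adOp l l)^[m + n + 1 - i] c = 0 :=
        aux_iter_mono l (aux_deg_top l hcn) (by omega)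
      rw [this, mul_zero, smul_zero]
    · have : (adOp l l)^[i] b = 0 :=
        aux_iter_mono l (aux_deg_top l hbn) (by omega)
      rw [this, zero_mul, smul_zero]
  have hne : (adOp l l)^[m + n] (b * c) ≠ 0 := by
    have hmn : m + n - m = n := by omega
    rw [htop, hmn, nsmul_eq_mul]
    exact mul_ne_zero (hchar _ (Nat.choose_pos (Nat.le_add_right m n)).ne')
      (mul_ne_zero (aux_deg_ne l hb) (aux_deg_ne l hc))
  have h1 : degAd l (b * c) ≤ m + n := aux_deg_le l hzero
  have h2 : ¬ (degAd l (b * c) + 1 ≤ m + n) := by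
    intro h
    exact hne (aux_iter_mono l (aux_deg_top l ⟨_, hzero⟩) h)
  omega

lemma aux_degAd_add_le {b c : A} (hbn : ∃ n, (adOp l l)^[n] b = 0)
    (hcn : ∃ n, (adOp l l)^[n] c = 0) :
    degAd l (b + c) ≤ max (degAd l b) (degAd l c) := by
  apply aux_deg_le
  rw [aux_iter_add]
  rw [aux_iter_mono l (aux_deg_top l hbn) (by omega),
    aux_iter_mono l (aux_deg_top l hcn) (by omega), add_zero]

lemma aux_degAd_ad_le {b : A} (hb : adOp l l b ≠ 0)
    (hbn : ∃ n, (adOp l l)^[n] b = 0) :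
    degAd l (adOp l l b) + 1 ≤ degAd l b := by
  have hb0 : b ≠ 0 := by rintro rfl; exact hb (by simp [adOp])
  have hpos : 1 ≤ degAd l b := by
    rcases Nat.eq_zero_or_pos (degAd l b) with h0 | h
    · exfalso
      have h1 := aux_deg_top l hbn
      rw [h0] at h1
      exact hb (by simpa using h1)
    · exact h
  have h2 : (adOp l l)^[(degAd l b - 1) + 1] (adOp l l b) = 0 := by
    rw [← Function.iterate_succ_apply]
    exact aux_iter_mono l (aux_deg_top l hbn) (by omega)
  have := aux_deg_le l h2
  omega

end Aux

/-- Remark 5.2 together with Proposition 4.5(b): for maximal `U`, the ring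
`𝓓 = {a ∈ A : a·U ⊆ U}` is the `ad_L`-nilpotent part of `A`, and coincides with
`{a ∈ A : a·𝓜 ⊆ 𝓜}` where `𝓜 = {a ∈ A : a·U₀ ⊆ U}`. -/
theorem stmt9
    {k A M : Type*} [Field k] [CharZero k] [Ring A] [IsDomain A] [Algebra k A]
    [AddCommGroup M] [Module A M]
    (B R : Subalgebra k A) (hRB : R ≤ B)
    (hRcomm : ∀ x ∈ R, ∀ y ∈ R, x * y = y * x)
    (S : Set A) (hSR : S ⊆ (R : Set A)) (hS0 : (0 : A) ∉ S) (hS1 : (1 : A) ∈ S)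
    (hSmul : ∀ s ∈ S, ∀ t ∈ S, s * t ∈ S)
    (hSunit : ∀ s ∈ S, IsUnit s)
    (hleft : ∀ a : A, ∃ s ∈ S, s * a ∈ B)
    (hright : ∀ a : A, ∃ s ∈ S, a * s ∈ B)
    (U₀ : Set M) (hU₀0 : (0 : M) ∈ U₀)
    (hU₀add : ∀ u ∈ U₀, ∀ v ∈ U₀, u + v ∈ U₀)
    (hU₀neg : ∀ u ∈ U₀, -u ∈ U₀)
    (hU₀R : ∀ r ∈ (R : Set A), ∀ u ∈ U₀, r • u ∈ U₀)
    (hB : ∀ a : A, a ∈ B ↔ ∀ u ∈ U₀, a • u ∈ U₀)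
    (L₀ : A) (hL₀ : L₀ ∈ B)
    (hnil : ∀ b ∈ B, ∃ n : ℕ, (adOp L₀ L₀)^[n] b = 0)
    (L : A) (h2 : cond2 B S L₀ L)
    (U : Set M) (hU : isSubspace k A U)
    (hLU : ∀ u ∈ U, L • u ∈ U)
    (hcond1b : ∃ s ∈ S, (∀ u ∈ U₀, s • u ∈ U) ∧ (∀ u ∈ U, s • u ∈ U₀))
    (hUmax : ∀ U' : Set M, isSubspace k A U' → (∀ u ∈ U', L • u ∈ U') →
      (∃ s ∈ S, (∀ u ∈ U₀, s • u ∈ U') ∧ (∀ u ∈ U', s • u ∈ U₀)) → U ⊆ U' → U' = U) :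
    {a : A | ∀ u ∈ U, a • u ∈ U} = {a : A | ∃ N : ℕ, (adOp L L)^[N] a = 0} ∧
    {a : A | ∀ u ∈ U, a • u ∈ U} =
      {a : A | ∀ b : A, (∀ u ∈ U₀, b • u ∈ U) → ∀ u ∈ U₀, (a * b) • u ∈ U} := by
  classical
  obtain ⟨hU0, hUadd, hUsmul⟩ := hU
  obtain ⟨s, hsS, hsU₀U, hsUU₀⟩ := hcond1b
  have hSB : ∀ t ∈ S, t ∈ B := fun t ht => hRB (hSR ht)
  have hSne : ∀ t ∈ S, t ≠ (0:A) := fun t ht h0 => hS0 (h0 ▸ ht)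
  have hsB : s ∈ B := hSB s hsS
  have hs0 : s ≠ 0 := hSne s hsS
  have hUneg : ∀ u ∈ U, -u ∈ U := by
    intro u hu
    have := hUsmul (-1 : k) u hu
    rwa [map_neg, map_one, neg_smul, one_smul] at this
  have hUsub : ∀ u ∈ U, ∀ v ∈ U, u - v ∈ U := fun u hu v hv => by
    rw [sub_eq_add_neg]; exact hUadd u hu _ (hUneg v hv)
  -- ------------------------------------------------------------------
  -- Part I : ad_L-nilpotent elements stabilize U (uses maximality of U)
  -- ------------------------------------------------------------------
  have partI : ∀ (n : ℕ) (a : A), (adOp L L)^[n] a = 0 → ∀ u ∈ U, a • u ∈ U := by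
    intro n
    induction n with
    | zero =>
        intro a ha u hu
        have h0 : a = 0 := by simpa using ha
        rw [h0, zero_smul]; exact hU0
    | succ n ih =>
        intro a ha u hu
        have hadU : ∀ v ∈ U, (adOp L L a) • v ∈ U :=
          ih (adOp L L a) (by rwa [Function.iterate_succ_apply] at ha)
        set U' : Set M := {m | ∃ x ∈ U, ∃ v ∈ U, m = x + a • v} with hU'
        have hUsubU' : U ⊆ U' := fun x hx => ⟨x, hx, 0, hU0, by rw [smul_zero, add_zero]⟩
        have hsub : isSubspace k A U' := by
          refine ⟨⟨0, hU0, 0, hU0, by rw [smul_zero, add_zero]⟩, ?_, ?_⟩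
          · rintro _ ⟨x₁, hx₁, v₁, hv₁, rfl⟩ _ ⟨x₂, hx₂, v₂, hv₂, rfl⟩
            refine ⟨x₁ + x₂, hUadd _ hx₁ _ hx₂, v₁ + v₂, hUadd _ hv₁ _ hv₂, ?_⟩
            rw [smul_add]; abel
          · rintro c _ ⟨x, hx, v, hv, rfl⟩
            refine ⟨algebraMap k A c • x, hUsmul c x hx,
              algebraMap k A c • v, hUsmul c v hv, ?_⟩
            rw [smul_add, ← mul_smul, Algebra.commutes c a, mul_smul]
        have hLs : ∀ m ∈ U', L • m ∈ U' := by
          rintro _ ⟨x, hx, v, hv, rfl⟩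
          refine ⟨L • x + (adOp L L a) • v, hUadd _ (hLU x hx) _ (hadU v hv),
            L • v, hLU v hv, ?_⟩
          rw [smul_add, ← mul_smul, ← mul_smul,
            show L * a = adOp L L a + a * L by simp only [adOp]; noncomm_ring,
            add_smul, mul_smul]
          abel
        have hc : ∃ t ∈ S, (∀ u ∈ U₀, t • u ∈ U') ∧ (∀ m ∈ U', t • m ∈ U₀) := by
          obtain ⟨q, hqS, hqB⟩ := hleft (a * ↑(hSunit s hsS).unit⁻¹)
          refine ⟨s * q, hSmul s hsS q hqS, ?_, ?_⟩
          · intro u₀ hu₀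
            rw [mul_smul]
            exact hUsubU' (hsU₀U _ (hU₀R q (hSR hqS) u₀ hu₀))
          · rintro _ ⟨x, hx, v, hv, rfl⟩
            rw [smul_add]
            refine hU₀add _ ?_ _ ?_
            · rw [hRcomm s (hSR hsS) q (hSR hqS), mul_smul]
              exact hU₀R q (hSR hqS) _ (hsUU₀ x hx)
            · rw [← mul_smul]
              have hkey : s * q * a = (s * (q * (a * ↑(hSunit s hsS).unit⁻¹))) * s := by
                have h1 : (↑(hSunit s hsS).unit⁻¹ : A) * s = 1 :=
                  IsUnit.val_inv_mul (hSunit s hsS)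
                simp only [mul_assoc, h1, mul_one]
              rw [hkey, mul_smul]
              exact (hB _).mp (mul_mem hsB hqB) _ (hsUU₀ v hv)
        have hUU := hUmax U' hsub hLs hc hUsubU'
        rw [← hUU]
        exact ⟨0, hU0, u, hu, by rw [zero_add]⟩
  -- ------------------------------------------------------------------
  -- Part II : the degree function on A and the descent argument
  -- ------------------------------------------------------------------
  choose σ hσS hσB using hleft
  haveI : CharZero A :=
    charZero_of_injective_algebraMap (algebraMap k A).injective
  have hchar : ∀ n : ℕ, n ≠ 0 → (n : A) ≠ 0 := fun n hn => Nat.cast_ne_zero.mpr hn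
  set degZ : A → ℤ := fun x => (degAd L₀ (σ x * x) : ℤ) - (degAd L₀ (σ x) : ℤ)
    with hdegZ
  -- well-definedness
  have hW : ∀ x : A, x ≠ 0 → ∀ t ∈ S, t * x ∈ B →
      degZ x = (degAd L₀ (t * x) : ℤ) - (degAd L₀ t : ℤ) := by
    intro x hx t htS htB
    have hsx : σ x ∈ S := hσS x
    have hbB : σ x * x ∈ B := hσB x
    have he : t * (σ x * x) = σ x * (t * x) := by
      rw [← mul_assoc, hRcomm t (hSR htS) (σ x) (hSR hsx), mul_assoc]
    have h1 : degAd L₀ (t * (σ x * x)) = degAd L₀ t + degAd L₀ (σ x * x) :=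
      aux_degAd_mul L₀ hchar (hSne t htS) (mul_ne_zero (hSne _ hsx) hx)
        (hnil t (hSB t htS)) (hnil _ hbB)
    have h2 : degAd L₀ (σ x * (t * x)) = degAd L₀ (σ x) + degAd L₀ (t * x) :=
      aux_degAd_mul L₀ hchar (hSne _ hsx) (mul_ne_zero (hSne t htS) hx)
        (hnil _ (hSB _ hsx)) (hnil _ htB)
    rw [he, h2] at h1
    simp only [hdegZ]
    omega
  have hWB : ∀ b : A, b ≠ 0 → b ∈ B → degZ b = (degAd L₀ b : ℤ) := by
    intro b hb hbB
    rw [hW b hb 1 hS1 (by rwa [one_mul]), one_mul, aux_degAd_one]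
    simp
  -- multiplicativity
  have hM : ∀ x y : A, x ≠ 0 → y ≠ 0 → degZ (x * y) = degZ x + degZ y := by
    intro x y hx hy
    have hb0 : σ x * x ≠ 0 := mul_ne_zero (hSne _ (hσS x)) hx
    have hc0 : σ y * y ≠ 0 := mul_ne_zero (hSne _ (hσS y)) hy
    have tu := hSunit (σ y) (hσS y)
    have hyc : (↑tu.unit⁻¹ : A) * (σ y * y) = y := by
      rw [← mul_assoc, IsUnit.val_inv_mul, one_mul]
    have hz0 : (σ x * x) * ↑tu.unit⁻¹ ≠ 0 := by
      intro h
      have h2 : ((σ x * x) * ↑tu.unit⁻¹) * σ y = σ x * x := by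
        rw [mul_assoc, IsUnit.val_inv_mul tu, mul_one]
      rw [h, zero_mul] at h2
      exact hb0 h2.symm
    have hpS := hσS ((σ x * x) * ↑tu.unit⁻¹)
    have hpz := hσB ((σ x * x) * ↑tu.unit⁻¹)
    set p := σ ((σ x * x) * ↑tu.unit⁻¹) with hp
    have hkey : (p * σ x) * (x * y) = (p * ((σ x * x) * ↑tu.unit⁻¹)) * (σ y * y) := by
      conv_lhs => rw [← hyc]
      simp only [mul_assoc]
    have hfrac := hW (x*y) (mul_ne_zero hx hy) (p * σ x) (hSmul p hpS (σ x) (hσS x))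
        (by rw [hkey]; exact mul_mem hpz (hσB y))
    have hrel : (p * ((σ x * x) * ↑tu.unit⁻¹)) * σ y = p * (σ x * x) := by
      simp only [mul_assoc, IsUnit.val_inv_mul tu, mul_one]
    have hp0 : p ≠ 0 := hSne _ hpS
    have hpz0 : p * ((σ x * x) * ↑tu.unit⁻¹) ≠ 0 := mul_ne_zero hp0 hz0
    have d1 : degAd L₀ ((p * ((σ x * x) * ↑tu.unit⁻¹)) * (σ y * y))
        = degAd L₀ (p * ((σ x * x) * ↑tu.unit⁻¹)) + degAd L₀ (σ y * y) :=
      aux_degAd_mul L₀ hchar hpz0 hc0 (hnil _ hpz) (hnil _ (hσB y))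
    have d2 : degAd L₀ (p * σ x) = degAd L₀ p + degAd L₀ (σ x) :=
      aux_degAd_mul L₀ hchar hp0 (hSne _ (hσS x)) (hnil _ (hSB _ hpS)) (hnil _ (hSB _ (hσS x)))
    have d3 : degAd L₀ ((p * ((σ x * x) * ↑tu.unit⁻¹)) * σ y)
        = degAd L₀ (p * ((σ x * x) * ↑tu.unit⁻¹)) + degAd L₀ (σ y) :=
      aux_degAd_mul L₀ hchar hpz0 (hSne _ (hσS y)) (hnil _ hpz) (hnil _ (hSB _ (hσS y)))
    have d4 : degAd L₀ (p * (σ x * x)) = degAd L₀ p + degAd L₀ (σ x * x) :=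
      aux_degAd_mul L₀ hchar hp0 hb0 (hnil _ (hSB _ hpS)) (hnil _ (hσB x))
    rw [hrel] at d3
    rw [hkey, d1] at hfrac
    rw [hfrac]
    simp only [hdegZ]
    omega
  -- negation
  have hNeg : ∀ x : A, x ≠ 0 → degZ (-x) = degZ x := by
    intro x hx
    have h1 := hW (-x) (neg_ne_zero.mpr hx) (σ x) (hσS x)
      (by rw [mul_neg]; exact neg_mem (hσB x))
    rw [h1, mul_neg, aux_degAd_neg]
  -- subadditivity on sums
  have hSum : ∀ (m : ℤ) (x y : A), x ≠ 0 → y ≠ 0 → x + y ≠ 0 →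
      degZ x ≤ m → degZ y ≤ m → degZ (x + y) ≤ m := by
    intro m x y hx hy hxy hxm hym
    have hkey : (σ x * σ y) * (x + y) = σ y * (σ x * x) + σ x * (σ y * y) := by
      rw [mul_add]
      congr 1
      · rw [hRcomm (σ x) (hSR (hσS x)) (σ y) (hSR (hσS y)), mul_assoc]
      · rw [mul_assoc]
    have hmem : σ y * (σ x * x) + σ x * (σ y * y) ∈ B :=
      add_mem (mul_mem (hSB _ (hσS y)) (hσB x)) (mul_mem (hSB _ (hσS x)) (hσB y))
    have hfrac := hW (x + y) hxy (σ x * σ y) (hSmul _ (hσS x) _ (hσS y))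
      (by rw [hkey]; exact hmem)
    have hne : σ y * (σ x * x) + σ x * (σ y * y) ≠ 0 := by
      rw [← hkey]
      exact mul_ne_zero (mul_ne_zero (hSne _ (hσS x)) (hSne _ (hσS y))) hxy
    have hle : degAd L₀ (σ y * (σ x * x) + σ x * (σ y * y))
        ≤ max (degAd L₀ (σ y * (σ x * x))) (degAd L₀ (σ x * (σ y * y))) :=
      aux_degAd_add_le L₀ (hnil _ (mul_mem (hSB _ (hσS y)) (hσB x)))
        (hnil _ (mul_mem (hSB _ (hσS x)) (hσB y)))
    have e1 : degAd L₀ (σ y * (σ x * x)) = degAd L₀ (σ y) + degAd L₀ (σ x * x) :=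
      aux_degAd_mul L₀ hchar (hSne _ (hσS y)) (mul_ne_zero (hSne _ (hσS x)) hx)
        (hnil _ (hSB _ (hσS y))) (hnil _ (hσB x))
    have e2 : degAd L₀ (σ x * (σ y * y)) = degAd L₀ (σ x) + degAd L₀ (σ y * y) :=
      aux_degAd_mul L₀ hchar (hSne _ (hσS x)) (mul_ne_zero (hSne _ (hσS y)) hy)
        (hnil _ (hSB _ (hσS x))) (hnil _ (hσB y))
    have e3 : degAd L₀ (σ x * σ y) = degAd L₀ (σ x) + degAd L₀ (σ y) :=
      aux_degAd_mul L₀ hchar (hSne _ (hσS x)) (hSne _ (hσS y))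
        (hnil _ (hSB _ (hσS x))) (hnil _ (hSB _ (hσS y)))
    rw [hkey, e3] at hfrac
    simp only [hdegZ] at hxm hym
    rw [hfrac]
    omega
  -- ad_{L₀} strictly decreases degree
  have hAd0 : ∀ x : A, x ≠ 0 → adOp L₀ L₀ x ≠ 0 →
      degZ (adOp L₀ L₀ x) ≤ degZ x - 1 := by
    intro x hx hax
    have hid : σ x * adOp L₀ L₀ x
        = adOp L₀ L₀ (σ x * x) + -(adOp L₀ L₀ (σ x) * x) := by
      simp only [adOp]; noncomm_ring
    have hsne : σ x ≠ 0 := hSne _ (hσS x)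
    have hb0 : σ x * x ≠ 0 := mul_ne_zero hsne hx
    have hsax : σ x * adOp L₀ L₀ x ≠ 0 := mul_ne_zero hsne hax
    have hadbB : adOp L₀ L₀ (σ x * x) ∈ B := by
      have : adOp L₀ L₀ (σ x * x) = L₀ * (σ x * x) - (σ x * x) * L₀ := rfl
      rw [this]; exact sub_mem (mul_mem hL₀ (hσB x)) (mul_mem (hσB x) hL₀)
    have hadsB : adOp L₀ L₀ (σ x) ∈ B := by
      have : adOp L₀ L₀ (σ x) = L₀ * σ x - σ x * L₀ := rfl
      rw [this]; exact sub_mem (mul_mem hL₀ (hSB _ (hσS x))) (mul_mem (hSB _ (hσS x)) hL₀)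
    have htot : degZ (σ x * adOp L₀ L₀ x) ≤ (degAd L₀ (σ x * x) : ℤ) - 1 := by
      by_cases h1 : adOp L₀ L₀ (σ x * x) = 0
      · by_cases h2 : adOp L₀ L₀ (σ x) * x = 0
        · exfalso; apply hsax; rw [hid, h1, h2, neg_zero, add_zero]
        · have hrw : σ x * adOp L₀ L₀ x = -(adOp L₀ L₀ (σ x) * x) := by
            rw [hid, h1, zero_add]
          have hs2 : adOp L₀ L₀ (σ x) ≠ 0 := fun h => h2 (by rw [h, zero_mul])
          rw [hrw, hNeg _ h2, hM _ _ hs2 hx, hWB _ hs2 hadsB]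
          have hle := aux_degAd_ad_le L₀ hs2 (hnil _ (hSB _ (hσS x)))
          have hdx : degZ x = (degAd L₀ (σ x * x) : ℤ) - (degAd L₀ (σ x) : ℤ) := by
            simp only [hdegZ]
          omega
      · by_cases h2 : adOp L₀ L₀ (σ x) * x = 0
        · have hrw : σ x * adOp L₀ L₀ x = adOp L₀ L₀ (σ x * x) := by
            rw [hid, h2, neg_zero, add_zero]
          rw [hrw, hWB _ h1 hadbB]
          have := aux_degAd_ad_le L₀ h1 (hnil _ (hσB x))
          omega
        · have hs2 : adOp L₀ L₀ (σ x) ≠ 0 := fun h => h2 (by rw [h, zero_mul])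
          have b1 : degZ (adOp L₀ L₀ (σ x * x)) ≤ (degAd L₀ (σ x * x) : ℤ) - 1 := by
            rw [hWB _ h1 hadbB]
            have := aux_degAd_ad_le L₀ h1 (hnil _ (hσB x))
            omega
          have b2 : degZ (-(adOp L₀ L₀ (σ x) * x)) ≤ (degAd L₀ (σ x * x) : ℤ) - 1 := by
            rw [hNeg _ h2, hM _ _ hs2 hx, hWB _ hs2 hadsB]
            have hle := aux_degAd_ad_le L₀ hs2 (hnil _ (hSB _ (hσS x)))
            have hdx : degZ x = (degAd L₀ (σ x * x) : ℤ) - (degAd L₀ (σ x) : ℤ) := by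
              simp only [hdegZ]
            omega
          rw [hid]
          exact hSum _ _ _ h1 (neg_ne_zero.mpr h2) (by rw [← hid]; exact hsax) b1 b2
    have hms : degZ (σ x * adOp L₀ L₀ x) = degZ (σ x) + degZ (adOp L₀ L₀ x) :=
      hM _ _ hsne hax
    have hws : degZ (σ x) = (degAd L₀ (σ x) : ℤ) := hWB _ hsne (hSB _ (hσS x))
    have hdx : degZ x = (degAd L₀ (σ x * x) : ℤ) - (degAd L₀ (σ x) : ℤ) := by
      simp only [hdegZ]
    omega
  -- ad_L strictly decreases degree (condition (2))
  have hCore : ∀ x : A, x ≠ 0 → adOp L L x ≠ 0 →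
      degZ (adOp L L x) ≤ degZ x - 1 := by
    rcases h2 with rfl | ⟨s', hs'S, hcB, hc0, hcdeg⟩
    · exact hAd0
    · intro x hx hax
      have hw0 : L - L₀ ≠ 0 := fun h => hc0 (by rw [h, mul_zero])
      have hdw : degZ (L - L₀) ≤ -1 := by
        rw [hW (L - L₀) hw0 s' hs'S hcB]
        have : (degAd L₀ (s' * (L - L₀)) : ℤ) < (degAd L₀ s' : ℤ) := by
          exact_mod_cast hcdeg
        omega
      have hdecomp : adOp L L x
          = adOp L₀ L₀ x + ((L - L₀) * x + -(x * (L - L₀))) := by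
        simp only [adOp]; noncomm_ring
      have hor : ∀ y z : A, (y = 0 ∨ (y ≠ 0 ∧ degZ y ≤ degZ x - 1)) →
          (z = 0 ∨ (z ≠ 0 ∧ degZ z ≤ degZ x - 1)) →
          (y + z = 0 ∨ (y + z ≠ 0 ∧ degZ (y + z) ≤ degZ x - 1)) := by
        rintro y z (rfl | ⟨hy0, hy⟩) hz
        · rw [zero_add]; exact hz
        · rcases hz with rfl | ⟨hz0, hz⟩
          · right; rw [add_zero]; exact ⟨hy0, hy⟩
          · by_cases hyz : y + z = 0
            · exact Or.inl hyz
            · exact Or.inr ⟨hyz, hSum _ _ _ hy0 hz0 hyz hy hz⟩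
      have hb1 : adOp L₀ L₀ x = 0 ∨
          (adOp L₀ L₀ x ≠ 0 ∧ degZ (adOp L₀ L₀ x) ≤ degZ x - 1) := by
        by_cases h : adOp L₀ L₀ x = 0
        · exact Or.inl h
        · exact Or.inr ⟨h, hAd0 x hx h⟩
      have hb2 : (L - L₀) * x = 0 ∨
          ((L - L₀) * x ≠ 0 ∧ degZ ((L - L₀) * x) ≤ degZ x - 1) := by
        right
        refine ⟨mul_ne_zero hw0 hx, ?_⟩
        rw [hM _ _ hw0 hx]
        omega
      have hb3 : -(x * (L - L₀)) = 0 ∨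
          (-(x * (L - L₀)) ≠ 0 ∧ degZ (-(x * (L - L₀))) ≤ degZ x - 1) := by
        right
        have hne := mul_ne_zero hx hw0
        refine ⟨neg_ne_zero.mpr hne, ?_⟩
        rw [hNeg _ hne, hM _ _ hx hw0]
        omega
      rcases hor _ _ hb1 (hor _ _ hb2 hb3) with h | ⟨_, h⟩
      · exact absurd (hdecomp.trans h) hax
      · rwa [← hdecomp] at h
  -- descent: any element of an ad_L-stable class with s·x·s ∈ B is ad_L-nilpotent
  have hdescent : ∀ (P : A → Prop), (∀ x, P x → P (adOp L L x)) →
      (∀ x, P x → s * x * s ∈ B) → ∀ a, P a → ∃ N, (adOp L L)^[N] a = 0 := by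
    intro P hPad hPB a hPa
    by_contra hcon
    push_neg at hcon
    have hPiter : ∀ N, P ((adOp L L)^[N] a) := by
      intro N
      induction N with
      | zero => exact hPa
      | succ N ih => rw [Function.iterate_succ_apply']; exact hPad _ ih
    have hlow : ∀ N, -(2 * (degAd L₀ s : ℤ)) ≤ degZ ((adOp L L)^[N] a) := by
      intro N
      have hx : (adOp L L)^[N] a ≠ 0 := hcon N
      have hsxs : s * (adOp L L)^[N] a * s ∈ B := hPB _ (hPiter N)
      have h0 : s * (adOp L L)^[N] a * s ≠ 0 :=
        mul_ne_zero (mul_ne_zero hs0 hx) hs0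
      have e1 : degZ (s * (adOp L L)^[N] a * s)
          = degZ (s * (adOp L L)^[N] a) + degZ s :=
        hM _ _ (mul_ne_zero hs0 hx) hs0
      have e2 : degZ (s * (adOp L L)^[N] a) = degZ s + degZ ((adOp L L)^[N] a) :=
        hM _ _ hs0 hx
      have e3 : degZ s = (degAd L₀ s : ℤ) := hWB s hs0 hsB
      have e4 : degZ (s * (adOp L L)^[N] a * s)
          = (degAd L₀ (s * (adOp L L)^[N] a * s) : ℤ) := hWB _ h0 hsxs
      have e5 : (0 : ℤ) ≤ (degAd L₀ (s * (adOp L L)^[N] a * s) : ℤ) :=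
        Int.natCast_nonneg _
      omega
    have hup : ∀ N, degZ ((adOp L L)^[N] a) ≤ degZ a - N := by
      intro N
      induction N with
      | zero => simp
      | succ N ih =>
          have hx : (adOp L L)^[N] a ≠ 0 := hcon N
          have hax : adOp L L ((adOp L L)^[N] a) ≠ 0 := by
            have h := hcon (N + 1)
            rwa [Function.iterate_succ_apply'] at h
          have hstep := hCore _ hx hax
          rw [Function.iterate_succ_apply']
          push_cast
          omega
    have h1 := hlow (2 * degAd L₀ s + (degZ a).toNat + 1)
    have h2 := hup (2 * degAd L₀ s + (degZ a).toNat + 1)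
    have h3 := Int.self_le_toNat (degZ a)
    push_cast at h2
    omega
  -- ------------------------------------------------------------------
  -- Assembly
  -- ------------------------------------------------------------------
  have hDtoN : ∀ a : A, (∀ u ∈ U, a • u ∈ U) → ∃ N, (adOp L L)^[N] a = 0 := by
    intro a ha
    refine hdescent (fun x => ∀ u ∈ U, x • u ∈ U) ?_ ?_ a ha
    · intro x hx u hu
      have e : adOp L L x • u = L • (x • u) - x • (L • u) := by
        simp only [adOp, sub_smul, mul_smul]
      rw [e]
      exact hUsub _ (hLU _ (hx u hu)) _ (hx _ (hLU u hu))
    · intro x hx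
      refine (hB _).mpr fun u hu => ?_
      rw [mul_smul, mul_smul]
      exact hsUU₀ _ (hx _ (hsU₀U u hu))
  have hEtoN : ∀ a : A,
      (∀ b : A, (∀ u ∈ U₀, b • u ∈ U) → ∀ u ∈ U₀, (a * b) • u ∈ U) →
      ∃ N, (adOp L L)^[N] a = 0 := by
    intro a ha
    refine hdescent
      (fun x => ∀ b : A, (∀ u ∈ U₀, b • u ∈ U) → ∀ u ∈ U₀, (x * b) • u ∈ U)
      ?_ ?_ a ha
    · intro x hx b hb u hu
      have hLb : ∀ u ∈ U₀, (L * b) • u ∈ U := fun u hu => by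
        rw [mul_smul]; exact hLU _ (hb u hu)
      have e : (adOp L L x * b) • u = (L * (x * b)) • u - (x * (L * b)) • u := by
        have : adOp L L x * b = L * (x * b) - x * (L * b) := by
          simp only [adOp]; noncomm_ring
        rw [this, sub_smul]
      rw [e]
      refine hUsub _ ?_ _ (hx (L * b) hLb u hu)
      rw [mul_smul]
      exact hLU _ (hx b hb u hu)
    · intro x hx
      refine (hB _).mpr fun u hu => ?_
      have h1 : (x * s) • u ∈ U := hx s (fun v hv => hsU₀U v hv) u hu
      rw [show s * x * s = s * (x * s) by rw [mul_assoc], mul_smul]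
      exact hsUU₀ _ h1
  constructor
  · ext a
    simp only [Set.mem_setOf_eq]
    exact ⟨hDtoN a, fun ⟨N, hN⟩ => partI N a hN⟩
  · ext a
    simp only [Set.mem_setOf_eq]
    constructor
    · intro ha b hb u hu
      rw [mul_smul]
      exact ha _ (hb u hu)
    · intro ha u hu
      obtain ⟨N, hN⟩ := hEtoN a ha
      exact partI N a hN u hu
end
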